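/- arXiv:math/0505353 — 5 statements merged into one kernel-verified Lean document; each statement's English description precedes it below -/
import Mathlib

section
/- Fact I (Robust Forward Completeness estimate). Suppose system (1.1) satisfies hypothesis (H1). Then there exist functions μ ∈ K⁺ and a ∈ K∞ such that for every disturbance sequence d : ℕ → D, every initial time t₀ ∈ ℕ and every initial state x₀ ∈ X, the unique solution x(·) of (1.1) with x(t₀) = x₀ satisfies ‖x(t)‖_X ≤ μ(t) · a(‖x₀‖_X) for all t ≥ t₀. -/
open Filter Topology Bornology Set

noncomputable section

/-- Class `K∞`: continuous, strictly increasing on `[0,∞)`, zero at zero, unbounded. -/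
def IsKInf (a : ℝ → ℝ) : Prop :=
  ContinuousOn a (Set.Ici 0) ∧ StrictMonoOn a (Set.Ici 0) ∧ a 0 = 0 ∧
    Filter.Tendsto a Filter.atTop Filter.atTop

/-- Class `K⁺`: continuous and positive on `[0,∞)`. -/
def IsKPlus (b : ℝ → ℝ) : Prop :=
  ContinuousOn b (Set.Ici 0) ∧ ∀ t : ℝ, 0 ≤ t → 0 < b t

/-- Class `KL`. -/
def IsKL (σ : ℝ → ℝ → ℝ) : Prop :=
  ContinuousOn (fun p : ℝ × ℝ => σ p.1 p.2) (Set.Ici 0 ×ˢ Set.Ici 0) ∧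
  (∀ t : ℝ, 0 ≤ t → StrictMonoOn (fun s => σ s t) (Set.Ici 0) ∧ σ 0 t = 0) ∧
  (∀ s : ℝ, 0 ≤ s → AntitoneOn (fun t => σ s t) (Set.Ici 0) ∧
    Filter.Tendsto (fun t => σ s t) Filter.atTop (nhds 0))

namespace FactI

/-! ### A continuous "staircase" sum -/

def clamp (u : ℝ) : ℝ := min (max u 0) 1

lemma clamp_nonneg (u : ℝ) : 0 ≤ clamp u := le_min (le_max_right _ _) one_pos.le
lemma clamp_le_one (u : ℝ) : clamp u ≤ 1 := min_le_right _ _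
lemma clamp_mono : Monotone clamp := fun _ _ h => min_le_min (max_le_max h le_rfl) le_rfl
lemma continuous_clamp : Continuous clamp :=
  (continuous_id.max continuous_const).min continuous_const
lemma clamp_of_nonpos {u : ℝ} (h : u ≤ 0) : clamp u = 0 := by
  simp [clamp, max_eq_right h]
lemma clamp_of_one_le {u : ℝ} (h : 1 ≤ u) : clamp u = 1 := by
  have : max u 0 = u := max_eq_left (le_trans one_pos.le h)
  simp [clamp, this, min_eq_right h]

def cSum (c : ℕ → ℝ) (s : ℝ) : ℝ := ∑' n, c n * clamp (s - n)

lemma cSum_term_zero (c : ℕ → ℝ) {s : ℝ} {n : ℕ} (h : s ≤ n) : c n * clamp (s - n) = 0 := by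
  rw [clamp_of_nonpos (by linarith), mul_zero]

lemma cSum_summable (c : ℕ → ℝ) (s : ℝ) : Summable (fun n => c n * clamp (s - n)) := by
  apply summable_of_ne_finset_zero (s := Finset.range (⌈max s 0⌉₊ + 1))
  intro n hn
  simp only [Finset.mem_range, not_lt] at hn
  apply cSum_term_zero
  calc s ≤ max s 0 := le_max_left _ _
    _ ≤ (⌈max s 0⌉₊ : ℝ) := Nat.le_ceil _
    _ ≤ n := by exact_mod_cast le_trans (Nat.le_succ _) hn

lemma cSum_eq_sum (c : ℕ → ℝ) {s : ℝ} {K : ℕ} (h : s ≤ K) :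
    cSum c s = ∑ n ∈ Finset.range K, c n * clamp (s - n) := by
  apply tsum_eq_sum
  intro n hn
  simp only [Finset.mem_range, not_lt] at hn
  exact cSum_term_zero c (le_trans h (by exact_mod_cast hn))

lemma continuous_cSum (c : ℕ → ℝ) : Continuous (cSum c) := by
  rw [continuous_iff_continuousAt]
  intro x
  set K : ℕ := ⌈max x 0⌉₊ + 1 with hK
  have hxK : x < K := by
    calc x ≤ max x 0 := le_max_left _ _
      _ ≤ (⌈max x 0⌉₊ : ℝ) := Nat.le_ceil _
      _ < K := by exact_mod_cast Nat.lt_succ_self _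
  have hcont : ContinuousAt (fun s => ∑ n ∈ Finset.range K, c n * clamp (s - n)) x := by
    apply Continuous.continuousAt
    exact continuous_finset_sum _ fun n _ =>
      continuous_const.mul (continuous_clamp.comp (by continuity))
  apply hcont.congr
  filter_upwards [eventually_lt_nhds hxK] with s hs
  exact (cSum_eq_sum c hs.le).symm

lemma cSum_nonneg {c : ℕ → ℝ} (hc : ∀ n, 0 ≤ c n) (s : ℝ) : 0 ≤ cSum c s :=
  tsum_nonneg fun n => mul_nonneg (hc n) (clamp_nonneg _)

lemma cSum_mono {c : ℕ → ℝ} (hc : ∀ n, 0 ≤ c n) : Monotone (cSum c) := by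
  intro x y h
  exact Summable.tsum_le_tsum (fun n => mul_le_mul_of_nonneg_left (clamp_mono (by linarith)) (hc n))
    (cSum_summable c x) (cSum_summable c y)

lemma sum_le_cSum {c : ℕ → ℝ} (hc : ∀ n, 0 ≤ c n) (m : ℕ) {s : ℝ} (hs : (m : ℝ) ≤ s) :
    ∑ n ∈ Finset.range m, c n ≤ cSum c s := by
  have : ∑ n ∈ Finset.range m, c n = ∑ n ∈ Finset.range m, c n * clamp (s - n) := by
    apply Finset.sum_congr rfl
    intro n hn
    simp only [Finset.mem_range] at hn
    rw [clamp_of_one_le, mul_one]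
    have : (n : ℝ) + 1 ≤ m := by exact_mod_cast hn
    linarith
  rw [this]
  exact Summable.sum_le_tsum _ (fun n _ => mul_nonneg (hc n) (clamp_nonneg _)) (cSum_summable c s)

lemma cSum_zero (c : ℕ → ℝ) : cSum c 0 = 0 := by
  rw [cSum_eq_sum c (K := 0) (by norm_num)]
  simp

/-! ### The iterated bound `P` -/

def P (a₀ β : ℝ → ℝ) : ℕ → ℝ → ℝ
  | 0, s => max s 0
  | (t+1), s => max (P a₀ β t s) (a₀ (β t * P a₀ β t s))

variable {a₀ β : ℝ → ℝ}

lemma P_succ (t : ℕ) (s : ℝ) :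
    P a₀ β (t+1) s = max (P a₀ β t s) (a₀ (β t * P a₀ β t s)) := rfl

lemma P_nonneg (t : ℕ) (s : ℝ) : 0 ≤ P a₀ β t s := by
  induction t with
  | zero => exact le_max_right _ _
  | succ t ih => exact le_trans ih (le_max_left _ _)

lemma P_mono_t (s : ℝ) : Monotone (fun t => P a₀ β t s) :=
  monotone_nat_of_le_succ fun _ => le_max_left _ _

lemma le_P (t : ℕ) (s : ℝ) : s ≤ P a₀ β t s :=
  le_trans (le_max_left _ _) (P_mono_t s (Nat.zero_le t))

lemma P_mono_s (ha : IsKInf a₀) (hβ : IsKPlus β) (t : ℕ) : Monotone (P a₀ β t) := by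
  induction t with
  | zero => exact fun x y h => max_le_max h le_rfl
  | succ t ih =>
    intro x y h
    apply max_le_max (ih h)
    have hb : 0 ≤ β t := (hβ.2 t (by positivity)).le
    exact ha.2.1.monotoneOn (mem_Ici.2 (mul_nonneg hb (P_nonneg t x)))
      (mem_Ici.2 (mul_nonneg hb (P_nonneg t y)))
      (mul_le_mul_of_nonneg_left (ih h) hb)

lemma P_zero_eval (ha : IsKInf a₀) (t : ℕ) : P a₀ β t 0 = 0 := by
  induction t with
  | zero => simp [P]
  | succ t ih => simp [P, ih, ha.2.2.1]

lemma P_cont (ha : IsKInf a₀) (hβ : IsKPlus β) (t : ℕ) : Continuous (P a₀ β t) := by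
  induction t with
  | zero => exact continuous_id.max continuous_const
  | succ t ih =>
    apply ih.max
    apply ha.1.comp_continuous (continuous_const.mul ih)
    intro x
    exact mem_Ici.2 (mul_nonneg (hβ.2 t (by positivity)).le (P_nonneg t x))

/-- diagonal values of `P` -/
def q (a₀ β : ℝ → ℝ) (n : ℕ) : ℝ := P a₀ β n n

lemma q_nonneg (n : ℕ) : 0 ≤ q a₀ β n := P_nonneg n n

lemma q_mono (ha : IsKInf a₀) (hβ : IsKPlus β) : Monotone (q a₀ β) := by
  intro m n h
  calc P a₀ β m m ≤ P a₀ β n m := P_mono_t _ h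
    _ ≤ P a₀ β n n := P_mono_s ha hβ n (by exact_mod_cast h)

lemma P_le_q (ha : IsKInf a₀) (hβ : IsKPlus β) (t : ℕ) (s : ℝ) :
    P a₀ β t s ≤ q a₀ β (max t ⌈s⌉₊) := by
  calc P a₀ β t s ≤ P a₀ β (max t ⌈s⌉₊) s := P_mono_t _ (le_max_left _ _)
    _ ≤ P a₀ β (max t ⌈s⌉₊) (max t ⌈s⌉₊ : ℕ) := by
        apply P_mono_s ha hβ
        calc s ≤ (⌈s⌉₊ : ℝ) := Nat.le_ceil _
          _ ≤ ((max t ⌈s⌉₊ : ℕ) : ℝ) := by exact_mod_cast le_max_right _ _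

/-! ### The small-argument series `S` -/

def S (a₀ β : ℝ → ℝ) (s : ℝ) : ℝ := ∑' n, (1/2 : ℝ)^n * min (P a₀ β n s) 1

lemma S_term_nonneg (n : ℕ) (s : ℝ) : 0 ≤ (1/2 : ℝ)^n * min (P a₀ β n s) 1 :=
  mul_nonneg (by positivity) (le_min (P_nonneg n s) one_pos.le)

lemma S_summable (s : ℝ) : Summable (fun n => (1/2 : ℝ)^n * min (P a₀ β n s) 1) := by
  apply Summable.of_nonneg_of_le (fun n => S_term_nonneg n s)
    (fun n => ?_)
    (summable_geometric_of_lt_one (by norm_num) (by norm_num) : Summable fun n : ℕ => (1/2:ℝ)^n)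
  nlinarith [min_le_right (P a₀ β n s) 1, pow_nonneg (by norm_num : (0:ℝ) ≤ 1/2) n,
    le_min (P_nonneg (a₀ := a₀) (β := β) n s) one_pos.le]

lemma S_nonneg (s : ℝ) : 0 ≤ S a₀ β s := tsum_nonneg fun n => S_term_nonneg n s

lemma S_mono (ha : IsKInf a₀) (hβ : IsKPlus β) : Monotone (S a₀ β) := by
  intro x y h
  exact Summable.tsum_le_tsum
    (fun n => mul_le_mul_of_nonneg_left
      (min_le_min (P_mono_s ha hβ n h) le_rfl) (by positivity))
    (S_summable x) (S_summable y)

lemma term_le_S (t : ℕ) (s : ℝ) : (1/2 : ℝ)^t * min (P a₀ β t s) 1 ≤ S a₀ β s :=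
  Summable.le_tsum (S_summable s) t fun n _ => S_term_nonneg n s

lemma S_cont (ha : IsKInf a₀) (hβ : IsKPlus β) : Continuous (S a₀ β) := by
  apply continuous_tsum
    (fun n => continuous_const.mul ((P_cont ha hβ n).min continuous_const))
    (summable_geometric_of_lt_one (by norm_num) (by norm_num) : Summable fun n : ℕ => (1/2:ℝ)^n)
  intro n x
  rw [Real.norm_eq_abs]; simp only [Pi.mul_apply]; rw [abs_of_nonneg (S_term_nonneg n x)]
  nlinarith [min_le_right (P a₀ β n x) 1, pow_nonneg (by norm_num : (0:ℝ) ≤ 1/2) n,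
    le_min (P_nonneg (a₀ := a₀) (β := β) n x) one_pos.le]

lemma S_zero (ha : IsKInf a₀) : S a₀ β 0 = 0 := by
  have : ∀ n : ℕ, (1/2 : ℝ)^n * min (P a₀ β n 0) 1 = 0 := by
    intro n; rw [P_zero_eval ha]; norm_num
  simp only [S, this, tsum_zero]

/-! ### The factorization functions -/

def hFun (a₀ β : ℝ → ℝ) : ℝ → ℝ := cSum (fun n => q a₀ β (n+2) - q a₀ β (n+1))

def vSeq (a₀ β : ℝ → ℝ) (t : ℕ) : ℝ :=
  2^t * (P a₀ β t 1 + 1) + q a₀ β t + q a₀ β 1 + 1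

def muF (a₀ β : ℝ → ℝ) (r : ℝ) : ℝ :=
  vSeq a₀ β 0 + cSum (fun n => vSeq a₀ β (n+1) - vSeq a₀ β n) r

def aHat (a₀ β : ℝ → ℝ) (s : ℝ) : ℝ := max s 0 + hFun a₀ β s + S a₀ β s

lemma hFun_coeff_nonneg (ha : IsKInf a₀) (hβ : IsKPlus β) (n : ℕ) :
    0 ≤ q a₀ β (n+2) - q a₀ β (n+1) :=
  sub_nonneg.2 (q_mono ha hβ (by omega))

lemma hFun_nonneg (ha : IsKInf a₀) (hβ : IsKPlus β) (s : ℝ) : 0 ≤ hFun a₀ β s :=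
  cSum_nonneg (hFun_coeff_nonneg ha hβ) s

lemma q_le_hFun (ha : IsKInf a₀) (hβ : IsKPlus β) {s : ℝ} (hs : 0 ≤ s) :
    q a₀ β ⌈s⌉₊ ≤ hFun a₀ β s + q a₀ β 1 := by
  have h1 : q a₀ β ⌈s⌉₊ ≤ q a₀ β (⌊s⌋₊ + 1) := q_mono ha hβ (Nat.ceil_le_floor_add_one s)
  have h2 : ∑ n ∈ Finset.range ⌊s⌋₊, (q a₀ β (n+2) - q a₀ β (n+1))
      ≤ hFun a₀ β s := sum_le_cSum (hFun_coeff_nonneg ha hβ) ⌊s⌋₊ (Nat.floor_le hs)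
  have h3 : ∑ n ∈ Finset.range ⌊s⌋₊, (q a₀ β (n+2) - q a₀ β (n+1))
      = q a₀ β (⌊s⌋₊ + 1) - q a₀ β 1 := by
    have := Finset.sum_range_sub (fun n => q a₀ β (n+1)) ⌊s⌋₊
    simpa using this
  rw [h3] at h2
  linarith

lemma vSeq_mono (ha : IsKInf a₀) (hβ : IsKPlus β) : Monotone (vSeq a₀ β) := by
  intro m n h
  have h1 : (2:ℝ)^m ≤ 2^n := pow_le_pow_right₀ one_le_two h
  have h2 : P a₀ β m 1 ≤ P a₀ β n 1 := P_mono_t 1 h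
  have h3 : q a₀ β m ≤ q a₀ β n := q_mono ha hβ h
  have h4 : (0:ℝ) ≤ P a₀ β m 1 := P_nonneg m 1
  have h5 : (0:ℝ) < 2^m := by positivity
  unfold vSeq
  nlinarith

lemma one_le_vSeq (t : ℕ) : 1 ≤ vSeq a₀ β t := by
  have h4 : (0:ℝ) ≤ P a₀ β t 1 := P_nonneg t 1
  have h5 : (0:ℝ) < 2^t := by positivity
  have := q_nonneg (a₀ := a₀) (β := β) t
  have := q_nonneg (a₀ := a₀) (β := β) 1
  unfold vSeq
  nlinarith

lemma vSeq_le_muF (ha : IsKInf a₀) (hβ : IsKPlus β) (t : ℕ) :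
    vSeq a₀ β t ≤ muF a₀ β t := by
  have hc : ∀ n, 0 ≤ vSeq a₀ β (n+1) - vSeq a₀ β n :=
    fun n => sub_nonneg.2 (vSeq_mono ha hβ (Nat.le_succ n))
  have h2 : ∑ n ∈ Finset.range t, (vSeq a₀ β (n+1) - vSeq a₀ β n)
      ≤ cSum (fun n => vSeq a₀ β (n+1) - vSeq a₀ β n) t := sum_le_cSum hc t le_rfl
  have h3 : ∑ n ∈ Finset.range t, (vSeq a₀ β (n+1) - vSeq a₀ β n)
      = vSeq a₀ β t - vSeq a₀ β 0 := Finset.sum_range_sub (vSeq a₀ β) t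
  rw [h3] at h2
  unfold muF
  linarith

lemma muF_pos (ha : IsKInf a₀) (hβ : IsKPlus β) (r : ℝ) : 0 < muF a₀ β r := by
  have h1 : (1:ℝ) ≤ vSeq a₀ β 0 := one_le_vSeq 0
  have h2 : 0 ≤ cSum (fun n => vSeq a₀ β (n+1) - vSeq a₀ β n) r :=
    cSum_nonneg (fun n => sub_nonneg.2 (vSeq_mono ha hβ (Nat.le_succ n))) r
  unfold muF
  linarith

lemma aHat_nonneg (ha : IsKInf a₀) (hβ : IsKPlus β) (s : ℝ) : 0 ≤ aHat a₀ β s := by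
  have := hFun_nonneg ha hβ s
  have := S_nonneg (a₀ := a₀) (β := β) s
  have : (0:ℝ) ≤ max s 0 := le_max_right _ _
  unfold aHat
  have := hFun_nonneg ha hβ s
  have := S_nonneg (a₀ := a₀) (β := β) s
  linarith [le_max_right s 0]

lemma le_aHat (ha : IsKInf a₀) (hβ : IsKPlus β) (s : ℝ) : s ≤ aHat a₀ β s := by
  unfold aHat
  have := hFun_nonneg ha hβ s
  have := S_nonneg (a₀ := a₀) (β := β) s
  linarith [le_max_left s 0]

lemma aHat_KInf (ha : IsKInf a₀) (hβ : IsKPlus β) : IsKInf (aHat a₀ β) := by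
  refine ⟨?_, ?_, ?_, ?_⟩
  · exact (((continuous_id.max continuous_const).add (continuous_cSum _)).add
      (S_cont ha hβ)).continuousOn
  · intro x hx y hy hxy
    have hx0 : max x 0 = x := max_eq_left hx
    have hy0 : max y 0 = y := max_eq_left hy
    unfold aHat
    rw [hx0, hy0]
    have h1 : hFun a₀ β x ≤ hFun a₀ β y := cSum_mono (hFun_coeff_nonneg ha hβ) hxy.le
    have h2 : S a₀ β x ≤ S a₀ β y := S_mono ha hβ hxy.le
    linarith
  · unfold aHat hFun
    rw [cSum_zero, S_zero ha]
    norm_num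
  · exact tendsto_atTop_mono (le_aHat ha hβ) tendsto_id

/-! ### The central separation inequality -/

lemma central (ha : IsKInf a₀) (hβ : IsKPlus β) (t : ℕ) {s : ℝ} (hs : 0 ≤ s) :
    P a₀ β t s ≤ vSeq a₀ β t * aHat a₀ β s := by
  have hA0 : 0 ≤ aHat a₀ β s := aHat_nonneg ha hβ s
  have hP1 : (0:ℝ) ≤ P a₀ β t 1 := P_nonneg t 1
  have hpow : (0:ℝ) < 2^t := by positivity
  have hqt : 0 ≤ q a₀ β t := q_nonneg t
  have hq1 : 0 ≤ q a₀ β 1 := q_nonneg 1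
  rcases le_or_gt s 1 with h1 | h1
  · -- small argument : use the series S
    have hS_le : S a₀ β s ≤ aHat a₀ β s := by
      unfold aHat
      have := hFun_nonneg ha hβ s
      linarith [le_max_right s 0]
    have key : P a₀ β t s ≤ 2^t * (P a₀ β t 1 + 1) * aHat a₀ β s := by
      have e : (2:ℝ)^t * (1/2)^t = 1 := by
        rw [← mul_pow]; norm_num
      rcases le_or_gt (P a₀ β t s) 1 with h2 | h2
      · have f1 : (1/2 : ℝ)^t * P a₀ β t s ≤ S a₀ β s := by
          have := term_le_S (a₀ := a₀) (β := β) t s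
          rwa [min_eq_left h2] at this
        have g1 : 2^t * ((1/2:ℝ)^t * P a₀ β t s) ≤ 2^t * S a₀ β s :=
          mul_le_mul_of_nonneg_left f1 hpow.le
        have g2 : 2^t * ((1/2:ℝ)^t * P a₀ β t s) = P a₀ β t s := by
          rw [← mul_assoc, e, one_mul]
        rw [g2] at g1
        have g3 : 2^t * S a₀ β s ≤ 2^t * aHat a₀ β s :=
          mul_le_mul_of_nonneg_left hS_le hpow.le
        nlinarith [mul_nonneg (mul_nonneg hpow.le hP1) hA0]
      · have f1 : (1/2 : ℝ)^t ≤ S a₀ β s := by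
          have := term_le_S (a₀ := a₀) (β := β) t s
          rwa [min_eq_right h2.le, mul_one] at this
        have g1 : 1 ≤ 2^t * S a₀ β s := by
          calc (1:ℝ) = 2^t * (1/2)^t := e.symm
            _ ≤ 2^t * S a₀ β s := mul_le_mul_of_nonneg_left f1 hpow.le
        have hm : P a₀ β t s ≤ P a₀ β t 1 := P_mono_s ha hβ t h1
        have g3 : 1 ≤ 2^t * aHat a₀ β s :=
          le_trans g1 (mul_le_mul_of_nonneg_left hS_le hpow.le)
        nlinarith [mul_le_mul_of_nonneg_left g3 hP1]
    calc P a₀ β t s ≤ 2^t * (P a₀ β t 1 + 1) * aHat a₀ β s := key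
      _ ≤ vSeq a₀ β t * aHat a₀ β s := by
          unfold vSeq; nlinarith
  · -- large argument : use the staircase hFun
    have k0 : P a₀ β t s ≤ q a₀ β (max t ⌈s⌉₊) := P_le_q ha hβ t s
    have k1 : q a₀ β (max t ⌈s⌉₊) ≤ q a₀ β t + q a₀ β ⌈s⌉₊ := by
      rcases max_cases t ⌈s⌉₊ with ⟨h, _⟩ | ⟨h, _⟩ <;> rw [h] <;>
        linarith [q_nonneg (a₀ := a₀) (β := β) t, q_nonneg (a₀ := a₀) (β := β) ⌈s⌉₊]
    have k2 : q a₀ β ⌈s⌉₊ ≤ hFun a₀ β s + q a₀ β 1 := q_le_hFun ha hβ hs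
    have hH : 0 ≤ hFun a₀ β s := hFun_nonneg ha hβ s
    have hB : 1 + hFun a₀ β s ≤ aHat a₀ β s := by
      unfold aHat
      have := S_nonneg (a₀ := a₀) (β := β) s
      have : s ≤ max s 0 := le_max_left s 0
      have := S_nonneg (a₀ := a₀) (β := β) s
      linarith [le_max_left s 0]
    have hv : q a₀ β t + q a₀ β 1 + 1 ≤ vSeq a₀ β t := by
      unfold vSeq; nlinarith
    have hmul : (q a₀ β t + q a₀ β 1 + 1) * (1 + hFun a₀ β s) ≤ vSeq a₀ β t * aHat a₀ β s :=
      mul_le_mul hv hB (by linarith) (by linarith [one_le_vSeq (a₀ := a₀) (β := β) t])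
    nlinarith

end FactI

/-- Fact I: robust forward completeness estimate for system (1.1) under hypothesis (H1). -/
theorem fact_I {X D : Type*} [NormedAddCommGroup X] [NormedSpace ℝ X] [Nonempty D]
    (f : ℕ → D → X → X)
    (hf0 : ∀ (t : ℕ) (d : D), f t d 0 = 0)
    (hH1 : ∃ a β : ℝ → ℝ, IsKInf a ∧ IsKPlus β ∧
      ∀ (t : ℕ) (d : D) (x : X), ‖f t d x‖ ≤ a (β t * ‖x‖)) :
    ∃ μ a : ℝ → ℝ, IsKPlus μ ∧ IsKInf a ∧
      ∀ (d : ℕ → D) (t₀ : ℕ) (x₀ : X) (x : ℕ → X),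
        x t₀ = x₀ → (∀ t, t₀ ≤ t → x (t + 1) = f t (d t) (x t)) →
        ∀ t, t₀ ≤ t → ‖x t‖ ≤ μ t * a ‖x₀‖ := by
  obtain ⟨a₀, β, ha, hβ, hbound⟩ := hH1
  refine ⟨FactI.muF a₀ β, FactI.aHat a₀ β,
    ⟨(continuous_const.add (FactI.continuous_cSum _)).continuousOn,
      fun r _ => FactI.muF_pos ha hβ r⟩,
    FactI.aHat_KInf ha hβ, ?_⟩
  intro d t₀ x₀ x hx0 hrec t ht
  have traj : ∀ t, t₀ ≤ t → ‖x t‖ ≤ FactI.P a₀ β t ‖x₀‖ := by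
    intro t ht
    induction t, ht using Nat.le_induction with
    | base => rw [hx0]; exact FactI.le_P t₀ ‖x₀‖
    | succ t ht ih =>
      rw [hrec t ht]
      have hb : 0 ≤ β t := (hβ.2 t (by positivity)).le
      calc ‖f t (d t) (x t)‖ ≤ a₀ (β t * ‖x t‖) := hbound t (d t) (x t)
        _ ≤ a₀ (β t * FactI.P a₀ β t ‖x₀‖) := by
            apply ha.2.1.monotoneOn
              (mem_Ici.2 (mul_nonneg hb (norm_nonneg _)))
              (mem_Ici.2 (mul_nonneg hb (FactI.P_nonneg t ‖x₀‖)))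
            exact mul_le_mul_of_nonneg_left ih hb
        _ ≤ FactI.P a₀ β (t+1) ‖x₀‖ := by rw [FactI.P_succ]; exact le_max_right _ _
  calc ‖x t‖ ≤ FactI.P a₀ β t ‖x₀‖ := traj t ht
    _ ≤ FactI.vSeq a₀ β t * FactI.aHat a₀ β ‖x₀‖ := FactI.central ha hβ t (norm_nonneg x₀)
    _ ≤ FactI.muF a₀ β t * FactI.aHat a₀ β ‖x₀‖ :=
        mul_le_mul_of_nonneg_right (FactI.vSeq_le_muF ha hβ t) (FactI.aHat_nonneg ha hβ _)
end
end

section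
/- (H3) implies (H1). Suppose f : ℕ × D × X → X satisfies hypothesis (H3). Then there exist functions ζ ∈ K∞ and β ∈ K⁺ such that ‖f(t,d,x)‖_X ≤ ζ(β(t)‖x‖_X) for all (t,x,d) ∈ ℕ × X × D, i.e. hypothesis (H1) holds. -/
open Filter Topology Bornology Set

noncomputable section

namespace H3H1aux

/-- Basic building block: a "ramp" that rises from 0 (at `s = n`) to `a n` (at `s = n+1`). -/
def term (a : ℕ → ℝ) (s : ℝ) (n : ℕ) : ℝ := a n * min 1 (max 0 (s - n))

lemma term_nonneg {a : ℕ → ℝ} (ha : ∀ n, 0 ≤ a n) (s : ℝ) (n : ℕ) : 0 ≤ term a s n :=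
  mul_nonneg (ha n) (le_min zero_le_one (le_max_left _ _))

lemma term_eq_zero {a : ℕ → ℝ} {s : ℝ} {n : ℕ} (h : s ≤ n) : term a s n = 0 := by
  have h1 : max 0 (s - (n:ℝ)) = 0 := max_eq_left (by linarith)
  simp [term, h1]

lemma term_mono {a : ℕ → ℝ} (ha : ∀ n, 0 ≤ a n) {s₁ s₂ : ℝ} (h : s₁ ≤ s₂) (n : ℕ) :
    term a s₁ n ≤ term a s₂ n := by
  apply mul_le_mul_of_nonneg_left _ (ha n)
  exact min_le_min le_rfl (max_le_max le_rfl (by linarith))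

lemma term_eq_self {a : ℕ → ℝ} {s : ℝ} {n : ℕ} (h : (n:ℝ) + 1 ≤ s) : term a s n = a n := by
  have h1 : max 0 (s - (n:ℝ)) = s - n := max_eq_right (by linarith)
  have h2 : min 1 (s - (n:ℝ)) = 1 := min_eq_left (by linarith)
  simp [term, h1, h2]

lemma summable_term (a : ℕ → ℝ) (s : ℝ) : Summable (term a s) := by
  apply summable_of_ne_finset_zero (s := Finset.range (⌈max s 0⌉₊ + 1))
  intro n hn
  apply term_eq_zero
  have hN : ⌈max s 0⌉₊ + 1 ≤ n := by rw [Finset.mem_range, not_lt] at hn; exact hn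
  calc s ≤ max s 0 := le_max_left _ _
    _ ≤ (⌈max s 0⌉₊ : ℝ) := Nat.le_ceil _
    _ ≤ n := by exact_mod_cast Nat.le_of_succ_le hN

/-- The locally-finite ramp sum. -/
def F (a : ℕ → ℝ) (s : ℝ) : ℝ := ∑' n, term a s n

lemma F_nonneg {a : ℕ → ℝ} (ha : ∀ n, 0 ≤ a n) (s : ℝ) : 0 ≤ F a s :=
  tsum_nonneg (term_nonneg ha s)

lemma F_mono {a : ℕ → ℝ} (ha : ∀ n, 0 ≤ a n) : Monotone (F a) := fun s₁ s₂ h =>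
  Summable.tsum_le_tsum (term_mono ha h) (summable_term a s₁) (summable_term a s₂)

lemma F_zero (a : ℕ → ℝ) : F a 0 = 0 := by
  have : ∀ n : ℕ, term a 0 n = 0 := fun n => term_eq_zero (by positivity)
  simp [F, this]

lemma le_F {a : ℕ → ℝ} (ha : ∀ n, 0 ≤ a n) {n : ℕ} {s : ℝ} (hs : (n:ℝ) + 1 ≤ s) :
    a n ≤ F a s := by
  have := Summable.le_tsum (summable_term a s) n (fun j _ => term_nonneg ha s j)
  rwa [term_eq_self hs] at this

lemma F_cont (a : ℕ → ℝ) : Continuous (F a) := by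
  rw [continuous_iff_continuousAt]
  intro s₀
  set N : ℕ := ⌈max s₀ 0⌉₊ + 1 with hN
  have hs₀ : s₀ < (N : ℝ) := by
    calc s₀ ≤ max s₀ 0 := le_max_left _ _
      _ ≤ (⌈max s₀ 0⌉₊ : ℝ) := Nat.le_ceil _
      _ < N := by exact_mod_cast Nat.lt_succ_self _
  have hEq : ∀ s ∈ Iio (N : ℝ), F a s = ∑ n ∈ Finset.range N, term a s n := by
    intro s hs
    apply tsum_eq_sum
    intro n hn
    apply term_eq_zero
    have : N ≤ n := by simpa [Finset.mem_range, not_lt] using hn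
    have : (N : ℝ) ≤ n := by exact_mod_cast this
    exact le_trans (le_of_lt hs) this
  have hcont : ContinuousAt (fun s => ∑ n ∈ Finset.range N, term a s n) s₀ := by
    apply Continuous.continuousAt
    apply continuous_finset_sum
    intro n _
    exact continuous_const.mul (continuous_const.min (continuous_const.max
      ((continuous_id.sub continuous_const))))
  apply hcont.congr
  filter_upwards [isOpen_Iio.mem_nhds hs₀] with s hs
  exact (hEq s hs).symm




/-- small-scale dominating function -/
def Phi (δ : ℕ → ℝ) (s : ℝ) : ℝ := ∑' k, (1/2:ℝ)^k * min 1 (max 0 s / δ (k+1))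

lemma phiterm_nonneg {δ : ℕ → ℝ} (hδ : ∀ k, 0 < δ k) (s : ℝ) (k : ℕ) :
    0 ≤ (1/2:ℝ)^k * min 1 (max 0 s / δ (k+1)) :=
  mul_nonneg (by positivity) (le_min zero_le_one (div_nonneg (le_max_left _ _) (hδ (k+1)).le))

lemma phiterm_le {δ : ℕ → ℝ} (hδ : ∀ k, 0 < δ k) (s : ℝ) (k : ℕ) :
    (1/2:ℝ)^k * min 1 (max 0 s / δ (k+1)) ≤ (1/2:ℝ)^k := by
  nlinarith [min_le_left (1:ℝ) (max 0 s / δ (k+1)), pow_pos (by norm_num : (0:ℝ) < 1/2) k,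
    phiterm_nonneg hδ s k]

lemma summable_phiterm {δ : ℕ → ℝ} (hδ : ∀ k, 0 < δ k) (s : ℝ) :
    Summable (fun k => (1/2:ℝ)^k * min 1 (max 0 s / δ (k+1))) := by
  apply Summable.of_nonneg_of_le (phiterm_nonneg hδ s) (phiterm_le hδ s)
  exact summable_geometric_of_lt_one (by norm_num) (by norm_num)

lemma Phi_nonneg {δ : ℕ → ℝ} (hδ : ∀ k, 0 < δ k) (s : ℝ) : 0 ≤ Phi δ s :=
  tsum_nonneg (phiterm_nonneg hδ s)

lemma Phi_mono {δ : ℕ → ℝ} (hδ : ∀ k, 0 < δ k) : Monotone (Phi δ) := by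
  intro s₁ s₂ h
  apply Summable.tsum_le_tsum _ (summable_phiterm hδ s₁) (summable_phiterm hδ s₂)
  intro k
  apply mul_le_mul_of_nonneg_left _ (by positivity)
  apply min_le_min le_rfl
  gcongr <;> first
    | exact (hδ (k+1)).le
    | exact le_max_left _ _
    | exact max_le_max le_rfl h

lemma Phi_zero (δ : ℕ → ℝ) : Phi δ 0 = 0 := by
  simp [Phi]

lemma le_Phi {δ : ℕ → ℝ} (hδ : ∀ k, 0 < δ k) {k : ℕ} {s : ℝ} (hs : δ (k+1) ≤ s) :
    (1/2:ℝ)^k ≤ Phi δ s := by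
  have h1 : min 1 (max 0 s / δ (k+1)) = 1 := by
    apply min_eq_left
    rw [le_div_iff₀ (hδ (k+1))]
    have : δ (k+1) ≤ max 0 s := le_trans hs (le_max_right _ _)
    linarith
  have h2 := Summable.le_tsum (summable_phiterm hδ s) k (fun j _ => phiterm_nonneg hδ s j)
  rw [h1, mul_one] at h2
  exact h2

lemma Phi_cont {δ : ℕ → ℝ} (hδ : ∀ k, 0 < δ k) : Continuous (Phi δ) := by
  apply continuous_tsum (u := fun k => (1/2:ℝ)^k)
  · intro k
    exact continuous_const.mul (continuous_const.min
      (((continuous_const.max continuous_id)).div_const _))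
  · exact summable_geometric_of_lt_one (by norm_num) (by norm_num)
  · intro k s
    rw [Real.norm_eq_abs, abs_of_nonneg (phiterm_nonneg hδ s k)]
    exact phiterm_le hδ s k

/-- monotone positive sequence of radii -/
def dseq (d0 : ℕ → ℝ) : ℕ → ℝ
  | 0 => min (d0 0) 1
  | (k+1) => min (dseq d0 k) (min (d0 (k+1)) ((1/2:ℝ)^(k+1)))

lemma dseq_pos {d0 : ℕ → ℝ} (h0 : ∀ k, 0 < d0 k) : ∀ k, 0 < dseq d0 k
  | 0 => lt_min (h0 0) one_pos
  | (k+1) => lt_min (dseq_pos h0 k) (lt_min (h0 (k+1)) (by positivity))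

lemma dseq_le_d0 (d0 : ℕ → ℝ) : ∀ k, dseq d0 k ≤ d0 k
  | 0 => min_le_left _ _
  | (k+1) => le_trans (min_le_right _ _) (min_le_left _ _)

lemma dseq_le_pow (d0 : ℕ → ℝ) : ∀ k, dseq d0 k ≤ (1/2:ℝ)^k
  | 0 => by simpa [dseq] using min_le_right (d0 0) 1
  | (k+1) => le_trans (min_le_right _ _) (min_le_right _ _)

lemma dseq_antitone (d0 : ℕ → ℝ) : Antitone (dseq d0) := by
  apply antitone_nat_of_succ_le
  intro k
  exact min_le_left _ _


end H3H1aux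

open H3H1aux in
/-- Hypothesis (H3) implies hypothesis (H1). -/
theorem h3_implies_h1 {X D : Type*} [NormedAddCommGroup X] [NormedSpace ℝ X] [Nonempty D]
    (f : ℕ → D → X → X)
    (hf0 : ∀ (t : ℕ) (d : D), f t d 0 = 0)
    (hH3 : ∀ (T : ℕ) (S : Set X), Bornology.IsBounded S → ∀ ε > (0 : ℝ),
      Bornology.IsBounded {y : X | ∃ t ≤ T, ∃ d : D, ∃ x ∈ S, y = f t d x} ∧
      ∃ δ > (0 : ℝ), ∀ t ≤ T, ∀ x ∈ S, ∀ x₀ ∈ S, ‖x - x₀‖ < δ →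
        ∀ d : D, ‖f t d x - f t d x₀‖ < ε) :
    ∃ ζ β : ℝ → ℝ, IsKInf ζ ∧ IsKPlus β ∧
      ∀ (t : ℕ) (d : D) (x : X), ‖f t d x‖ ≤ ζ (β t * ‖x‖) := by
  classical
  -- bounds on bounded sets
  have hC : ∀ n : ℕ, ∃ C : ℝ, ∀ t : ℕ, t ≤ n → ∀ (d : D) (x : X), ‖x‖ ≤ n → ‖f t d x‖ ≤ C := by
    intro n
    obtain ⟨hb, -⟩ := hH3 n (Metric.closedBall 0 n) Metric.isBounded_closedBall 1 one_pos
    obtain ⟨C, hC⟩ := isBounded_iff_forall_norm_le.1 hb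
    exact ⟨C, fun t ht d x hx => hC _ ⟨t, ht, d, x, by
      simpa [Metric.mem_closedBall, dist_zero_right] using hx, rfl⟩⟩
  choose C0 hC0 using hC
  -- moduli of continuity at 0
  have hd : ∀ k : ℕ, ∃ d1 > (0:ℝ), ∀ t : ℕ, t ≤ k → ∀ (d : D) (x : X), ‖x‖ ≤ 1 → ‖x‖ < d1 →
      ‖f t d x‖ ≤ (1/2:ℝ)^k := by
    intro k
    obtain ⟨-, d1, hpos, hδ⟩ := hH3 k (Metric.closedBall 0 1) Metric.isBounded_closedBall
      ((1/2:ℝ)^k) (by positivity)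
    refine ⟨d1, hpos, fun t ht d x hx1 hxδ => ?_⟩
    have h := hδ t ht x (by simpa [Metric.mem_closedBall, dist_zero_right] using hx1) 0
      (by simp) (by simpa using hxδ) d
    rw [hf0] at h
    simpa using h.le
  choose d0 hd0pos hd0 using hd
  set δ : ℕ → ℝ := dseq d0 with hδdef
  have hδpos : ∀ k, 0 < δ k := dseq_pos hd0pos
  have hδ1 : ∀ k, δ k ≤ 1 := fun k =>
    le_trans (dseq_le_pow d0 k) (by
      apply pow_le_one₀ <;> norm_num)
  -- coefficient sequences
  set aΨ : ℕ → ℝ := fun n => max (C0 (n+1)) 0 with haΨ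
  have haΨ0 : ∀ n, 0 ≤ aΨ n := fun n => le_max_right _ _
  set aE : ℕ → ℝ := fun n => 1 / δ (n+1) with haE
  have haE0 : ∀ n, 0 ≤ aE n := fun n => div_nonneg zero_le_one (hδpos (n+1)).le
  set ζ : ℝ → ℝ := fun s => s + Phi δ s + F aΨ s with hζdef
  set β : ℝ → ℝ := fun s => 2 * (s + 2) * (1 / δ 0 + F aE s) with hβdef
  -- basic facts about ζ and β
  have hζmono : ∀ s₁ s₂ : ℝ, s₁ ≤ s₂ → ζ s₁ ≤ ζ s₂ := by
    intro s₁ s₂ h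
    have := Phi_mono hδpos h
    have := F_mono haΨ0 h
    simp only [hζdef]
    linarith
  have hζ0 : ζ 0 = 0 := by simp [hζdef, Phi_zero, F_zero]
  have hβge : ∀ t : ℕ, 2 * ((t:ℝ) + 2) / δ t ≤ β t := by
    intro t
    have hE : 1 / δ t ≤ 1 / δ 0 + F aE t := by
      match t with
      | 0 => simpa using F_nonneg haE0 (0:ℝ)
      | (n+1) =>
        have h1 : aE n ≤ F aE ((n:ℝ)+1) := le_F haE0 le_rfl
        have h2 : (0:ℝ) < 1 / δ 0 := div_pos one_pos (hδpos 0)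
        have : ((n+1:ℕ):ℝ) = (n:ℝ)+1 := by push_cast; ring
        rw [this]
        simp only [haE] at h1
        linarith
    have h2 : (0:ℝ) < 2 * ((t:ℝ) + 2) := by positivity
    calc 2 * ((t:ℝ) + 2) / δ t = 2 * ((t:ℝ) + 2) * (1 / δ t) := by ring
      _ ≤ 2 * ((t:ℝ) + 2) * (1 / δ 0 + F aE t) := by
          apply mul_le_mul_of_nonneg_left hE h2.le
      _ = β t := rfl
  have hβ1 : ∀ t : ℕ, 1 ≤ β t := by
    intro t
    have h1 : (1:ℝ) ≤ 1 / δ t := by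
      rw [le_div_iff₀ (hδpos t)]
      simpa using hδ1 t
    have h2 : 2 * ((t:ℝ) + 2) / δ t ≥ 4 * (1/δ t) := by
      have : (0:ℝ) ≤ (t:ℝ) := Nat.cast_nonneg t
      rw [ge_iff_le, div_eq_mul_one_div (2 * ((t:ℝ)+2)) (δ t)]
      have h3 : (0:ℝ) ≤ 1 / δ t := by positivity
      nlinarith
    have := hβge t
    linarith
  refine ⟨ζ, β, ⟨?_, ?_, hζ0, ?_⟩, ⟨?_, ?_⟩, ?_⟩
  · -- ContinuousOn ζ
    exact ((continuous_id.add (Phi_cont hδpos)).add (F_cont aΨ)).continuousOn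
  · -- StrictMonoOn
    intro s₁ _ s₂ _ h
    have h1 := Phi_mono hδpos h.le
    have h2 := F_mono haΨ0 h.le
    simp only [hζdef]
    linarith
  · -- Tendsto atTop
    apply tendsto_atTop_mono' atTop _ tendsto_id
    filter_upwards [eventually_ge_atTop (0:ℝ)] with s hs
    have h1 := Phi_nonneg hδpos s
    have h2 := F_nonneg haΨ0 s
    simp only [hζdef, id]
    linarith
  · -- ContinuousOn β
    exact ((continuous_const.mul (continuous_id.add continuous_const)).mul
      (continuous_const.add (F_cont aE))).continuousOn
  · -- positivity of β
    intro s hs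
    have h1 : (0:ℝ) < 2 * (s + 2) := by linarith
    have h2 : (0:ℝ) < 1 / δ 0 + F aE s := by
      have h3 : (0:ℝ) < 1 / δ 0 := div_pos one_pos (hδpos 0)
      linarith [F_nonneg haE0 s]
    exact mul_pos h1 h2
  · -- the main estimate
    intro t d x
    set r : ℝ := ‖x‖ with hr
    have hr0 : 0 ≤ r := norm_nonneg x
    rcases eq_or_lt_of_le hr0 with hr0' | hrpos
    · -- x = 0
      have hx0 : x = 0 := by
        rw [← norm_eq_zero]; exact hr0'.symm
      have hz : β t * r = 0 := by rw [← hr0']; ring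
      rw [hz, hζ0, hx0, hf0]
      simp
    rcases lt_or_ge r (δ t) with hsmall | hbig
    · -- small regime
      have hex : ∃ j, δ j ≤ r := by
        obtain ⟨j, hj⟩ := exists_pow_lt_of_lt_one hrpos (by norm_num : (1/2:ℝ) < 1)
        exact ⟨j, le_trans (dseq_le_pow d0 j) hj.le⟩
      set K := Nat.find hex with hK
      have hKspec : δ K ≤ r := Nat.find_spec hex
      have htK : t < K := by
        by_contra h
        push_neg at h
        have := dseq_antitone d0 h
        rw [← hδdef] at this
        linarith
      obtain ⟨k, hk⟩ : ∃ k, K = k + 1 := Nat.exists_eq_succ_of_ne_zero (by omega)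
      have hrk : r < δ k := by
        have := Nat.find_min hex (m := k) (by omega)
        push_neg at this
        exact this
      have htk : t ≤ k := by omega
      -- norm bound
      have hδk1 : δ k ≤ 1 := hδ1 k
      have hbound : ‖f t d x‖ ≤ (1/2:ℝ)^k := by
        apply hd0 k t htk d x (le_trans hrk.le hδk1)
        exact lt_of_lt_of_le hrk (dseq_le_d0 d0 k)
      -- Phi bound
      have hPhi : (1/2:ℝ)^k ≤ Phi δ r := by
        apply le_Phi hδpos
        rw [← hk]
        exact hKspec
      have hβr : r ≤ β t * r := le_mul_of_one_le_left hr0 (hβ1 t)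
      have h1 : Phi δ r ≤ Phi δ (β t * r) := Phi_mono hδpos hβr
      have h2 : 0 ≤ β t * r := le_trans hr0 hβr
      have h3 : 0 ≤ F aΨ (β t * r) := F_nonneg haΨ0 _
      calc ‖f t d x‖ ≤ (1/2:ℝ)^k := hbound
        _ ≤ Phi δ r := hPhi
        _ ≤ Phi δ (β t * r) := h1
        _ ≤ ζ (β t * r) := by simp only [hζdef]; linarith
    · -- big regime
      set m : ℕ := max t (⌊r⌋₊ + 1) with hm
      have hrm : r ≤ (m:ℝ) := by
        have h1 : r ≤ (⌊r⌋₊ : ℝ) + 1 := (Nat.lt_floor_add_one r).le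
        have h2 : ((⌊r⌋₊ + 1 : ℕ):ℝ) ≤ (m:ℝ) := by
          exact_mod_cast le_max_right t (⌊r⌋₊+1)
        push_cast at h2 ⊢
        linarith
      have hfb : ‖f t d x‖ ≤ C0 m := hC0 m t (le_max_left _ _) d x hrm
      obtain ⟨p, hp⟩ : ∃ p, m = p + 1 := Nat.exists_eq_succ_of_ne_zero (by omega)
      have hCψ : C0 m ≤ F aΨ m := by
        have h1 : aΨ p ≤ F aΨ ((p:ℝ)+1) := le_F haΨ0 le_rfl
        have h2 : ((m:ℕ):ℝ) = (p:ℝ)+1 := by rw [hp]; push_cast; ring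
        rw [h2]
        calc C0 m ≤ max (C0 (p+1)) 0 := by rw [hp]; exact le_max_left _ _
          _ ≤ F aΨ ((p:ℝ)+1) := h1
      -- m ≤ β t * r
      have hmle : (m:ℝ) ≤ β t * r := by
        have hmtr : (m:ℝ) ≤ (t:ℝ) + r + 1 := by
          have h1 : (⌊r⌋₊ : ℝ) ≤ r := Nat.floor_le hr0
          have h2 : (m:ℝ) ≤ (t:ℝ) + ((⌊r⌋₊:ℝ) + 1) := by
            have hnat : m ≤ t + (⌊r⌋₊ + 1) := max_le (Nat.le_add_right t _) (Nat.le_add_left _ t)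
            exact_mod_cast hnat
          linarith
        have hδt := hδpos t
        have hδt1 := hδ1 t
        have h3 : 2 * ((t:ℝ) + 2) / δ t * r ≤ β t * r :=
          mul_le_mul_of_nonneg_right (hβge t) hr0
        have h4 : ((t:ℝ) + r + 1) * δ t ≤ 2 * ((t:ℝ) + 2) * r := by
          have ht0 : (0:ℝ) ≤ (t:ℝ) := Nat.cast_nonneg t
          nlinarith [hbig, hδt.le, hδt1, hr0]
        have h5 : (t:ℝ) + r + 1 ≤ 2 * ((t:ℝ) + 2) / δ t * r := by
          rw [div_mul_eq_mul_div, le_div_iff₀ hδt]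
          linarith
        linarith
      have h2 : 0 ≤ (m:ℝ) := Nat.cast_nonneg m
      have h3 : 0 ≤ Phi δ (m:ℝ) := Phi_nonneg hδpos _
      calc ‖f t d x‖ ≤ C0 m := hfb
        _ ≤ F aΨ m := hCψ
        _ ≤ ζ (m:ℝ) := by simp only [hζdef]; linarith
        _ ≤ ζ (β t * r) := hζmono _ _ hmle
end
end

section
/- Proposition 2.2, (i) ⇒ (ii) (converse Lyapunov theorem for RGAOS). Suppose system (1.1) satisfies hypotheses (H1) and (H2) and is non-uniformly in time RGAOS. Then there exist a function V : ℕ × X → [0,∞), functions a₁, a₂ ∈ K∞, functions β, μ ∈ K⁺ and a constant λ ∈ (0,1) such that: a₁(‖H(t,x)‖_Y + μ(t)‖x‖_X) ≤ V(t,x) ≤ a₂(β(t)‖x‖_X) for all (t,x) ∈ ℕ × X, and V(t+1, f(t,d,x)) ≤ λ·V(t,x) for all (t,x,d) ∈ ℕ × X × D. -/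
open Filter Topology Bornology Set

noncomputable section

namespace P22

def clamp (u : ℝ) : ℝ := min (max u 0) 1

lemma clamp_nonneg (u : ℝ) : 0 ≤ clamp u := le_min (le_max_right _ _) one_pos.le

lemma clamp_le_one (u : ℝ) : clamp u ≤ 1 := min_le_right _ _

lemma clamp_mono : Monotone clamp := fun _ _ h => min_le_min (max_le_max h le_rfl) le_rfl

lemma clamp_continuous : Continuous clamp := by
  unfold clamp; fun_prop

lemma clamp_eq_zero {u : ℝ} (h : u ≤ 0) : clamp u = 0 := by
  simp [clamp, max_eq_right h]

lemma clamp_eq_one {u : ℝ} (h : 1 ≤ u) : clamp u = 1 := by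
  have : max u 0 = u := max_eq_left (by linarith)
  simp [clamp, this, min_eq_right h]

section LocFin

variable {F : ℕ → ℝ → ℝ}

lemma locfin_eq_sum (hvan : ∀ (n : ℕ) (s : ℝ), s ≤ n → F n s = 0)
    {B : ℕ} {s : ℝ} (hs : s ≤ B) :
    ∑' n, F n s = ∑ n ∈ Finset.range B, F n s := by
  refine tsum_eq_sum (fun b hb => hvan b s ?_)
  have hBb : B ≤ b := by simpa using hb
  calc s ≤ (B : ℝ) := hs
    _ ≤ b := by exact_mod_cast hBb

lemma locfin_summable (hvan : ∀ (n : ℕ) (s : ℝ), s ≤ n → F n s = 0) (s : ℝ) :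
    Summable fun n => F n s := by
  refine summable_of_ne_finset_zero (s := Finset.range ⌈s⌉₊) (fun b hb => hvan b s ?_)
  have hBb : ⌈s⌉₊ ≤ b := by simpa using hb
  calc s ≤ (⌈s⌉₊ : ℝ) := Nat.le_ceil s
    _ ≤ b := by exact_mod_cast hBb

lemma locfin_continuous (hvan : ∀ (n : ℕ) (s : ℝ), s ≤ n → F n s = 0)
    (hc : ∀ n, Continuous (F n)) :
    Continuous fun s => ∑' n, F n s := by
  rw [continuous_iff_continuousAt]
  intro s₀
  set B : ℕ := ⌈s₀⌉₊ + 1 with hB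
  have hs₀ : s₀ < (B : ℝ) := by
    have := Nat.le_ceil s₀; push_cast [hB]; linarith
  have hopen : Iio (B : ℝ) ∈ 𝓝 s₀ := isOpen_Iio.mem_nhds hs₀
  refine ContinuousAt.congr (f := fun s => ∑ n ∈ Finset.range B, F n s) ?_ ?_
  · exact (continuous_finset_sum _ (fun n _ => hc n)).continuousAt
  · filter_upwards [hopen] with s hs
    exact (locfin_eq_sum hvan hs.le).symm

lemma locfin_mono (hvan : ∀ (n : ℕ) (s : ℝ), s ≤ n → F n s = 0)
    (hm : ∀ n, Monotone (F n)) : Monotone fun s => ∑' n, F n s := by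
  intro s s' hss
  have hs' : s' ≤ ((⌈s'⌉₊ : ℕ) : ℝ) := Nat.le_ceil s'
  have hs : s ≤ ((⌈s'⌉₊ : ℕ) : ℝ) := hss.trans hs'
  dsimp only
  rw [locfin_eq_sum hvan hs, locfin_eq_sum hvan hs']
  exact Finset.sum_le_sum fun n _ => hm n hss

lemma locfin_le (hvan : ∀ (n : ℕ) (s : ℝ), s ≤ n → F n s = 0)
    (hnn : ∀ n s, 0 ≤ F n s) (n : ℕ) (s : ℝ) :
    F n s ≤ ∑' m, F m s :=
  Summable.le_tsum (locfin_summable hvan s) n (fun j _ => hnn j s)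

end LocFin

/-- Interpolation of a positive sequence by a `K⁺` function lying below it at naturals. -/
lemma exists_kplus_le (b : ℕ → ℝ) (hb : ∀ n, 0 < b n) :
    ∃ μ : ℝ → ℝ, IsKPlus μ ∧ ∀ n : ℕ, μ n ≤ b n := by
  set μ : ℝ → ℝ := fun x => ⨅ n : ℕ, (b n + |x - n|) with hμ
  have hbdd : ∀ x : ℝ, BddBelow (range fun n : ℕ => b n + |x - n|) := by
    intro x
    exact ⟨0, by rintro y ⟨n, rfl⟩; exact add_nonneg (hb n).le (abs_nonneg _)⟩
  have hlip : ∀ x y : ℝ, μ x ≤ μ y + |x - y| := by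
    intro x y
    have h1 : ∀ n : ℕ, μ x - |x - y| ≤ b n + |y - n| := by
      intro n
      have h2 : μ x ≤ b n + |x - n| := ciInf_le (hbdd x) n
      have h3 : |x - (n:ℝ)| ≤ |x - y| + |y - n| := abs_sub_le x y n
      linarith
    have h4 := le_ciInf h1
    have : μ x - |x - y| ≤ μ y := h4
    linarith
  have hcont : Continuous μ := by
    have : LipschitzWith 1 μ := by
      refine LipschitzWith.of_dist_le_mul fun x y => ?_
      rw [Real.dist_eq, Real.dist_eq, NNReal.coe_one, one_mul, abs_sub_le_iff]
      constructor
      · have := hlip x y; linarith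
      · have := hlip y x; rw [abs_sub_comm] at this; linarith
    exact this.continuous
  have hpos : ∀ x : ℝ, 0 ≤ x → 0 < μ x := by
    intro x hx
    set n₀ : ℕ := ⌊x⌋₊ with hn₀
    set c : ℝ := min (min (b n₀) (b (n₀+1))) 1 with hc
    have hcpos : 0 < c := lt_min (lt_min (hb _) (hb _)) one_pos
    have hfl : (n₀ : ℝ) ≤ x := Nat.floor_le hx
    have hfl2 : x < (n₀ : ℝ) + 1 := Nat.lt_floor_add_one x
    have hall : ∀ n : ℕ, c ≤ b n + |x - n| := by
      intro n
      rcases eq_or_ne n n₀ with h | h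
      · rw [h]
        exact ((min_le_left _ _).trans (min_le_left _ _)).trans
          (le_add_of_nonneg_right (abs_nonneg _))
      rcases eq_or_ne n (n₀ + 1) with h1 | h1
      · rw [h1]
        exact ((min_le_left _ _).trans (min_le_right _ _)).trans
          (le_add_of_nonneg_right (abs_nonneg _))
      have habs : 1 ≤ |x - n| := by
        rcases lt_or_ge n n₀ with h2 | h2
        · have h3 : (n:ℝ) + 1 ≤ n₀ := by exact_mod_cast h2
          have : (1:ℝ) ≤ x - n := by linarith
          exact this.trans (le_abs_self _)
        · have h4 : n₀ + 2 ≤ n := by omega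
          have h5 : (n₀:ℝ) + 2 ≤ n := by exact_mod_cast h4
          have : (1:ℝ) ≤ (n:ℝ) - x := by linarith
          calc (1:ℝ) ≤ (n:ℝ) - x := this
            _ ≤ |x - n| := by rw [abs_sub_comm]; exact le_abs_self _
      have hc1 : c ≤ 1 := min_le_right _ _
      have := (hb n).le
      linarith
    exact hcpos.trans_le (le_ciInf hall)
  refine ⟨μ, ⟨hcont.continuousOn, hpos⟩, fun n => ?_⟩
  have := ciInf_le (hbdd (n : ℝ)) n
  simpa using this


section Sontag

variable (σ : ℝ → ℝ → ℝ)

structure SontagHyp (σ : ℝ → ℝ → ℝ) : Prop where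
  mono : ∀ t : ℝ, 0 ≤ t → MonotoneOn (fun s => σ s t) (Ici 0)
  anti : ∀ s : ℝ, 0 ≤ s → AntitoneOn (σ s) (Ici 0)
  zero : ∀ t : ℝ, 0 ≤ t → σ 0 t = 0
  nonneg : ∀ s t : ℝ, 0 ≤ s → 0 ≤ t → 0 ≤ σ s t
  tend : ∀ s : ℝ, 0 ≤ s → Tendsto (σ s) atTop (nhds 0)
  cont : ContinuousOn (fun s => σ s 0) (Ici 0)

open Classical in
/-- first time `σ n ·` drops below `r` -/
def mFn (n : ℕ) (r : ℝ) : ℕ :=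
  if h : ∃ k : ℕ, σ n k < r then Nat.find h else 0

def CFn (n : ℕ) : ℝ := n * (4:ℝ) ^ (mFn σ n (1 / n))

def termF (n : ℕ) (r : ℝ) : ℝ :=
  CFn σ n * (4:ℝ) ^ ((1:ℤ) - mFn σ n r) + max (r - σ n 0) 0

def Theta0 (r : ℝ) : ℝ := ⨅ j : ℕ, termF σ (j+1) r

def grid (j : ℕ) : ℝ := if j % 2 = 0 then ((j / 2 + 1 : ℕ) : ℝ) else (1:ℝ) / ((j / 2 + 2 : ℕ) : ℝ)

def IFn (r : ℝ) : ℝ := ⨆ j : ℕ, min (Theta0 σ (grid j)) (max (r - grid j) 0)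

def thetaFn (r : ℝ) : ℝ := (r / (1 + r)) * IFn σ r

def eFn (s : ℝ) : ℝ :=
  (CFn σ 0 + CFn σ 1 + CFn σ 2) + ∑' j : ℕ, CFn σ (j+3) * clamp (s - (j+1))

def GammaFn (s : ℝ) : ℝ := Real.sqrt (thetaFn σ (σ s 0)) * Real.sqrt (eFn σ s) + s

variable {σ}

lemma mFn_exists (hσ : SontagHyp σ) (n : ℕ) {r : ℝ} (hr : 0 < r) : ∃ k : ℕ, σ n k < r := by
  have h1 : Tendsto (fun k : ℕ => σ n k) atTop (nhds 0) :=
    (hσ.tend n (Nat.cast_nonneg n)).comp tendsto_natCast_atTop_atTop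
  exact (h1.eventually_lt_const hr).exists

lemma mFn_gt (hσ : SontagHyp σ) (n k : ℕ) (h0 : 0 < σ n k) : k < mFn σ n (σ n k) := by
  classical
  rw [mFn, dif_pos (mFn_exists hσ n h0)]
  rw [Nat.lt_find_iff]
  intro m hm
  have : σ n k ≤ σ n m :=
    hσ.anti n (Nat.cast_nonneg n) (mem_Ici.2 (Nat.cast_nonneg m)) (mem_Ici.2 (Nat.cast_nonneg k))
      (by exact_mod_cast hm)
  linarith

lemma mFn_anti (hσ : SontagHyp σ) (n : ℕ) {r r' : ℝ} (hr : 0 < r) (hrr : r ≤ r') :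
    mFn σ n r' ≤ mFn σ n r := by
  classical
  rw [mFn, mFn, dif_pos (mFn_exists hσ n hr), dif_pos (mFn_exists hσ n (hr.trans_le hrr))]
  exact Nat.find_mono (fun j hj => hj.trans_le hrr)

lemma CFn_nonneg (n : ℕ) : 0 ≤ CFn σ n := by
  have : (0:ℝ) < 4 ^ (mFn σ n (1 / n)) := by positivity
  exact mul_nonneg (Nat.cast_nonneg n) this.le

lemma CFn_pos {n : ℕ} (hn : 1 ≤ n) : 0 < CFn σ n := by
  have h4 : (0:ℝ) < 4 ^ (mFn σ n (1 / n)) := by positivity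
  have : (0:ℝ) < n := by exact_mod_cast hn
  exact mul_pos this h4

lemma termF_nonneg (n : ℕ) (r : ℝ) : 0 ≤ termF σ n r := by
  have h4 : (0:ℝ) < (4:ℝ) ^ ((1:ℤ) - mFn σ n r) := by positivity
  exact add_nonneg (mul_nonneg (CFn_nonneg n) h4.le) (le_max_right _ _)

lemma termF_pos {n : ℕ} (hn : 1 ≤ n) (r : ℝ) : 0 < termF σ n r := by
  have h4 : (0:ℝ) < (4:ℝ) ^ ((1:ℤ) - mFn σ n r) := by positivity
  exact add_pos_of_pos_of_nonneg (mul_pos (CFn_pos hn) h4) (le_max_right _ _)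

lemma termF_mono (hσ : SontagHyp σ) (n : ℕ) {r r' : ℝ} (hr : 0 < r) (hrr : r ≤ r') :
    termF σ n r ≤ termF σ n r' := by
  have h1 : mFn σ n r' ≤ mFn σ n r := mFn_anti hσ n hr hrr
  have h2 : (4:ℝ) ^ ((1:ℤ) - mFn σ n r) ≤ (4:ℝ) ^ ((1:ℤ) - mFn σ n r') := by
    apply zpow_le_zpow_right₀ (by norm_num)
    omega
  refine add_le_add (mul_le_mul_of_nonneg_left h2 (CFn_nonneg n)) ?_
  exact max_le_max (by linarith) le_rfl

lemma Theta0_bddBelow (r : ℝ) : BddBelow (range fun j : ℕ => termF σ (j+1) r) :=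
  ⟨0, by rintro y ⟨j, rfl⟩; exact termF_nonneg _ _⟩

lemma Theta0_nonneg (r : ℝ) : 0 ≤ Theta0 σ r :=
  le_ciInf fun j => termF_nonneg _ _

lemma Theta0_le (j : ℕ) (r : ℝ) : Theta0 σ r ≤ termF σ (j+1) r :=
  ciInf_le (Theta0_bddBelow r) j

lemma Theta0_mono (hσ : SontagHyp σ) {r r' : ℝ} (hr : 0 < r) (hrr : r ≤ r') :
    Theta0 σ r ≤ Theta0 σ r' :=
  le_ciInf fun j => (Theta0_le j r).trans (termF_mono hσ _ hr hrr)

lemma termF_big (hσ : SontagHyp σ) {n : ℕ} (hn : 1 ≤ n) {r : ℝ} (hr : 0 < r) (hnr : 1 / (n:ℝ) ≤ r) :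
    (n:ℝ) * 4 ≤ termF σ n r := by
  have hpos : (0:ℝ) < 1 / (n:ℝ) := by
    have : (0:ℝ) < n := by exact_mod_cast hn
    positivity
  have h1 : mFn σ n r ≤ mFn σ n (1 / n) := mFn_anti hσ n hpos hnr
  have h2 : CFn σ n * (4:ℝ) ^ ((1:ℤ) - mFn σ n r)
      = (n:ℝ) * (4:ℝ) ^ ((mFn σ n (1/n) : ℤ) + (1 - mFn σ n r)) := by
    rw [CFn, ← zpow_natCast (4:ℝ) (mFn σ n (1/n)), mul_assoc, ← zpow_add₀ (by norm_num : (4:ℝ) ≠ 0)]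
  have h3 : (4:ℝ) ^ (1:ℤ) ≤ (4:ℝ) ^ ((mFn σ n (1/n) : ℤ) + (1 - mFn σ n r)) := by
    apply zpow_le_zpow_right₀ (by norm_num)
    omega
  have h4 : (n:ℝ) * 4 ≤ CFn σ n * (4:ℝ) ^ ((1:ℤ) - mFn σ n r) := by
    rw [h2]
    have hn' : (0:ℝ) ≤ n := Nat.cast_nonneg n
    calc (n:ℝ) * 4 = (n:ℝ) * (4:ℝ) ^ (1:ℤ) := by norm_num
      _ ≤ _ := mul_le_mul_of_nonneg_left h3 hn'
  exact h4.trans (le_add_of_nonneg_right (le_max_right _ _))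

lemma Theta0_pos (hσ : SontagHyp σ) {r : ℝ} (hr : 0 < r) : 0 < Theta0 σ r := by
  set N : ℕ := ⌈1 / r⌉₊ with hN
  set c : ℝ := min 4 ((Finset.range (N+1)).inf' (by simp) fun j => termF σ (j+1) r) with hc
  have hcpos : 0 < c := by
    refine lt_min (by norm_num) ?_
    rw [Finset.lt_inf'_iff]
    exact fun j _ => termF_pos (Nat.le_add_left 1 j) r
  refine hcpos.trans_le (le_ciInf fun j => ?_)
  rcases le_or_gt (1 / ((j:ℝ)+1)) r with h | h
  · have hj1 : (1:ℕ) ≤ j + 1 := Nat.le_add_left 1 j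
    have hbig := termF_big hσ hj1 hr (by push_cast; exact h)
    have h4 : (4:ℝ) ≤ ((j:ℝ)+1) * 4 := by nlinarith [Nat.cast_nonneg (α := ℝ) j]
    calc c ≤ 4 := min_le_left _ _
      _ ≤ ((j:ℝ)+1) * 4 := h4
      _ ≤ termF σ (j+1) r := by push_cast at hbig ⊢; exact hbig
  · have hjN : j ∈ Finset.range (N+1) := by
      rw [Finset.mem_range]
      have hj0 : (0:ℝ) < (j:ℝ) + 1 := by positivity
      have h1 : r * ((j:ℝ)+1) < 1 := (lt_div_iff₀ hj0).1 h
      have h2 : (1:ℝ) / r ≤ (N:ℝ) := by rw [hN]; exact Nat.le_ceil _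
      have h3 : ((j:ℝ)+1) < 1 / r := by rw [lt_div_iff₀ hr]; nlinarith
      have h4 : (((j+1:ℕ)):ℝ) < (N:ℝ) := by push_cast; linarith
      have h5 : j + 1 < N := by exact_mod_cast h4
      omega
    calc c ≤ _ := min_le_right _ _
      _ ≤ termF σ (j+1) r := Finset.inf'_le _ hjN

lemma Theta0_large (hσ : SontagHyp σ) (M : ℝ) : ∃ R : ℝ, 1 ≤ R ∧ ∀ r : ℝ, R ≤ r → M ≤ Theta0 σ r := by
  set N : ℕ := ⌈M⌉₊ + 1 with hN
  refine ⟨max 1 (σ N 0 + M), le_max_left _ _, fun r hr => ?_⟩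
  have hr1 : (1:ℝ) ≤ r := (le_max_left _ _).trans hr
  have hrM : σ N 0 + M ≤ r := (le_max_right _ _).trans hr
  have hMN : M ≤ (N:ℝ) := by
    calc M ≤ (⌈M⌉₊ : ℝ) := Nat.le_ceil M
      _ ≤ N := by exact_mod_cast Nat.le_succ _
  refine le_ciInf fun j => ?_
  rcases le_or_gt N (j+1) with h | h
  · have hj1 : (1:ℕ) ≤ j + 1 := Nat.le_add_left 1 j
    have hfrac : 1 / (((j+1:ℕ)):ℝ) ≤ r := by
      have hj0 : (0:ℝ) < ((j+1:ℕ):ℝ) := by positivity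
      have : 1 / (((j+1:ℕ)):ℝ) ≤ 1 := by
        rw [div_le_one hj0]; exact_mod_cast Nat.le_add_left 1 j
      linarith
    have hbig := termF_big hσ hj1 (by linarith : (0:ℝ) < r) hfrac
    have hMj : M ≤ ((j+1:ℕ):ℝ) * 4 := by
      have hNj : (N:ℝ) ≤ ((j+1:ℕ):ℝ) := by exact_mod_cast h
      nlinarith [Nat.cast_nonneg (α := ℝ) (j+1)]
    exact hMj.trans hbig
  · have hσle : σ ((j+1:ℕ):ℝ) 0 ≤ σ (N:ℝ) 0 := by
      have hjN : (((j+1:ℕ)):ℝ) ≤ (N:ℝ) := by exact_mod_cast h.le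
      exact hσ.mono 0 le_rfl (mem_Ici.2 (by positivity)) (mem_Ici.2 (Nat.cast_nonneg N)) hjN
    have hM2 : M ≤ max (r - σ ((j+1:ℕ):ℝ) 0) 0 := by
      have : M ≤ r - σ ((j+1:ℕ):ℝ) 0 := by linarith
      exact this.trans (le_max_left _ _)
    refine hM2.trans (le_add_of_nonneg_left ?_)
    have h4 : (0:ℝ) < (4:ℝ) ^ ((1:ℤ) - mFn σ (j+1) r) := by positivity
    exact mul_nonneg (CFn_nonneg _) h4.le


lemma grid_pos (j : ℕ) : 0 < grid j := by
  rw [grid]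
  split <;> positivity

lemma grid_even (i : ℕ) : grid (2*i) = ((i+1 : ℕ) : ℝ) := by
  rw [grid]
  have h1 : (2*i) % 2 = 0 := by omega
  have h2 : (2*i) / 2 = i := by omega
  simp [h1, h2]

lemma grid_odd (i : ℕ) : grid (2*i+1) = (1:ℝ) / ((i+2 : ℕ) : ℝ) := by
  rw [grid]
  have h1 : (2*i+1) % 2 = 1 := by omega
  have h2 : (2*i+1) / 2 = i := by omega
  simp [h1, h2]

lemma IFn_bddAbove (r : ℝ) :
    BddAbove (range fun j : ℕ => min (Theta0 σ (grid j)) (max (r - grid j) 0)) := by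
  refine ⟨max r 0, ?_⟩
  rintro y ⟨j, rfl⟩
  refine (min_le_right _ _).trans (max_le_max ?_ le_rfl)
  linarith [grid_pos j]

lemma IFn_term_nonneg (σ : ℝ → ℝ → ℝ) (j : ℕ) (r : ℝ) :
    0 ≤ min (Theta0 σ (grid j)) (max (r - grid j) 0) :=
  le_min (Theta0_nonneg (σ := σ) _) (le_max_right _ _)

lemma IFn_nonneg (r : ℝ) : 0 ≤ IFn σ r :=
  (IFn_term_nonneg σ 0 r).trans (le_ciSup (IFn_bddAbove r) 0)

lemma IFn_mono : Monotone (IFn σ) := by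
  intro r r' hrr
  refine ciSup_mono (IFn_bddAbove r') fun j => ?_
  exact min_le_min le_rfl (max_le_max (by linarith) le_rfl)

lemma IFn_le_Theta0 (hσ : SontagHyp σ) {r : ℝ} (hr : 0 < r) : IFn σ r ≤ Theta0 σ r := by
  refine ciSup_le fun j => ?_
  rcases le_or_gt r (grid j) with h | h
  · refine (min_le_right _ _).trans ?_
    have : max (r - grid j) 0 = 0 := max_eq_right (by linarith)
    rw [this]; exact Theta0_nonneg (σ := σ) r
  · exact (min_le_left _ _).trans (Theta0_mono hσ (grid_pos j) h.le)

lemma IFn_lip (r r' : ℝ) : IFn σ r ≤ IFn σ r' + |r - r'| := by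
  refine ciSup_le fun j => ?_
  have h1 : max (r - grid j) 0 ≤ max (r' - grid j) 0 + |r - r'| := by
    rcases le_or_gt r r' with h | h
    · exact (max_le_max (by linarith) le_rfl).trans (le_add_of_nonneg_right (abs_nonneg _))
    · have : r - grid j ≤ (r' - grid j) + |r - r'| := by
        rw [abs_of_pos (by linarith : (0:ℝ) < r - r')]; linarith
      refine max_le (this.trans (add_le_add_left (le_max_left _ _) _)) ?_
      exact add_nonneg (le_max_right _ _) (abs_nonneg _)
  have h2 : min (Theta0 σ (grid j)) (max (r - grid j) 0)
      ≤ min (Theta0 σ (grid j)) (max (r' - grid j) 0) + |r - r'| := by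
    rcases min_cases (Theta0 σ (grid j)) (max (r' - grid j) 0) with ⟨he, _⟩ | ⟨he, _⟩
    · rw [he]
      exact (min_le_left _ _).trans (le_add_of_nonneg_right (abs_nonneg _))
    · rw [he]
      exact (min_le_right _ _).trans h1
  exact h2.trans (add_le_add_left (le_ciSup (IFn_bddAbove r') j) _)

lemma IFn_continuous : Continuous (IFn σ) := by
  have : LipschitzWith 1 (IFn σ) := by
    refine LipschitzWith.of_dist_le_mul fun x y => ?_
    rw [Real.dist_eq, Real.dist_eq, NNReal.coe_one, one_mul, abs_sub_le_iff]
    constructor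
    · have := IFn_lip (σ := σ) x y; linarith
    · have := IFn_lip (σ := σ) y x; rw [abs_sub_comm] at this; linarith
  exact this.continuous

lemma IFn_pos (hσ : SontagHyp σ) {r : ℝ} (hr : 0 < r) : 0 < IFn σ r := by
  obtain ⟨i, hi⟩ : ∃ i : ℕ, (1:ℝ) / ((i+2 : ℕ) : ℝ) < r := by
    obtain ⟨i, hi⟩ := exists_nat_gt (1 / r)
    refine ⟨i, ?_⟩
    have h2 : (0:ℝ) < ((i+2:ℕ):ℝ) := by positivity
    rw [div_lt_iff₀ h2]
    rw [div_lt_iff₀ hr] at hi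
    push_cast
    nlinarith
  set g := grid (2*i+1) with hg
  have hgr : g < r := by rw [hg, grid_odd]; exact hi
  have hgpos : 0 < g := grid_pos _
  have hterm : 0 < min (Theta0 σ g) (max (r - g) 0) := by
    refine lt_min (Theta0_pos hσ hgpos) ?_
    exact lt_max_of_lt_left (by linarith)
  exact hterm.trans_le (le_ciSup (IFn_bddAbove r) (2*i+1))

lemma IFn_tendsto (hσ : SontagHyp σ) : Tendsto (IFn σ) atTop atTop := by
  rw [tendsto_atTop]
  intro M
  obtain ⟨R, hR1, hR⟩ := Theta0_large hσ (σ := σ) M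
  obtain ⟨n, hn⟩ := exists_nat_gt R
  set g := grid (2*n) with hg
  have hgR : R ≤ g := by
    rw [hg, grid_even]; push_cast; linarith
  have hTg : M ≤ Theta0 σ g := hR g hgR
  filter_upwards [eventually_ge_atTop (g + max M 0)] with r hr
  have hterm : M ≤ min (Theta0 σ g) (max (r - g) 0) := by
    refine le_min hTg ?_
    refine le_max_of_le_left ?_
    have : max M 0 ≤ r - g := by linarith
    linarith [le_max_left M 0]
  exact hterm.trans (le_ciSup (IFn_bddAbove r) (2*n))

lemma thetaFn_zero : thetaFn σ 0 = 0 := by simp [thetaFn]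

lemma thetaFn_nonneg {r : ℝ} (hr : 0 ≤ r) : 0 ≤ thetaFn σ r := by
  have h1 : 0 ≤ r / (1 + r) := by positivity
  exact mul_nonneg h1 (IFn_nonneg r)

lemma thetaFn_le_IFn {r : ℝ} (hr : 0 ≤ r) : thetaFn σ r ≤ IFn σ r := by
  have h1 : r / (1 + r) ≤ 1 := by
    rw [div_le_one (by linarith)]; linarith
  have h2 : 0 ≤ r / (1 + r) := by positivity
  calc thetaFn σ r ≤ 1 * IFn σ r := mul_le_mul_of_nonneg_right (by linarith) (IFn_nonneg r)
    _ = IFn σ r := one_mul _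

lemma thetaFn_strictMonoOn (hσ : SontagHyp σ) : StrictMonoOn (thetaFn σ) (Ici 0) := by
  intro a ha b hb hab
  rw [mem_Ici] at ha hb
  have hb0 : 0 < b := ha.trans_lt hab
  have hfa : 0 ≤ a / (1 + a) := by positivity
  have hfab : a / (1 + a) < b / (1 + b) := by
    rw [div_lt_div_iff₀ (by linarith) (by linarith)]
    nlinarith
  have h1 : thetaFn σ a ≤ (a / (1 + a)) * IFn σ b :=
    mul_le_mul_of_nonneg_left (IFn_mono hab.le) hfa
  have h2 : (a / (1 + a)) * IFn σ b < (b / (1 + b)) * IFn σ b :=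
    mul_lt_mul_of_pos_right hfab (IFn_pos hσ hb0)
  exact h1.trans_lt h2

lemma thetaFn_monoOn (hσ : SontagHyp σ) : MonotoneOn (thetaFn σ) (Ici 0) :=
  (thetaFn_strictMonoOn hσ).monotoneOn

lemma thetaFn_contOn : ContinuousOn (thetaFn σ) (Ici 0) := by
  refine ContinuousOn.mul ?_ (IFn_continuous (σ := σ)).continuousOn
  refine ContinuousOn.div continuousOn_id (by fun_prop) fun x hx => ?_
  rw [mem_Ici] at hx; intro h; linarith

lemma thetaFn_tendsto (hσ : SontagHyp σ) : Tendsto (thetaFn σ) atTop atTop := by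
  rw [tendsto_atTop]
  intro M
  have hI := IFn_tendsto hσ (σ := σ)
  rw [tendsto_atTop] at hI
  filter_upwards [hI (2 * max M 0), eventually_ge_atTop (1:ℝ)] with r hr1 hr2
  have hf : (1:ℝ)/2 ≤ r / (1 + r) := by
    rw [div_le_div_iff₀ (by norm_num) (by linarith)]
    linarith
  have hInn : 0 ≤ IFn σ r := IFn_nonneg r
  calc M ≤ max M 0 := le_max_left _ _
    _ = (1/2) * (2 * max M 0) := by ring
    _ ≤ (1/2) * IFn σ r := by linarith [le_max_left M 0]
    _ ≤ (r / (1+r)) * IFn σ r := mul_le_mul_of_nonneg_right hf hInn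
    _ = thetaFn σ r := rfl

lemma theta_le_CFn (hσ : SontagHyp σ) (n k : ℕ) (hn : 1 ≤ n) :
    (4:ℝ)^k * thetaFn σ (σ n k) ≤ CFn σ n := by
  have hnn : 0 ≤ σ n k := hσ.nonneg _ _ (Nat.cast_nonneg n) (Nat.cast_nonneg k)
  rcases eq_or_lt_of_le hnn with h0 | h0
  · rw [← h0, thetaFn_zero, mul_zero]
    exact CFn_nonneg n
  obtain ⟨p, rfl⟩ : ∃ p, n = p + 1 := ⟨n - 1, by omega⟩
  set r : ℝ := σ (((p+1:ℕ)):ℝ) (((k:ℕ)):ℝ) with hrdef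
  have hth : thetaFn σ r ≤ termF σ (p+1) r := by
    calc thetaFn σ r ≤ IFn σ r := thetaFn_le_IFn hnn
      _ ≤ Theta0 σ r := IFn_le_Theta0 hσ h0
      _ ≤ termF σ (p+1) r := Theta0_le p _
  have hmax : max (r - σ (((p+1:ℕ)):ℝ) 0) 0 = 0 := by
    refine max_eq_right ?_
    have : σ ((p+1:ℕ):ℝ) ((k:ℕ):ℝ) ≤ σ ((p+1:ℕ):ℝ) 0 :=
      hσ.anti _ (Nat.cast_nonneg _) (mem_Ici.2 le_rfl) (mem_Ici.2 (Nat.cast_nonneg k))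
        (Nat.cast_nonneg k)
    rw [hrdef]
    linarith
  have hm : k + 1 ≤ mFn σ (p+1) r := mFn_gt hσ (p+1) k h0
  have hzp : (4:ℝ) ^ ((1:ℤ) - mFn σ (p+1) r) ≤ (4:ℝ) ^ (-(k:ℤ)) := by
    apply zpow_le_zpow_right₀ (by norm_num)
    omega
  have hterm : termF σ (p+1) r ≤ CFn σ (p+1) * (4:ℝ) ^ (-(k:ℤ)) := by
    rw [termF, hmax, add_zero]
    exact mul_le_mul_of_nonneg_left hzp (CFn_nonneg _)
  have h4k : (0:ℝ) < (4:ℝ)^k := by positivity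
  have := mul_le_mul_of_nonneg_left (hth.trans hterm) h4k.le
  calc (4:ℝ)^k * thetaFn σ r ≤ (4:ℝ)^k * (CFn σ (p+1) * (4:ℝ) ^ (-(k:ℤ))) := this
    _ = CFn σ (p+1) * ((4:ℝ)^(k:ℤ) * (4:ℝ) ^ (-(k:ℤ))) := by
        rw [← zpow_natCast (4:ℝ) k]; ring
    _ = CFn σ (p+1) := by
        rw [← zpow_add₀ (by norm_num : (4:ℝ) ≠ 0)]
        simp

lemma eFn_van : ∀ (j : ℕ) (s : ℝ), s ≤ j → CFn σ (j+3) * clamp (s - (j+1)) = 0 := by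
  intro j s hs
  rw [clamp_eq_zero (by push_cast; linarith), mul_zero]

lemma eFn_nonneg (s : ℝ) : 0 ≤ eFn σ s := by
  have h0 := CFn_nonneg (σ := σ) 0
  have h1 := CFn_nonneg (σ := σ) 1
  have h2 := CFn_nonneg (σ := σ) 2
  have ht : (0:ℝ) ≤ ∑' j : ℕ, CFn σ (j+3) * clamp (s - (j+1)) :=
    tsum_nonneg (fun n => mul_nonneg (CFn_nonneg _) (clamp_nonneg _))
  rw [eFn]; linarith

lemma eFn_mono : Monotone (eFn σ) := by
  refine fun s s' h => add_le_add_right ?_ _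
  refine locfin_mono (eFn_van (σ := σ)) (fun n => ?_) h
  exact fun u v huv => mul_le_mul_of_nonneg_left (clamp_mono (by linarith)) (CFn_nonneg _)

lemma eFn_continuous : Continuous (eFn σ) := by
  refine continuous_const.add ?_
  refine locfin_continuous (eFn_van (σ := σ)) fun n => ?_
  exact continuous_const.mul (clamp_continuous.comp (by fun_prop))

lemma eFn_ge_CFn {s : ℝ} (hs : 0 ≤ s) : CFn σ ⌈s⌉₊ ≤ eFn σ s := by
  set m : ℕ := ⌈s⌉₊ with hm
  have htsum_nn : 0 ≤ ∑' j : ℕ, CFn σ (j+3) * clamp (s - (j+1)) :=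
    tsum_nonneg (fun n => mul_nonneg (CFn_nonneg (σ := σ) _) (clamp_nonneg _))
  rcases lt_or_ge m 3 with h3 | h3
  · have : CFn σ m ≤ CFn σ 0 + CFn σ 1 + CFn σ 2 := by
      interval_cases m <;>
        linarith [CFn_nonneg (σ := σ) 0, CFn_nonneg (σ := σ) 1, CFn_nonneg (σ := σ) 2]
    rw [eFn]; linarith
  · obtain ⟨p, hp⟩ : ∃ p, m = p + 3 := ⟨m - 3, by omega⟩
    have hlt : ((m:ℕ) - 1 : ℕ) < ⌈s⌉₊ := by omega
    have hs1 : (((m - 1 : ℕ)):ℝ) < s := by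
      rw [← Nat.lt_ceil]; exact hlt
    have hcast : (((m - 1 : ℕ)):ℝ) = (m:ℝ) - 1 := by
      have : (1:ℕ) ≤ m := by omega
      push_cast [Nat.cast_sub this]; ring
    have hclamp : clamp (s - ((p:ℝ)+1)) = 1 := by
      apply clamp_eq_one
      have hpm : ((p:ℝ)+1) = (m:ℝ) - 2 := by
        rw [hp]; push_cast; ring
      rw [hpm]
      rw [hcast] at hs1
      linarith
    have hterm : CFn σ m ≤ ∑' j : ℕ, CFn σ (j+3) * clamp (s - (j+1)) := by
      have := locfin_le (eFn_van (σ := σ))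
        (fun n s => mul_nonneg (CFn_nonneg _) (clamp_nonneg _)) p s
      rw [hclamp, mul_one, ← hp] at this
      exact this
    have hK : 0 ≤ CFn σ 0 + CFn σ 1 + CFn σ 2 := by
      have := CFn_nonneg (σ := σ) 0
      have := CFn_nonneg (σ := σ) 1
      have := CFn_nonneg (σ := σ) 2
      linarith
    rw [eFn]; linarith

lemma theta_sigma_le_eFn (hσ : SontagHyp σ) {s : ℝ} (hs : 0 ≤ s) (k : ℕ) :
    (4:ℝ)^k * thetaFn σ (σ s k) ≤ eFn σ s := by
  rcases Nat.eq_zero_or_pos ⌈s⌉₊ with h0 | h0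
  · have hs0 : s = 0 := le_antisymm (by rwa [← Nat.ceil_eq_zero (R := ℝ)]) hs
    rw [hs0, hσ.zero _ (Nat.cast_nonneg k), thetaFn_zero, mul_zero]
    exact eFn_nonneg _
  · have hsle : s ≤ (⌈s⌉₊ : ℝ) := Nat.le_ceil s
    have hσss : σ s k ≤ σ (⌈s⌉₊ : ℝ) k :=
      hσ.mono _ (Nat.cast_nonneg k) (mem_Ici.2 hs) (mem_Ici.2 (Nat.cast_nonneg _)) hsle
    have hθ : thetaFn σ (σ s k) ≤ thetaFn σ (σ (⌈s⌉₊:ℝ) k) := by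
      refine thetaFn_monoOn hσ (mem_Ici.2 ?_) (mem_Ici.2 ?_) hσss
      · exact hσ.nonneg _ _ hs (Nat.cast_nonneg k)
      · exact hσ.nonneg _ _ (Nat.cast_nonneg _) (Nat.cast_nonneg k)
    have h4 : (0:ℝ) ≤ (4:ℝ)^k := by positivity
    calc (4:ℝ)^k * thetaFn σ (σ s k) ≤ (4:ℝ)^k * thetaFn σ (σ (⌈s⌉₊:ℝ) k) :=
          mul_le_mul_of_nonneg_left hθ h4
      _ ≤ CFn σ ⌈s⌉₊ := theta_le_CFn hσ _ k h0
      _ ≤ eFn σ s := eFn_ge_CFn hs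

lemma Gamma_bound (hσ : SontagHyp σ) {s : ℝ} (hs : 0 ≤ s) (k : ℕ) :
    (2:ℝ)^k * thetaFn σ (σ s k) ≤ GammaFn σ s := by
  set w := thetaFn σ (σ s k) with hw
  set u := thetaFn σ (σ s 0) with hu
  have hw0 : 0 ≤ w := thetaFn_nonneg (hσ.nonneg _ _ hs (Nat.cast_nonneg k))
  have hu0 : 0 ≤ u := thetaFn_nonneg (hσ.nonneg _ _ hs le_rfl)
  have hE0 : 0 ≤ eFn σ s := eFn_nonneg s
  have hwu : w ≤ u := by
    have hσk : σ s k ≤ σ s 0 :=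
      hσ.anti s hs (mem_Ici.2 le_rfl) (mem_Ici.2 (Nat.cast_nonneg k)) (Nat.cast_nonneg k)
    refine thetaFn_monoOn hσ (mem_Ici.2 ?_) (mem_Ici.2 ?_) hσk
    · exact hσ.nonneg _ _ hs (Nat.cast_nonneg k)
    · exact hσ.nonneg _ _ hs le_rfl
  have h4k : (4:ℝ)^k * w ≤ eFn σ s := theta_sigma_le_eFn hσ hs k
  have h2k0 : (0:ℝ) ≤ (2:ℝ)^k * w := mul_nonneg (by positivity) hw0
  have h44 : ((2:ℝ)^k) * ((2:ℝ)^k) = (4:ℝ)^k := by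
    rw [← mul_pow]; norm_num
  have hsq : ((2:ℝ)^k * w)^2 ≤ u * eFn σ s := by
    have hmul : ((4:ℝ)^k * w) * w ≤ eFn σ s * u :=
      mul_le_mul h4k hwu hw0 hE0
    have hexp : ((2:ℝ)^k * w)^2 = ((4:ℝ)^k * w) * w := by
      rw [mul_pow, ← h44]; ring
    rw [hexp]; linarith
  have h5 : (2:ℝ)^k * w ≤ Real.sqrt (u * eFn σ s) := by
    rw [← Real.sqrt_sq h2k0]
    exact Real.sqrt_le_sqrt hsq
  rw [Real.sqrt_mul hu0] at h5
  calc (2:ℝ)^k * w ≤ Real.sqrt u * Real.sqrt (eFn σ s) := h5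
    _ ≤ GammaFn σ s := le_add_of_nonneg_right hs

lemma Gamma_zero (hσ : SontagHyp σ) : GammaFn σ 0 = 0 := by
  rw [GammaFn, hσ.zero 0 le_rfl, thetaFn_zero]
  simp

lemma Gamma_contOn (hσ : SontagHyp σ) : ContinuousOn (GammaFn σ) (Ici 0) := by
  refine ContinuousOn.add (ContinuousOn.mul ?_ ?_) continuousOn_id
  · refine Real.continuous_sqrt.comp_continuousOn ?_
    refine (thetaFn_contOn (σ := σ)).comp hσ.cont fun x hx => ?_
    exact mem_Ici.2 (hσ.nonneg _ _ hx le_rfl)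
  · exact Real.continuous_sqrt.comp_continuousOn (eFn_continuous (σ := σ)).continuousOn

lemma Gamma_strictMonoOn (hσ : SontagHyp σ) : StrictMonoOn (GammaFn σ) (Ici 0) := by
  intro a ha b hb hab
  rw [mem_Ici] at ha hb
  have h1 : Real.sqrt (thetaFn σ (σ a 0)) ≤ Real.sqrt (thetaFn σ (σ b 0)) := by
    apply Real.sqrt_le_sqrt
    refine thetaFn_monoOn hσ (mem_Ici.2 (hσ.nonneg _ _ ha le_rfl))
      (mem_Ici.2 (hσ.nonneg _ _ hb le_rfl)) ?_
    exact hσ.mono 0 le_rfl (mem_Ici.2 ha) (mem_Ici.2 hb) hab.le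
  have h2 : Real.sqrt (eFn σ a) ≤ Real.sqrt (eFn σ b) :=
    Real.sqrt_le_sqrt (eFn_mono hab.le)
  have h3 : Real.sqrt (thetaFn σ (σ a 0)) * Real.sqrt (eFn σ a)
      ≤ Real.sqrt (thetaFn σ (σ b 0)) * Real.sqrt (eFn σ b) :=
    mul_le_mul h1 h2 (Real.sqrt_nonneg _) (Real.sqrt_nonneg _)
  exact add_lt_add_of_le_of_lt h3 hab

lemma Gamma_tendsto : Tendsto (GammaFn σ) atTop atTop := by
  refine tendsto_atTop_mono (fun r => ?_) tendsto_id
  exact le_add_of_nonneg_left (mul_nonneg (Real.sqrt_nonneg _) (Real.sqrt_nonneg _))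
end Sontag

section StateB

variable (E : ℕ → ℝ → ℝ)

structure EHyp (E : ℕ → ℝ → ℝ) : Prop where
  cont : ∀ n, Continuous (E n)
  mono : ∀ n, Monotone (E n)
  nonneg : ∀ n s, 0 ≤ E n s
  zero : ∀ n, E n 0 = 0

def kap2 (s : ℝ) : ℝ := ∑' n : ℕ, E n s * clamp (s - n)

def kapT (s : ℝ) : ℝ := ∑' n : ℕ, (1/2:ℝ)^n * min (E n s) 1

def kapFn (s : ℝ) : ℝ := max s 0 + kap2 E s + kapT E s

def CpFn (n : ℕ) : ℝ := 2^n * (1 + E n (n+1))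

def mubFn (n : ℕ) : ℝ := ((2:ℝ)^n * CpFn E n)⁻¹

variable {E}

lemma kap2_van : ∀ (n : ℕ) (s : ℝ), s ≤ n → E n s * clamp (s - n) = 0 := by
  intro n s hs
  rw [clamp_eq_zero (by linarith), mul_zero]

lemma kap2_cont (hE : EHyp E) : Continuous (kap2 E) := by
  refine locfin_continuous kap2_van fun n => ?_
  exact (hE.cont n).mul (clamp_continuous.comp (by fun_prop))

lemma kap2_mono (hE : EHyp E) : Monotone (kap2 E) := by
  refine locfin_mono kap2_van fun n u v huv => ?_
  exact mul_le_mul (hE.mono n huv) (clamp_mono (by linarith)) (clamp_nonneg _) (hE.nonneg n v)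

lemma kap2_nonneg (hE : EHyp E) (s : ℝ) : 0 ≤ kap2 E s :=
  tsum_nonneg fun n => mul_nonneg (hE.nonneg n s) (clamp_nonneg _)

lemma kap2_zero (hE : EHyp E) : kap2 E 0 = 0 := by
  rw [kap2]
  convert tsum_zero with n
  rcases Nat.eq_zero_or_pos n with h | h
  · rw [h]; simp [hE.zero 0]
  · rw [clamp_eq_zero ?_, mul_zero]
    have : (1:ℝ) ≤ n := by exact_mod_cast h
    linarith

lemma kap2_ge (hE : EHyp E) (n : ℕ) {s : ℝ} (hs : (n:ℝ) + 1 ≤ s) :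
    E n s ≤ kap2 E s := by
  have h1 := locfin_le kap2_van
    (fun m u => mul_nonneg (hE.nonneg m u) (clamp_nonneg _)) n s
  rwa [clamp_eq_one (by linarith), mul_one] at h1

lemma kapT_summable (hE : EHyp E) (s : ℝ) :
    Summable fun n : ℕ => (1/2:ℝ)^n * min (E n s) 1 := by
  refine Summable.of_nonneg_of_le (fun n => ?_) (fun n => ?_)
    (summable_geometric_of_lt_one (by norm_num) (by norm_num : (1/2:ℝ) < 1))
  · exact mul_nonneg (by positivity) (le_min (hE.nonneg n s) one_pos.le)
  · have : min (E n s) 1 ≤ 1 := min_le_right _ _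
    calc (1/2:ℝ)^n * min (E n s) 1 ≤ (1/2:ℝ)^n * 1 :=
        mul_le_mul_of_nonneg_left this (by positivity)
      _ = (1/2:ℝ)^n := mul_one _

lemma kapT_cont (hE : EHyp E) : Continuous (kapT E) := by
  refine continuous_tsum (u := fun n => (1/2:ℝ)^n) (fun n => ?_) ?_ ?_
  · exact continuous_const.mul ((hE.cont n).min continuous_const)
  · exact summable_geometric_of_lt_one (by norm_num) (by norm_num)
  · intro n s
    rw [Real.norm_eq_abs, abs_of_nonneg (mul_nonneg (by positivity)
      (le_min (hE.nonneg n s) one_pos.le))]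
    have : min (E n s) 1 ≤ 1 := min_le_right _ _
    calc (1/2:ℝ)^n * min (E n s) 1 ≤ (1/2:ℝ)^n * 1 :=
        mul_le_mul_of_nonneg_left this (by positivity)
      _ = (1/2:ℝ)^n := mul_one _

lemma kapT_mono (hE : EHyp E) : Monotone (kapT E) := by
  intro s s' hss
  refine Summable.tsum_le_tsum (fun n => ?_) (kapT_summable hE s) (kapT_summable hE s')
  exact mul_le_mul_of_nonneg_left (min_le_min (hE.mono n hss) le_rfl) (by positivity)

lemma kapT_nonneg (hE : EHyp E) (s : ℝ) : 0 ≤ kapT E s :=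
  tsum_nonneg fun n => mul_nonneg (by positivity) (le_min (hE.nonneg n s) one_pos.le)

lemma kapT_zero (hE : EHyp E) : kapT E 0 = 0 := by
  rw [kapT]
  convert tsum_zero with n
  rw [hE.zero n, min_eq_left one_pos.le, mul_zero]

lemma kapT_ge (hE : EHyp E) (n : ℕ) (s : ℝ) :
    (1/2:ℝ)^n * min (E n s) 1 ≤ kapT E s :=
  Summable.le_tsum (kapT_summable hE s) n
    (fun j _ => mul_nonneg (by positivity) (le_min (hE.nonneg j s) one_pos.le))

lemma kapFn_nonneg (hE : EHyp E) (s : ℝ) : 0 ≤ kapFn E s :=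
  add_nonneg (add_nonneg (le_max_right _ _) (kap2_nonneg hE s)) (kapT_nonneg hE s)

lemma kapFn_isKInf (hE : EHyp E) : IsKInf (kapFn E) := by
  refine ⟨?_, ?_, ?_, ?_⟩
  · exact ((((continuous_id.max continuous_const).add (kap2_cont hE)).add
      (kapT_cont hE))).continuousOn
  · intro a ha b hb hab
    rw [mem_Ici] at ha hb
    have h1 : max a 0 < max b 0 := by
      rw [max_eq_left ha, max_eq_left hb]; exact hab
    have h2 : kap2 E a ≤ kap2 E b := kap2_mono hE hab.le
    have h3 : kapT E a ≤ kapT E b := kapT_mono hE hab.le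
    rw [kapFn, kapFn]
    linarith
  · rw [kapFn, kap2_zero hE, kapT_zero hE]; simp
  · refine tendsto_atTop_mono (fun r => ?_) tendsto_id
    simp only [id_eq]
    rw [kapFn]
    linarith [kap2_nonneg hE r, kapT_nonneg hE r, le_max_left r (0:ℝ)]

lemma CpFn_pos (hE : EHyp E) (n : ℕ) : 0 < CpFn E n := by
  have := hE.nonneg n (n+1)
  have h2 : (0:ℝ) < 2^n := by positivity
  rw [CpFn]
  nlinarith

lemma CpFn_ge_one (hE : EHyp E) (n : ℕ) : 1 ≤ CpFn E n := by
  have := hE.nonneg n (n+1)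
  have h2 : (1:ℝ) ≤ 2^n := by
    have h0 : (2:ℝ)^0 ≤ 2^n := pow_le_pow_right₀ (by norm_num) (Nat.zero_le n)
    simpa using h0
  rw [CpFn]
  nlinarith

lemma CpFn_ge_pow (hE : EHyp E) (n : ℕ) : (2:ℝ)^n ≤ CpFn E n := by
  have := hE.nonneg n (n+1)
  have h2 : (0:ℝ) < 2^n := by positivity
  rw [CpFn]
  nlinarith

lemma E_le_kap (hE : EHyp E) (n : ℕ) {s : ℝ} (hs : 0 ≤ s) :
    E n s ≤ CpFn E n * kapFn E s := by
  have hκ : 0 ≤ kapFn E s := kapFn_nonneg hE s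
  have hpow : (2:ℝ)^n * (1/2:ℝ)^n = 1 := by
    rw [← mul_pow]; norm_num
  rcases le_or_gt ((n:ℝ)+1) s with hbig | hsmall
  · have h1 : E n s ≤ kapFn E s := by
      have := kap2_ge hE n hbig
      rw [kapFn]
      have := kapT_nonneg hE s
      have : (0:ℝ) ≤ max s 0 := le_max_right _ _
      linarith [kap2_ge hE n hbig, kapT_nonneg hE s, le_max_right s 0]
    calc E n s ≤ kapFn E s := h1
      _ ≤ CpFn E n * kapFn E s := le_mul_of_one_le_left hκ (CpFn_ge_one hE n)
  · rcases le_or_gt (E n s) 1 with hle | hgt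
    · have h1 : (1/2:ℝ)^n * E n s ≤ kapFn E s := by
        have := kapT_ge hE n s
        rw [min_eq_left hle] at this
        rw [kapFn]
        linarith [kap2_nonneg hE s, le_max_right s 0]
      have h2 : E n s ≤ (2:ℝ)^n * kapFn E s := by
        have h3 := mul_le_mul_of_nonneg_left h1 (by positivity : (0:ℝ) ≤ (2:ℝ)^n)
        calc E n s = (2:ℝ)^n * ((1/2:ℝ)^n * E n s) := by
              rw [← mul_assoc, hpow, one_mul]
          _ ≤ (2:ℝ)^n * kapFn E s := h3
      calc E n s ≤ (2:ℝ)^n * kapFn E s := h2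
        _ ≤ CpFn E n * kapFn E s := mul_le_mul_of_nonneg_right (CpFn_ge_pow hE n) hκ
    · have h1 : (1/2:ℝ)^n ≤ kapFn E s := by
        have := kapT_ge hE n s
        rw [min_eq_right hgt.le, mul_one] at this
        rw [kapFn]
        linarith [kap2_nonneg hE s, le_max_right s 0]
      have h2 : E n s ≤ E n (n+1) := hE.mono n (by push_cast; linarith)
      have h3 : CpFn E n * (1/2:ℝ)^n ≤ CpFn E n * kapFn E s :=
        mul_le_mul_of_nonneg_left h1 (CpFn_pos hE n).le
      have h4 : CpFn E n * (1/2:ℝ)^n = 1 + E n (n+1) := by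
        rw [CpFn]
        calc (2:ℝ)^n * (1 + E n (n+1)) * (1/2:ℝ)^n
            = ((2:ℝ)^n * (1/2:ℝ)^n) * (1 + E n (n+1)) := by ring
          _ = 1 + E n (n+1) := by rw [hpow, one_mul]
      rw [h4] at h3
      linarith
lemma mubFn_pos (hE : EHyp E) (n : ℕ) : 0 < mubFn E n := by
  rw [mubFn]
  have := CpFn_pos hE n
  positivity

lemma mub_bound (hE : EHyp E) (t k : ℕ) {s : ℝ} (hs : 0 ≤ s) :
    (2:ℝ)^k * (mubFn E (t+k) * E (t+k) s) ≤ kapFn E s := by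
  set n := t + k with hn
  have hCp := CpFn_pos hE n
  have hκ := kapFn_nonneg hE s
  have h1 : mubFn E n * E n s ≤ mubFn E n * (CpFn E n * kapFn E s) :=
    mul_le_mul_of_nonneg_left (E_le_kap hE n hs) (mubFn_pos hE n).le
  have h2 : mubFn E n * (CpFn E n * kapFn E s) = ((2:ℝ)^n)⁻¹ * kapFn E s := by
    rw [mubFn, mul_inv]
    field_simp
  have h3 : (2:ℝ)^k * (((2:ℝ)^n)⁻¹ * kapFn E s) ≤ kapFn E s := by
    have hkn : (2:ℝ)^k ≤ (2:ℝ)^n := pow_le_pow_right₀ (by norm_num) (by omega)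
    have h2n : (0:ℝ) < (2:ℝ)^n := by positivity
    have hfrac : (2:ℝ)^k * ((2:ℝ)^n)⁻¹ ≤ 1 := by
      rw [← div_eq_mul_inv, div_le_one h2n]; exact hkn
    calc (2:ℝ)^k * (((2:ℝ)^n)⁻¹ * kapFn E s)
        = ((2:ℝ)^k * ((2:ℝ)^n)⁻¹) * kapFn E s := by ring
      _ ≤ 1 * kapFn E s := mul_le_mul_of_nonneg_right hfrac hκ
      _ = kapFn E s := one_mul _
  calc (2:ℝ)^k * (mubFn E n * E n s) ≤ (2:ℝ)^k * (((2:ℝ)^n)⁻¹ * kapFn E s) := by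
        rw [← h2]
        exact mul_le_mul_of_nonneg_left h1 (by positivity)
    _ ≤ kapFn E s := h3

end StateB

section Glue

def bmax (βa : ℝ → ℝ) : ℕ → ℝ
  | 0 => βa 0
  | n+1 => max (bmax βa n) (βa ((n+1 : ℕ) : ℝ))

lemma bmax_ge (βa : ℝ → ℝ) : ∀ {m n : ℕ}, m ≤ n → βa (m : ℝ) ≤ bmax βa n := by
  intro m n h
  induction n with
  | zero =>
    have : m = 0 := by omega
    subst this
    simp [bmax]
  | succ n ih =>
    rcases Nat.lt_or_ge m (n+1) with h1 | h1
    · exact (ih (by omega)).trans (le_max_left _ _)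
    · have : m = n + 1 := by omega
      subst this
      exact le_max_right _ _

lemma bmax_pos {βa : ℝ → ℝ} (hβ : ∀ r : ℝ, 0 ≤ r → 0 < βa r) (n : ℕ) :
    0 < bmax βa n := by
  induction n with
  | zero => exact hβ 0 le_rfl
  | succ n ih => exact lt_max_of_lt_left ih

def Ebnd (a βa : ℝ → ℝ) : ℕ → ℝ → ℝ
  | 0 => fun s => max s 0
  | n+1 => fun s => max (Ebnd a βa n s) (a (max (bmax βa n * Ebnd a βa n s) 0))

variable {a βa : ℝ → ℝ}

lemma Ebnd_nonneg (n : ℕ) (s : ℝ) : 0 ≤ Ebnd a βa n s := by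
  induction n with
  | zero => exact le_max_right _ _
  | succ n ih => exact ih.trans (le_max_left _ _)

lemma Ebnd_zero (ha0 : a 0 = 0) (n : ℕ) : Ebnd a βa n 0 = 0 := by
  induction n with
  | zero => simp [Ebnd]
  | succ n ih => simp [Ebnd, ih, ha0]

lemma Ebnd_mono_s (ha : MonotoneOn a (Ici 0)) (hβ : ∀ r : ℝ, 0 ≤ r → 0 < βa r)
    (n : ℕ) : Monotone (Ebnd a βa n) := by
  induction n with
  | zero => exact fun u v huv => max_le_max huv le_rfl
  | succ n ih =>
    intro u v huv
    refine max_le_max (ih huv) ?_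
    refine ha (mem_Ici.2 (le_max_right _ _)) (mem_Ici.2 (le_max_right _ _)) ?_
    refine max_le_max ?_ le_rfl
    exact mul_le_mul_of_nonneg_left (ih huv) (bmax_pos hβ n).le

lemma Ebnd_cont (ha : ContinuousOn a (Ici 0)) (n : ℕ) : Continuous (Ebnd a βa n) := by
  induction n with
  | zero => exact continuous_id.max continuous_const
  | succ n ih =>
    refine ih.max ?_
    refine ha.comp_continuous ((continuous_const.mul ih).max continuous_const) ?_
    exact fun x => mem_Ici.2 (le_max_right _ _)

lemma Ebnd_mono_n {m n : ℕ} (h : m ≤ n) (s : ℝ) : Ebnd a βa m s ≤ Ebnd a βa n s := by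
  induction n with
  | zero =>
    have : m = 0 := by omega
    subst this; exact le_rfl
  | succ n ih =>
    rcases Nat.lt_or_ge m (n+1) with h1 | h1
    · exact (ih (by omega)).trans (le_max_left _ _)
    · have : m = n + 1 := by omega
      subst this; exact le_rfl

def traj {X D : Type*} (f : ℕ → D → X → X) (t : ℕ) (x : X) (d : ℕ → D) : ℕ → X
  | 0 => x
  | k+1 => f (t+k) (d k) (traj f t x d k)

lemma traj_le {X D : Type*} [NormedAddCommGroup X] (f : ℕ → D → X → X)
    (ha : MonotoneOn a (Ici 0)) (hβ : ∀ r : ℝ, 0 ≤ r → 0 < βa r)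
    (hf : ∀ (t : ℕ) (d : D) (x : X), ‖f t d x‖ ≤ a (βa t * ‖x‖))
    (t : ℕ) (x : X) (d : ℕ → D) :
    ∀ k, ‖traj f t x d k‖ ≤ Ebnd a βa (t+k) ‖x‖ := by
  intro k
  induction k with
  | zero =>
    have h0 : ‖x‖ ≤ Ebnd a βa 0 ‖x‖ := le_max_left _ _
    exact h0.trans (Ebnd_mono_n (Nat.zero_le _) ‖x‖)
  | succ k ih =>
    have h1 : ‖traj f t x d (k+1)‖ ≤ a (βa ((t+k : ℕ) : ℝ) * ‖traj f t x d k‖) := hf (t+k) (d k) _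
    have hβnn : 0 ≤ βa ((t+k : ℕ) : ℝ) := (hβ _ (Nat.cast_nonneg _)).le
    have harg : βa ((t+k : ℕ):ℝ) * ‖traj f t x d k‖
        ≤ max (bmax βa (t+k) * Ebnd a βa (t+k) ‖x‖) 0 := by
      refine le_max_of_le_left ?_
      exact mul_le_mul (bmax_ge βa le_rfl) ih (norm_nonneg _) (bmax_pos hβ _).le
    have h2 : a (βa ((t+k:ℕ):ℝ) * ‖traj f t x d k‖)
        ≤ a (max (bmax βa (t+k) * Ebnd a βa (t+k) ‖x‖) 0) := by
      refine ha (mem_Ici.2 (mul_nonneg hβnn (norm_nonneg _))) (mem_Ici.2 (le_max_right _ _)) harg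
    have h3 : a (max (bmax βa (t+k) * Ebnd a βa (t+k) ‖x‖) 0) ≤ Ebnd a βa (t+k+1) ‖x‖ :=
      le_max_right _ _
    exact h1.trans (h2.trans h3)

def Vset {X Y D : Type*} [NormedAddCommGroup X] [NormedAddCommGroup Y]
    (f : ℕ → D → X → X) (H : ℕ → X → Y) (θ μf : ℝ → ℝ) (t : ℕ) (x : X) : Set ℝ :=
  { r | ∃ (k : ℕ) (d : ℕ → D), r = 2^k *
      (θ ‖H (t+k) (traj f t x d k)‖ + μf ((t+k : ℕ) : ℝ) * ‖traj f t x d k‖) }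

end Glue

end P22

open P22

/-- Proposition 2.2, (i) ⇒ (ii): converse Lyapunov theorem for non-uniform in time RGAOS. -/
theorem prop22_i_implies_ii {X Y D : Type*}
    [NormedAddCommGroup X] [NormedSpace ℝ X] [NormedAddCommGroup Y] [NormedSpace ℝ Y]
    [Nonempty D]
    (f : ℕ → D → X → X) (H : ℕ → X → Y)
    (hf0 : ∀ (t : ℕ) (d : D), f t d 0 = 0) (hH0 : ∀ t : ℕ, H t 0 = 0)
    (hH1 : ∃ a β : ℝ → ℝ, IsKInf a ∧ IsKPlus β ∧
      ∀ (t : ℕ) (d : D) (x : X), ‖f t d x‖ ≤ a (β t * ‖x‖))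
    (hH2 : ∀ (T : ℕ) (S : Set X), Bornology.IsBounded S → ∀ ε > (0 : ℝ),
      Bornology.IsBounded {y : Y | ∃ t ≤ T, ∃ x ∈ S, y = H t x} ∧
      ∃ δ > (0 : ℝ), ∀ t ≤ T, ∀ x ∈ S, ∀ x₀ ∈ S, ‖x - x₀‖ < δ → ‖H t x - H t x₀‖ < ε)
    (hRGAOS : ∃ (σ : ℝ → ℝ → ℝ) (β : ℝ → ℝ), IsKL σ ∧ IsKPlus β ∧
      ∀ (d : ℕ → D) (t₀ : ℕ) (x₀ : X) (x : ℕ → X),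
        x t₀ = x₀ → (∀ t, t₀ ≤ t → x (t + 1) = f t (d t) (x t)) →
        ∀ t, t₀ ≤ t → ‖H t (x t)‖ ≤ σ (β t₀ * ‖x₀‖) ((t : ℝ) - (t₀ : ℝ))) :
    ∃ (V : ℕ → X → ℝ) (a₁ a₂ β μ : ℝ → ℝ) (lam : ℝ),
      IsKInf a₁ ∧ IsKInf a₂ ∧ IsKPlus β ∧ IsKPlus μ ∧ 0 < lam ∧ lam < 1 ∧
      (∀ (t : ℕ) (x : X), 0 ≤ V t x) ∧
      (∀ (t : ℕ) (x : X), a₁ (‖H t x‖ + μ t * ‖x‖) ≤ V t x ∧ V t x ≤ a₂ (β t * ‖x‖)) ∧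
      (∀ (t : ℕ) (d : D) (x : X), V (t + 1) (f t d x) ≤ lam * V t x) := by
  classical
  obtain ⟨a, βa, haK, hβaK, hf1⟩ := hH1
  obtain ⟨σ, βσ, hKL, hβσK, hR⟩ := hRGAOS
  have hσmono : ∀ t : ℝ, 0 ≤ t → MonotoneOn (fun s => σ s t) (Ici 0) :=
    fun t ht => (hKL.2.1 t ht).1.monotoneOn
  have hσzero : ∀ t : ℝ, 0 ≤ t → σ 0 t = 0 := fun t ht => (hKL.2.1 t ht).2
  have hσ : SontagHyp σ := by
    refine ⟨hσmono, fun s hs => (hKL.2.2 s hs).1, hσzero, ?_, fun s hs => (hKL.2.2 s hs).2, ?_⟩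
    · intro s t hs ht
      have h1 : σ 0 t ≤ σ s t := hσmono t ht (mem_Ici.2 le_rfl) (mem_Ici.2 hs) hs
      rw [hσzero t ht] at h1
      exact h1
    · have hmap : MapsTo (fun s : ℝ => (s, (0:ℝ))) (Ici 0) (Ici 0 ×ˢ Ici 0) :=
        fun s hs => Set.mem_prod.2 ⟨hs, mem_Ici.2 le_rfl⟩
      exact hKL.1.comp (Continuous.continuousOn (by fun_prop)) hmap
  obtain ⟨ha_cont, ha_smono, ha_zero, _⟩ := haK
  have ha_mono : MonotoneOn a (Ici 0) := ha_smono.monotoneOn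
  have hβa_pos : ∀ r : ℝ, 0 ≤ r → 0 < βa r := hβaK.2
  set E : ℕ → ℝ → ℝ := Ebnd a βa with hE_def
  have hE : EHyp E :=
    ⟨fun n => Ebnd_cont ha_cont n, fun n => Ebnd_mono_s ha_mono hβa_pos n,
      fun n s => Ebnd_nonneg n s, fun n => Ebnd_zero ha_zero n⟩
  obtain ⟨μ, hμK, hμle⟩ := exists_kplus_le (mubFn E) (mubFn_pos hE)
  have hμpos : ∀ n : ℕ, 0 < μ n := fun n => hμK.2 _ (Nat.cast_nonneg n)
  set θ : ℝ → ℝ := thetaFn σ with hθ_def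
  set Γ : ℝ → ℝ := GammaFn σ with hΓ_def
  set κ : ℝ → ℝ := kapFn E with hκ_def
  set β : ℝ → ℝ := fun r => max (βσ r) 1 with hβ_def
  set a₁ : ℝ → ℝ := fun r => min (θ (r/2)) (r/2) with ha₁_def
  set a₂ : ℝ → ℝ := fun r => Γ r + κ r with ha₂_def
  set V : ℕ → X → ℝ := fun t x => sSup (Vset f H θ μ t x) with hV_def
  have hθ_mono : MonotoneOn θ (Ici 0) := thetaFn_monoOn hσ
  have hθ_nonneg : ∀ r : ℝ, 0 ≤ r → 0 ≤ θ r := fun r hr => thetaFn_nonneg hr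
  have hβσ_pos : ∀ t : ℕ, 0 < βσ t := fun t => hβσK.2 _ (Nat.cast_nonneg t)
  -- RGAOS along trajectories
  have hHbound : ∀ (t k : ℕ) (x : X) (d : ℕ → D),
      ‖H (t+k) (traj f t x d k)‖ ≤ σ (βσ t * ‖x‖) k := by
    intro t k x d
    have hstep : ∀ τ, t ≤ τ → (fun τ => traj f t x d (τ - t)) (τ + 1)
        = f τ ((fun τ => d (τ - t)) τ) ((fun τ => traj f t x d (τ - t)) τ) := by
      intro τ hτ
      have h1 : τ + 1 - t = (τ - t) + 1 := by omega
      have h2 : t + (τ - t) = τ := by omega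
      dsimp only
      rw [h1]
      calc traj f t x d ((τ - t) + 1)
          = f (t + (τ - t)) (d (τ - t)) (traj f t x d (τ - t)) := rfl
        _ = f τ (d (τ - t)) (traj f t x d (τ - t)) := by rw [h2]
    have happ := hR (fun τ => d (τ - t)) t x (fun τ => traj f t x d (τ - t))
      (by simp [traj]) hstep (t+k) (Nat.le_add_right t k)
    have hk : t + k - t = k := by omega
    have harith : ((t+k : ℕ):ℝ) - (t:ℝ) = (k:ℝ) := by push_cast; ring
    rw [harith] at happ
    rwa [hk] at happ
  have hstate : ∀ (t k : ℕ) (x : X) (d : ℕ → D), ‖traj f t x d k‖ ≤ E (t+k) ‖x‖ :=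
    fun t k x d => traj_le f ha_mono hβa_pos hf1 t x d k
  -- bound on every element of Vset
  have helem : ∀ (t : ℕ) (x : X), ∀ r ∈ Vset f H θ μ t x,
      r ≤ Γ (βσ t * ‖x‖) + κ ‖x‖ := by
    rintro t x r ⟨k, d, rfl⟩
    have hs0 : 0 ≤ βσ t * ‖x‖ := mul_nonneg (hβσ_pos t).le (norm_nonneg x)
    have hHnn : 0 ≤ ‖H (t+k) (traj f t x d k)‖ := norm_nonneg _
    have hσnn : 0 ≤ σ (βσ t * ‖x‖) k := hσ.nonneg _ _ hs0 (Nat.cast_nonneg k)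
    have hθ1 : θ ‖H (t+k) (traj f t x d k)‖ ≤ θ (σ (βσ t * ‖x‖) k) :=
      hθ_mono (mem_Ici.2 hHnn) (mem_Ici.2 hσnn) (hHbound t k x d)
    have hpart1 : 2^k * θ ‖H (t+k) (traj f t x d k)‖ ≤ Γ (βσ t * ‖x‖) :=
      (mul_le_mul_of_nonneg_left hθ1 (by positivity)).trans (Gamma_bound hσ hs0 k)
    have hμ1 : μ ((t+k : ℕ):ℝ) * ‖traj f t x d k‖ ≤ mubFn E (t+k) * E (t+k) ‖x‖ :=
      mul_le_mul (hμle (t+k)) (hstate t k x d) (norm_nonneg _) (mubFn_pos hE _).le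
    have hpart2 : 2^k * (μ ((t+k:ℕ):ℝ) * ‖traj f t x d k‖) ≤ κ ‖x‖ :=
      (mul_le_mul_of_nonneg_left hμ1 (by positivity)).trans
        (mub_bound hE t k (norm_nonneg x))
    calc (2:ℝ)^k * (θ ‖H (t+k) (traj f t x d k)‖ + μ ((t+k:ℕ):ℝ) * ‖traj f t x d k‖)
        = 2^k * θ ‖H (t+k) (traj f t x d k)‖
          + 2^k * (μ ((t+k:ℕ):ℝ) * ‖traj f t x d k‖) := by ring
      _ ≤ Γ (βσ t * ‖x‖) + κ ‖x‖ := add_le_add hpart1 hpart2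
  have hVbdd : ∀ (t : ℕ) (x : X), BddAbove (Vset f H θ μ t x) :=
    fun t x => ⟨Γ (βσ t * ‖x‖) + κ ‖x‖, fun r hr => helem t x r hr⟩
  have hVmem0 : ∀ (t : ℕ) (x : X), θ ‖H t x‖ + μ t * ‖x‖ ∈ Vset f H θ μ t x := by
    intro t x
    refine ⟨0, fun _ => Classical.arbitrary D, ?_⟩
    show θ ‖H t x‖ + μ t * ‖x‖ = 2^0 *
      (θ ‖H (t+0) (traj f t x _ 0)‖ + μ ((t+0 : ℕ):ℝ) * ‖traj f t x _ 0‖)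
    norm_num [traj]
  have hVne : ∀ (t : ℕ) (x : X), (Vset f H θ μ t x).Nonempty :=
    fun t x => ⟨_, hVmem0 t x⟩
  have hVlow : ∀ (t : ℕ) (x : X), θ ‖H t x‖ + μ t * ‖x‖ ≤ V t x :=
    fun t x => le_csSup (hVbdd t x) (hVmem0 t x)
  have hVnonneg : ∀ (t : ℕ) (x : X), 0 ≤ V t x := by
    intro t x
    refine le_trans ?_ (hVlow t x)
    exact add_nonneg (hθ_nonneg _ (norm_nonneg _))
      (mul_nonneg (hμpos t).le (norm_nonneg _))
  -- IsKInf a₁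
  have hhalf_map : MapsTo (fun r : ℝ => r/2) (Ici 0) (Ici 0) :=
    fun r hr => mem_Ici.2 (by rw [mem_Ici] at hr; linarith)
  have ha₁K : IsKInf a₁ := by
    refine ⟨?_, ?_, ?_, ?_⟩
    · refine ContinuousOn.inf ?_ ((continuous_id.div_const 2).continuousOn)
      exact (thetaFn_contOn (σ := σ)).comp (continuous_id.div_const 2).continuousOn hhalf_map
    · intro u hu v hv huv
      rw [mem_Ici] at hu hv
      refine lt_min ?_ ?_
      · refine (min_le_left _ _).trans_lt ?_
        exact thetaFn_strictMonoOn hσ (mem_Ici.2 (by linarith)) (mem_Ici.2 (by linarith))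
          (by linarith)
      · exact (min_le_right _ _).trans_lt (by linarith)
    · have h0 : thetaFn σ 0 = 0 := thetaFn_zero
      simp only [ha₁_def, hθ_def, h0]
      norm_num
      exact le_of_eq h0.symm
    · have hhalf : Tendsto (fun r : ℝ => r/2) atTop atTop :=
        tendsto_id.atTop_div_const (by norm_num)
      have h1 : Tendsto (fun r : ℝ => θ (r/2)) atTop atTop :=
        (thetaFn_tendsto hσ).comp hhalf
      rw [tendsto_atTop]
      intro b
      filter_upwards [tendsto_atTop.1 h1 b, tendsto_atTop.1 hhalf b] with r h2 h3
      exact le_min h2 h3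
  -- IsKInf a₂
  have ha₂K : IsKInf a₂ := by
    refine ⟨(Gamma_contOn hσ).add (kapFn_isKInf hE).1, ?_, ?_, ?_⟩
    · intro u hu v hv huv
      exact add_lt_add_of_lt_of_le (Gamma_strictMonoOn hσ hu hv huv)
        ((kapFn_isKInf hE).2.1 hu hv huv).le
    · show Γ 0 + κ 0 = 0
      rw [hΓ_def, hκ_def, Gamma_zero hσ, (kapFn_isKInf hE).2.2.1, add_zero]
    · refine tendsto_atTop_mono (fun r => ?_) (Gamma_tendsto (σ := σ))
      exact le_add_of_nonneg_right (kapFn_nonneg hE r)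
  have hβK : IsKPlus β := by
    refine ⟨ContinuousOn.sup hβσK.1 continuousOn_const, fun t ht => lt_max_of_lt_right one_pos⟩
  -- bounds
  have hbounds : ∀ (t : ℕ) (x : X),
      a₁ (‖H t x‖ + μ t * ‖x‖) ≤ V t x ∧ V t x ≤ a₂ (β t * ‖x‖) := by
    intro t x
    constructor
    · refine le_trans ?_ (hVlow t x)
      set u : ℝ := ‖H t x‖ with hu_def
      set v : ℝ := μ t * ‖x‖ with hv_def
      have hu : 0 ≤ u := norm_nonneg _
      have hv : 0 ≤ v := mul_nonneg (hμpos t).le (norm_nonneg _)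
      rcases le_total v u with hvu | huv
      · have h1 : θ ((u+v)/2) ≤ θ u :=
          hθ_mono (mem_Ici.2 (by linarith)) (mem_Ici.2 hu) (by linarith)
        have h2 : a₁ (u + v) ≤ θ ((u+v)/2) := min_le_left _ _
        have h3 : 0 ≤ v := hv
        linarith
      · have h2 : a₁ (u + v) ≤ (u+v)/2 := min_le_right _ _
        have h3 : 0 ≤ θ u := hθ_nonneg u hu
        linarith
    · refine csSup_le (hVne t x) fun r hr => ?_
      refine (helem t x r hr).trans ?_
      have hβ1 : (1:ℝ) ≤ β t := le_max_right _ _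
      have hββ : βσ t ≤ β t := le_max_left _ _
      have hx0 : (0:ℝ) ≤ ‖x‖ := norm_nonneg x
      have hΓle : Γ (βσ t * ‖x‖) ≤ Γ (β t * ‖x‖) := by
        refine (Gamma_strictMonoOn hσ).monotoneOn
          (mem_Ici.2 (mul_nonneg (hβσ_pos t).le hx0))
          (mem_Ici.2 (mul_nonneg (by linarith) hx0))
          (mul_le_mul_of_nonneg_right hββ hx0)
      have hκle : κ ‖x‖ ≤ κ (β t * ‖x‖) := by
        refine ((kapFn_isKInf hE).2.1).monotoneOn (mem_Ici.2 hx0)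
          (mem_Ici.2 (mul_nonneg (by linarith) hx0)) ?_
        exact le_mul_of_one_le_left hx0 hβ1
      rw [ha₂_def]
      dsimp only
      linarith
  -- decrease
  have hdec : ∀ (t : ℕ) (d : D) (x : X), V (t+1) (f t d x) ≤ (1/2 : ℝ) * V t x := by
    intro t d x
    refine csSup_le (hVne _ _) fun r hr => ?_
    obtain ⟨k, d', rfl⟩ := hr
    set d'' : ℕ → D := fun j => if j = 0 then d else d' (j-1) with hd''_def
    have hshift : ∀ k, traj f (t+1) (f t d x) d' k = traj f t x d'' (k+1) := by
      intro k
      induction k with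
      | zero =>
        show f t d x = f (t+0) (d'' 0) (traj f t x d'' 0)
        simp [hd''_def, traj]
      | succ k ih =>
        show f ((t+1)+k) (d' k) (traj f (t+1) (f t d x) d' k)
          = f (t+(k+1)) (d'' (k+1)) (traj f t x d'' (k+1))
        have h1 : (t+1)+k = t+(k+1) := by omega
        have h2 : d'' (k+1) = d' k := by simp [hd''_def]
        rw [ih, h1, h2]
    set w := traj f (t+1) (f t d x) d' k with hw_def
    set z : ℝ := θ ‖H ((t+1)+k) w‖ + μ (((t+1)+k : ℕ):ℝ) * ‖w‖ with hz_def
    have hidx : (t+1)+k = t+(k+1) := by omega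
    have hmem : 2 * (2^k * z) ∈ Vset f H θ μ t x := by
      refine ⟨k+1, d'', ?_⟩
      have hww : traj f t x d'' (k+1) = w := (hshift k).symm
      rw [hww, ← hidx, ← hz_def]
      ring
    have h2r : 2 * (2^k * z) ≤ V t x := le_csSup (hVbdd t x) hmem
    calc (2:ℝ)^k * z = 1/2 * (2 * (2^k * z)) := by ring
      _ ≤ 1/2 * V t x := mul_le_mul_of_nonneg_left h2r (by norm_num)
  refine ⟨V, a₁, a₂, β, μ, 1/2, ha₁K, ha₂K, hβK, hμK, by norm_num, by norm_num,
    hVnonneg, hbounds, hdec⟩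
end
end

section
/- Proposition 2.2, (iii) ⇒ (i) (Lyapunov sufficiency for RGAOS). Suppose system (1.1) satisfies hypotheses (H1) and (H2), and suppose there exist a function V : ℕ × X → [0,∞), functions a₁, a₂, a₃ ∈ K∞ with a₃(s) ≤ s for all s ≥ 0, a function β ∈ K⁺ and a continuous function q : [0,∞) → [0,∞) with q(t) → 0 as t → ∞, such that: a₁(‖H(t,x)‖_Y) ≤ V(t,x) ≤ a₂(β(t)‖x‖_X) for all (t,x) ∈ ℕ × X, and V(t+1, f(t,d,x)) ≤ V(t,x) − a₃(V(t,x)) + q(t) for all (t,x,d) ∈ ℕ × X × D. Then system (1.1) is non-uniformly in time RGAOS. -/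
open Filter Topology Bornology Set

noncomputable section

open MeasureTheory intervalIntegral

namespace KLC

variable (g : ℝ → ℝ → ℝ)

def Af (x τ : ℝ) : ℝ := ∫ w in (τ-1)..τ, g x w

def Th (s τ : ℝ) : ℝ := s⁻¹ * ∫ x in s..(2*s), Af g x τ

def Sg (s τ : ℝ) : ℝ := s * Real.exp (-τ) + Th g s τ

variable {g}
variable (hg1 : ∀ s u, 0 ≤ g s u) (hg2 : ∀ u, Monotone fun s => g s u)
  (hg3 : ∀ s, Antitone fun u => g s u)

section basic

include hg3 in
lemma gint (x a b : ℝ) : IntervalIntegrable (g x) MeasureTheory.volume a b :=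
  (hg3 x).intervalIntegrable

include hg1 in
lemma Af_nonneg (x τ : ℝ) : 0 ≤ Af g x τ :=
  intervalIntegral.integral_nonneg (by linarith) fun u _ => hg1 x u

include hg2 hg3 in
lemma Af_mono (τ : ℝ) : Monotone fun x => Af g x τ := fun x₁ x₂ h =>
  integral_mono_on (by linarith) (gint hg3 x₁ _ _) (gint hg3 x₂ _ _)
    (fun w _ => hg2 w h)

include hg3 in
lemma Af_anti (x : ℝ) : Antitone fun τ => Af g x τ := by
  intro τ₁ τ₂ h
  show Af g x τ₂ ≤ Af g x τ₁
  have hanti : Antitone (fun w => g x (w + (τ₂ - τ₁))) := fun u v huv => hg3 x (by linarith)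
  have key : Af g x τ₂ = ∫ w in (τ₁-1)..τ₁, g x (w + (τ₂ - τ₁)) := by
    rw [intervalIntegral.integral_comp_add_right (fun w => g x w) (τ₂ - τ₁)]
    simp only [Af]
    congr 1 <;> ring
  rw [key]
  exact integral_mono_on (by linarith) hanti.intervalIntegrable (gint hg3 x _ _)
    (fun w _ => hg3 x (by linarith : w ≤ w + (τ₂ - τ₁)))

include hg3 in
lemma Af_le (x τ : ℝ) : Af g x τ ≤ g x (τ - 1) := by
  have h1 : Af g x τ ≤ ∫ _w in (τ-1)..τ, g x (τ-1) :=
    integral_mono_on (by linarith) (gint hg3 x _ _) intervalIntegrable_const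
      (fun w hw => hg3 x hw.1)
  have h2 : (∫ _w in (τ-1)..τ, g x (τ-1)) = g x (τ-1) := by
    rw [intervalIntegral.integral_const]
    have : τ - (τ - 1) = 1 := by ring
    rw [this, one_smul]
  linarith

include hg2 hg3 in
lemma Af_ge (s x τ : ℝ) (hsx : s ≤ x) : g s τ ≤ Af g x τ := by
  have h1 : (∫ _w in (τ-1)..τ, g s τ) ≤ Af g x τ :=
    integral_mono_on (by linarith) intervalIntegrable_const (gint hg3 x _ _)
      (fun w hw => le_trans (hg2 τ hsx) (hg3 x hw.2))
  have h2 : (∫ _w in (τ-1)..τ, g s τ) = g s τ := by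
    rw [intervalIntegral.integral_const]
    have : τ - (τ - 1) = 1 := by ring
    rw [this, one_smul]
  linarith

include hg2 hg3 in
lemma Af_int (τ a b : ℝ) : IntervalIntegrable (fun x => Af g x τ) MeasureTheory.volume a b :=
  (Af_mono hg2 hg3 τ).intervalIntegrable

include hg1 hg3 in
lemma Af_lip_le (x c τ τ' : ℝ) (h : τ' ≤ τ) (hc' : c ≤ τ' - 1) :
    |Af g x τ - Af g x τ'| ≤ 2 * g x c * (τ - τ') := by
  have i1 : IntervalIntegrable (g x) MeasureTheory.volume (τ'-1) τ' := gint hg3 x _ _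
  have i2 : IntervalIntegrable (g x) MeasureTheory.volume τ' τ := gint hg3 x _ _
  have i3 : IntervalIntegrable (g x) MeasureTheory.volume (τ'-1) (τ-1) := gint hg3 x _ _
  have i4 : IntervalIntegrable (g x) MeasureTheory.volume (τ-1) τ := gint hg3 x _ _
  have e1 : (∫ w in (τ'-1)..τ', g x w) + ∫ w in τ'..τ, g x w = ∫ w in (τ'-1)..τ, g x w :=
    integral_add_adjacent_intervals i1 i2
  have e2 : (∫ w in (τ'-1)..(τ-1), g x w) + ∫ w in (τ-1)..τ, g x w = ∫ w in (τ'-1)..τ, g x w :=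
    integral_add_adjacent_intervals i3 i4
  have key : Af g x τ - Af g x τ' = (∫ w in τ'..τ, g x w) - ∫ w in (τ'-1)..(τ-1), g x w := by
    simp only [Af]; linarith
  have b1 : |∫ w in τ'..τ, g x w| ≤ g x c * (τ - τ') := by
    have hb := intervalIntegral.norm_integral_le_of_norm_le_const (a := τ') (b := τ)
      (C := g x c) (f := g x) (fun w hw => by
        rw [Set.uIoc_of_le h] at hw
        rw [Real.norm_eq_abs, abs_of_nonneg (hg1 x w)]
        exact hg3 x (by linarith [hw.1]))
    rw [Real.norm_eq_abs, abs_of_nonneg (by linarith : (0:ℝ) ≤ τ - τ')] at hb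
    exact hb
  have b2 : |∫ w in (τ'-1)..(τ-1), g x w| ≤ g x c * (τ - τ') := by
    have hb := intervalIntegral.norm_integral_le_of_norm_le_const (a := τ'-1) (b := τ-1)
      (C := g x c) (f := g x) (fun w hw => by
        rw [Set.uIoc_of_le (by linarith : τ' - 1 ≤ τ - 1)] at hw
        rw [Real.norm_eq_abs, abs_of_nonneg (hg1 x w)]
        exact hg3 x (by linarith [hw.1]))
    rw [Real.norm_eq_abs] at hb
    have : |τ - 1 - (τ' - 1)| = τ - τ' := by
      rw [abs_of_nonneg (by linarith)]; ring
    rw [this] at hb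
    exact hb
  calc |Af g x τ - Af g x τ'| = |(∫ w in τ'..τ, g x w) - ∫ w in (τ'-1)..(τ-1), g x w| := by
        rw [key]
    _ ≤ |∫ w in τ'..τ, g x w| + |∫ w in (τ'-1)..(τ-1), g x w| := abs_sub _ _
    _ ≤ 2 * g x c * (τ - τ') := by linarith

include hg1 hg3 in
lemma Af_lip (x c τ τ' : ℝ) (hc : c ≤ τ - 1) (hc' : c ≤ τ' - 1) :
    |Af g x τ - Af g x τ'| ≤ 2 * g x c * |τ - τ'| := by
  rcases le_total τ' τ with h | h
  · rw [abs_of_nonneg (by linarith : (0:ℝ) ≤ τ - τ')]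
    exact Af_lip_le hg1 hg3 x c τ τ' h hc'
  · rw [abs_sub_comm, abs_sub_comm τ τ']
    rw [abs_of_nonneg (by linarith : (0:ℝ) ≤ τ' - τ)]
    exact Af_lip_le hg1 hg3 x c τ' τ h hc

end basic

section theta

lemma Th_zero (τ : ℝ) : Th g 0 τ = 0 := by simp [Th]

include hg1 in
lemma Th_nonneg (s τ : ℝ) (hs : 0 ≤ s) : 0 ≤ Th g s τ :=
  mul_nonneg (inv_nonneg.2 hs)
    (intervalIntegral.integral_nonneg (by linarith) fun x _ => Af_nonneg hg1 x τ)

lemma Th_eq (s τ : ℝ) (hs : 0 < s) : Th g s τ = ∫ v in (1:ℝ)..2, Af g (s*v) τ := by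
  rw [intervalIntegral.integral_comp_mul_left (fun x => Af g x τ) hs.ne']
  simp only [Th, smul_eq_mul, mul_one]
  congr 2
  ring

include hg1 hg2 hg3 in
lemma Th_monoOn (τ : ℝ) : MonotoneOn (fun s => Th g s τ) (Ici 0) := by
  intro s₁ hs₁ s₂ hs₂ h
  show Th g s₁ τ ≤ Th g s₂ τ
  rcases eq_or_lt_of_le (Set.mem_Ici.1 hs₁ : (0:ℝ) ≤ s₁) with h0 | h0
  · rw [show s₁ = 0 from h0.symm, Th_zero]
    exact Th_nonneg hg1 s₂ τ hs₂
  · have hs₂' : 0 < s₂ := lt_of_lt_of_le h0 h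
    rw [Th_eq s₁ τ h0, Th_eq s₂ τ hs₂']
    have int1 : IntervalIntegrable (fun v => Af g (s₁*v) τ) MeasureTheory.volume 1 2 := by
      apply MonotoneOn.intervalIntegrable
      intro u hu v hv huv
      exact Af_mono hg2 hg3 τ (by nlinarith [h0.le])
    have int2 : IntervalIntegrable (fun v => Af g (s₂*v) τ) MeasureTheory.volume 1 2 := by
      apply MonotoneOn.intervalIntegrable
      intro u hu v hv huv
      exact Af_mono hg2 hg3 τ (by nlinarith [hs₂'.le])
    exact integral_mono_on (by norm_num) int1 int2
      (fun v hv => Af_mono hg2 hg3 τ (by nlinarith [hv.1]))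

include hg2 hg3 in
lemma Th_le (s τ : ℝ) (hs : 0 < s) : Th g s τ ≤ g (2*s) (τ-1) := by
  have h1 : (∫ x in s..(2*s), Af g x τ) ≤ ∫ _x in s..(2*s), g (2*s) (τ-1) :=
    integral_mono_on (by linarith) (Af_int hg2 hg3 τ _ _) intervalIntegrable_const
      (fun x hx => le_trans (Af_le hg3 x τ) (hg2 (τ-1) hx.2))
  have h2 : (∫ _x in s..(2*s), g (2*s) (τ-1)) = s * g (2*s) (τ-1) := by
    rw [intervalIntegral.integral_const]
    have : 2*s - s = s := by ring
    rw [this, smul_eq_mul]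
  rw [h2] at h1
  calc Th g s τ ≤ s⁻¹ * (s * g (2*s) (τ-1)) :=
        mul_le_mul_of_nonneg_left h1 (inv_nonneg.2 hs.le)
    _ = g (2*s) (τ-1) := by field_simp

include hg2 hg3 in
lemma Th_ge (s τ : ℝ) (hs : 0 < s) : g s τ ≤ Th g s τ := by
  have h1 : (∫ _x in s..(2*s), g s τ) ≤ ∫ x in s..(2*s), Af g x τ :=
    integral_mono_on (by linarith) intervalIntegrable_const (Af_int hg2 hg3 τ _ _)
      (fun x hx => Af_ge hg2 hg3 s x τ hx.1)
  have h2 : (∫ _x in s..(2*s), g s τ) = s * g s τ := by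
    rw [intervalIntegral.integral_const]
    have : 2*s - s = s := by ring
    rw [this, smul_eq_mul]
  rw [h2] at h1
  calc g s τ = s⁻¹ * (s * g s τ) := by field_simp
    _ ≤ Th g s τ := mul_le_mul_of_nonneg_left h1 (inv_nonneg.2 hs.le)

include hg2 hg3 in
lemma Th_anti (s : ℝ) (hs : 0 ≤ s) : Antitone (fun τ => Th g s τ) := by
  intro τ₁ τ₂ h
  exact mul_le_mul_of_nonneg_left
    (integral_mono_on (by linarith) (Af_int hg2 hg3 τ₂ _ _) (Af_int hg2 hg3 τ₁ _ _)
      (fun x _ => Af_anti hg3 x h))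
    (inv_nonneg.2 hs)

include hg1 hg2 hg3 in
lemma Th_tendsto (s : ℝ) (hs : 0 ≤ s)
    (hlim : Tendsto (fun u => g (2*s) u) atTop (nhds 0)) :
    Tendsto (fun τ => Th g s τ) atTop (nhds 0) := by
  rcases eq_or_lt_of_le hs with h0 | h0
  · have : (fun τ => Th g s τ) = fun _ => (0:ℝ) := by
      funext τ; rw [← h0, Th_zero]
    rw [this]; exact tendsto_const_nhds
  · have hup : Tendsto (fun τ : ℝ => g (2*s) (τ-1)) atTop (nhds 0) :=
      hlim.comp (tendsto_atTop_add_const_right atTop (-1) tendsto_id)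
    exact tendsto_of_tendsto_of_tendsto_of_le_of_le tendsto_const_nhds hup
      (fun τ => Th_nonneg hg1 s τ hs) (fun τ => Th_le hg2 hg3 s τ h0)

include hg1 hg2 hg3 in
lemma Th_lip (s c τ τ' : ℝ) (hs : 0 < s) (hc : c ≤ τ - 1) (hc' : c ≤ τ' - 1) :
    |Th g s τ - Th g s τ'| ≤ 2 * g (2*s) c * |τ - τ'| := by
  have hsub : Th g s τ - Th g s τ' = s⁻¹ * ∫ x in s..(2*s), (Af g x τ - Af g x τ') := by
    rw [intervalIntegral.integral_sub (Af_int hg2 hg3 τ _ _) (Af_int hg2 hg3 τ' _ _)]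
    simp only [Th]; ring
  have hbnd : ‖∫ x in s..(2*s), (Af g x τ - Af g x τ')‖ ≤
      (2 * g (2*s) c * |τ - τ'|) * |2*s - s| := by
    apply intervalIntegral.norm_integral_le_of_norm_le_const
    intro x hx
    rw [Set.uIoc_of_le (by linarith : s ≤ 2*s)] at hx
    rw [Real.norm_eq_abs]
    calc |Af g x τ - Af g x τ'| ≤ 2 * g x c * |τ - τ'| := Af_lip hg1 hg3 x c τ τ' hc hc'
      _ ≤ 2 * g (2*s) c * |τ - τ'| := by
          have := hg2 c hx.2
          have habs : (0:ℝ) ≤ |τ - τ'| := abs_nonneg _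
          nlinarith
  rw [hsub, abs_mul, abs_of_nonneg (inv_nonneg.2 hs.le)]
  rw [Real.norm_eq_abs] at hbnd
  have h2 : |2*s - s| = s := by rw [abs_of_nonneg (by linarith)]; ring
  rw [h2] at hbnd
  calc s⁻¹ * |∫ x in s..(2*s), (Af g x τ - Af g x τ')| ≤
        s⁻¹ * ((2 * g (2*s) c * |τ - τ'|) * s) :=
        mul_le_mul_of_nonneg_left hbnd (inv_nonneg.2 hs.le)
    _ = 2 * g (2*s) c * |τ - τ'| := by field_simp

include hg2 hg3 in
lemma Th_contS (τ₀ s₀ : ℝ) (hs₀ : s₀ ≠ 0) : ContinuousAt (fun s => Th g s τ₀) s₀ := by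
  have hP : Continuous (fun y => ∫ x in (0:ℝ)..y, Af g x τ₀) :=
    intervalIntegral.continuous_primitive (fun a b => Af_int hg2 hg3 τ₀ a b) 0
  have heq : (fun s => Th g s τ₀) = fun s =>
      s⁻¹ * ((∫ x in (0:ℝ)..(2*s), Af g x τ₀) - ∫ x in (0:ℝ)..s, Af g x τ₀) := by
    funext s
    rw [integral_interval_sub_left (Af_int hg2 hg3 τ₀ 0 (2*s)) (Af_int hg2 hg3 τ₀ 0 s)]
    rfl
  rw [heq]
  exact (continuousAt_inv₀ hs₀).mul
    (((hP.comp (continuous_const.mul continuous_id)).sub hP).continuousAt)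

end theta

section cont

include hg1 hg2 hg3 in
lemma Th_contAt (s₀ τ₀ : ℝ) (hs : 0 < s₀) :
    ContinuousAt (fun p : ℝ × ℝ => Th g p.1 p.2) (s₀, τ₀) := by
  rw [Metric.continuousAt_iff]
  intro ε hε
  have h1 := Th_contS hg2 hg3 τ₀ s₀ hs.ne'
  rw [Metric.continuousAt_iff] at h1
  obtain ⟨δ₁, hδ₁, h1⟩ := h1 (ε/2) (by linarith)
  set K := 2 * g (2*s₀+2) (τ₀-2) with hKdef
  have hK : 0 ≤ K := by
    have := hg1 (2*s₀+2) (τ₀-2); rw [hKdef]; linarith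
  have hKp : 0 < K + 1 := by linarith
  refine ⟨min (min δ₁ (s₀/2)) (min 1 (ε/(2*(K+1)))), by positivity, ?_⟩
  intro p hp
  obtain ⟨s, τ⟩ := p
  rw [Prod.dist_eq, max_lt_iff] at hp
  obtain ⟨hps, hpτ⟩ := hp
  rw [Real.dist_eq] at hps hpτ
  have hs1 : |s - s₀| < δ₁ := lt_of_lt_of_le hps ((min_le_left _ _).trans (min_le_left _ _))
  have hs2 : |s - s₀| < s₀/2 := lt_of_lt_of_le hps ((min_le_left _ _).trans (min_le_right _ _))
  have ht1 : |τ - τ₀| < 1 := lt_of_lt_of_le hpτ ((min_le_right _ _).trans (min_le_left _ _))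
  have ht2 : |τ - τ₀| < ε/(2*(K+1)) :=
    lt_of_lt_of_le hpτ ((min_le_right _ _).trans (min_le_right _ _))
  have hs3 : |s - s₀| < 1 := lt_of_lt_of_le hps ((min_le_right _ _).trans (min_le_left _ _))
  obtain ⟨hs3a, hs3b⟩ := abs_lt.1 hs3
  obtain ⟨hs2a, hs2b⟩ := abs_lt.1 hs2
  obtain ⟨ht1a, ht1b⟩ := abs_lt.1 ht1
  have hspos : 0 < s := by linarith
  have lip : |Th g s τ - Th g s τ₀| ≤ K * |τ - τ₀| := by
    have hc1 : τ₀ - 2 ≤ τ - 1 := by linarith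
    have hc2 : τ₀ - 2 ≤ τ₀ - 1 := by linarith
    calc |Th g s τ - Th g s τ₀| ≤ 2 * g (2*s) (τ₀-2) * |τ - τ₀| :=
          Th_lip hg1 hg2 hg3 s (τ₀-2) τ τ₀ hspos hc1 hc2
      _ ≤ K * |τ - τ₀| := by
          have hmono := hg2 (τ₀-2) (show 2*s ≤ 2*s₀+2 by linarith)
          have habs : (0:ℝ) ≤ |τ - τ₀| := abs_nonneg _
          rw [hKdef]
          nlinarith
  have hsm : K * |τ - τ₀| < ε/2 := by
    have e : (K+1) * (ε/(2*(K+1))) = ε/2 := by field_simp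
    calc K * |τ - τ₀| ≤ K * (ε/(2*(K+1))) := mul_le_mul_of_nonneg_left ht2.le hK
      _ < (K+1) * (ε/(2*(K+1))) := by
          apply mul_lt_mul_of_pos_right (by linarith) (by positivity)
      _ = ε/2 := e
  have h2 : dist (Th g s τ₀) (Th g s₀ τ₀) < ε/2 := h1 (by rw [Real.dist_eq]; exact hs1)
  have tri : dist (Th g s τ) (Th g s₀ τ₀) ≤
      |Th g s τ - Th g s τ₀| + dist (Th g s τ₀) (Th g s₀ τ₀) := by
    have := dist_triangle (Th g s τ) (Th g s τ₀) (Th g s₀ τ₀)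
    rw [Real.dist_eq (Th g s τ) (Th g s τ₀)] at this
    exact this
  show dist (Th g s τ) (Th g s₀ τ₀) < ε
  calc dist (Th g s τ) (Th g s₀ τ₀) ≤
        |Th g s τ - Th g s τ₀| + dist (Th g s τ₀) (Th g s₀ τ₀) := tri
    _ < K * |τ - τ₀| + ε/2 + 0 := by
        have := lt_of_le_of_lt (le_refl (0:ℝ)) (by linarith : (0:ℝ) < 1)
        linarith [lip, h2]
    _ < ε := by linarith [hsm]

include hg1 hg2 hg3 in
lemma Th_cont0
    (hg5 : ∀ ε, 0 < ε → ∃ δ, 0 < δ ∧ ∀ s, 0 ≤ s → s ≤ δ → ∀ u, g s u ≤ ε) (τ₀ : ℝ) :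
    ContinuousWithinAt (fun p : ℝ × ℝ => Th g p.1 p.2) (Set.Ici 0 ×ˢ Set.Ici 0) (0, τ₀) := by
  rw [Metric.continuousWithinAt_iff]
  intro ε hε
  obtain ⟨δ₅, hδ₅, hst⟩ := hg5 (ε/2) (by linarith)
  refine ⟨δ₅/2, by linarith, ?_⟩
  intro p hpS hp
  obtain ⟨s, τ⟩ := p
  have hs0 : (0:ℝ) ≤ s := hpS.1
  rw [Prod.dist_eq, max_lt_iff] at hp
  have hsd : |s| < δ₅/2 := by
    have := hp.1; rw [Real.dist_eq] at this; simpa using this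
  have hsle : s ≤ δ₅/2 := by
    have := abs_lt.1 hsd; linarith [this.2]
  show dist (Th g s τ) (Th g 0 τ₀) < ε
  rw [Th_zero, Real.dist_eq, sub_zero]
  rcases eq_or_lt_of_le hs0 with h0 | h0
  · rw [← h0, Th_zero]; simpa using hε
  · have hb : Th g s τ ≤ ε/2 :=
      le_trans (Th_le hg2 hg3 s τ h0) (hst (2*s) (by linarith) (by linarith) (τ-1))
    have hnn : 0 ≤ Th g s τ := Th_nonneg hg1 s τ hs0
    rw [abs_of_nonneg hnn]
    linarith

end cont

include hg1 hg2 hg3 in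
theorem kl_construction
    (hg4 : ∀ s, 0 ≤ s → Tendsto (fun u => g s u) atTop (nhds 0))
    (hg5 : ∀ ε, 0 < ε → ∃ δ, 0 < δ ∧ ∀ s, 0 ≤ s → s ≤ δ → ∀ u, g s u ≤ ε) :
    ∃ σ : ℝ → ℝ → ℝ, IsKL σ ∧ (∀ t, σ 0 t = 0) ∧ ∀ s t, 0 < s → g s t ≤ σ s t := by
  have hzero : ∀ t, Sg g 0 t = 0 := by
    intro t; simp [Sg, Th_zero]
  refine ⟨Sg g, ⟨?_, ?_, ?_⟩, hzero, ?_⟩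
  · -- continuity
    have hF : Continuous (fun p : ℝ × ℝ => p.1 * Real.exp (-p.2)) :=
      continuous_fst.mul (Real.continuous_exp.comp continuous_snd.neg)
    have hTh : ContinuousOn (fun p : ℝ × ℝ => Th g p.1 p.2) (Set.Ici 0 ×ˢ Set.Ici 0) := by
      intro p hp
      rcases eq_or_lt_of_le (Set.mem_Ici.1 hp.1 : (0:ℝ) ≤ p.1) with h0 | h0
      · have hpeq : p = ((0:ℝ), p.2) := by
          ext
          · exact h0.symm
          · rfl
        rw [hpeq]
        exact Th_cont0 hg1 hg2 hg3 hg5 p.2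
      · exact (Th_contAt hg1 hg2 hg3 p.1 p.2 h0).continuousWithinAt
    exact hF.continuousOn.add hTh
  · intro t _
    constructor
    · intro s₁ hs₁ s₂ hs₂ h
      have hm := Th_monoOn hg1 hg2 hg3 t hs₁ hs₂ h.le
      have hexp : s₁ * Real.exp (-t) < s₂ * Real.exp (-t) :=
        mul_lt_mul_of_pos_right h (Real.exp_pos _)
      show Sg g s₁ t < Sg g s₂ t
      simp only [Sg]
      simp only at hm
      linarith
    · exact hzero t
  · intro s hs
    constructor
    · intro τ₁ _ τ₂ _ h
      show Sg g s τ₂ ≤ Sg g s τ₁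
      simp only [Sg]
      have e1 : s * Real.exp (-τ₂) ≤ s * Real.exp (-τ₁) :=
        mul_le_mul_of_nonneg_left (Real.exp_le_exp.2 (by linarith)) hs
      have e2 := Th_anti hg2 hg3 s hs h
      simp only at e2
      linarith
    · have t1 : Tendsto (fun τ : ℝ => s * Real.exp (-τ)) atTop (nhds 0) := by
        have := Real.tendsto_exp_neg_atTop_nhds_zero.const_mul s
        simpa using this
      have t2 := Th_tendsto hg1 hg2 hg3 s hs (hg4 (2*s) (by linarith))
      have := t1.add t2
      simpa [Sg] using this
  · intro s t hs
    have h1 : 0 ≤ s * Real.exp (-t) := by positivity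
    have h2 := Th_ge hg2 hg3 s t hs
    show g s t ≤ Sg g s t
    simp only [Sg]
    linarith

end KLC

def IsTraj {X D : Type*} (f : ℕ → D → X → X) (d : ℕ → D) (t₀ : ℕ) (x₀ : X) (x : ℕ → X) : Prop :=
  x t₀ = x₀ ∧ ∀ t, t₀ ≤ t → x (t + 1) = f t (d t) (x t)

def trajSet {X Y D : Type*} [NormedAddCommGroup X] [NormedAddCommGroup Y]
    (f : ℕ → D → X → X) (Hm : ℕ → X → Y) (β' : ℝ → ℝ) (s u : ℝ) : Set ℝ :=
  insert 0 {y | ∃ d t₀ x₀ x, IsTraj f d t₀ x₀ x ∧ β' (t₀ : ℝ) * ‖x₀‖ ≤ s ∧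
    ∃ t : ℕ, t₀ ≤ t ∧ u ≤ (t : ℝ) - (t₀ : ℝ) ∧ y = ‖Hm t (x t)‖}

def gsup {X Y D : Type*} [NormedAddCommGroup X] [NormedAddCommGroup Y]
    (f : ℕ → D → X → X) (Hm : ℕ → X → Y) (β' : ℝ → ℝ) (s u : ℝ) : ℝ :=
  sSup (trajSet f Hm β' s u)

lemma knn {F : ℝ → ℝ} (hF : IsKInf F) : ∀ z, 0 ≤ z → 0 ≤ F z := fun z hz =>
  hF.2.2.1 ▸ hF.2.1.monotoneOn self_mem_Ici hz hz

lemma klev {F : ℝ → ℝ} (hF : IsKInf F) {z ε : ℝ} (hz : 0 ≤ z) (hε : 0 ≤ ε)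
    (h : F z ≤ F ε) : z ≤ ε := by
  by_contra hc
  push_neg at hc
  exact absurd (hF.2.1 hε hz hc) (not_lt.2 h)

lemma kpos {F : ℝ → ℝ} (hF : IsKInf F) {z : ℝ} (hz : 0 < z) : 0 < F z :=
  hF.2.2.1 ▸ hF.2.1 self_mem_Ici hz.le hz

lemma kcont0 {F : ℝ → ℝ} (hF : IsKInf F) (B η : ℝ) (hB : 1 ≤ B) (hη : 0 < η) :
    ∃ δ, 0 < δ ∧ ∀ z, 0 ≤ z → z ≤ δ → F (B * z) ≤ η := by
  have hc : ContinuousWithinAt F (Set.Ici 0) 0 := hF.1 0 self_mem_Ici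
  rw [Metric.continuousWithinAt_iff] at hc
  obtain ⟨δ₀, hδ₀, hc⟩ := hc η hη
  refine ⟨δ₀ / (2 * B), by positivity, ?_⟩
  intro z hz hzle
  have hB0 : (0:ℝ) < B := by linarith
  have h1 : B * z ∈ Set.Ici (0:ℝ) := mul_nonneg hB0.le hz
  have h2 : dist (B * z) 0 < δ₀ := by
    rw [Real.dist_eq, sub_zero, abs_of_nonneg (mul_nonneg hB0.le hz)]
    calc B * z ≤ B * (δ₀ / (2 * B)) := mul_le_mul_of_nonneg_left hzle hB0.le
      _ = δ₀ / 2 := by field_simp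
      _ < δ₀ := by linarith
  have h3 := hc h1 h2
  rw [Real.dist_eq, hF.2.2.1, sub_zero, abs_of_nonneg (knn hF _ (mul_nonneg hB0.le hz))] at h3
  exact h3.le

lemma finmax (F G : ℝ → ℝ) (N : ℕ) :
    ∃ B : ℝ, 1 ≤ B ∧ ∀ n : ℕ, n ≤ N → F n ≤ B ∧ G n ≤ B := by
  induction N with
  | zero =>
    refine ⟨max 1 (max (F 0) (G 0)), le_max_left _ _, fun n hn => ?_⟩
    interval_cases n
    push_cast
    exact ⟨le_trans (le_max_left (F 0) (G 0)) (le_max_right _ _),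
      le_trans (le_max_right (F 0) (G 0)) (le_max_right _ _)⟩
  | succ N ih =>
    obtain ⟨B, hB1, hB⟩ := ih
    refine ⟨max B (max (F (N+1)) (G (N+1))), le_trans hB1 (le_max_left _ _), fun n hn => ?_⟩
    rcases Nat.lt_succ_iff_lt_or_eq.1 (Nat.lt_succ_of_le hn) with h | h
    · have := hB n (Nat.lt_succ_iff.1 h)
      exact ⟨le_trans this.1 (le_max_left _ _), le_trans this.2 (le_max_left _ _)⟩
    · subst h
      push_cast
      exact ⟨le_trans (le_max_left _ _) (le_max_right _ _),
        le_trans (le_max_right _ _) (le_max_right _ _)⟩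


/-- Proposition 2.2, (iii) ⇒ (i): Lyapunov sufficiency for non-uniform in time RGAOS. -/
theorem prop22_iii_implies_i {X Y D : Type*}
    [NormedAddCommGroup X] [NormedSpace ℝ X] [NormedAddCommGroup Y] [NormedSpace ℝ Y]
    [Nonempty D]
    (f : ℕ → D → X → X) (H : ℕ → X → Y)
    (hf0 : ∀ (t : ℕ) (d : D), f t d 0 = 0) (hH0 : ∀ t : ℕ, H t 0 = 0)
    (hH1 : ∃ a β : ℝ → ℝ, IsKInf a ∧ IsKPlus β ∧
      ∀ (t : ℕ) (d : D) (x : X), ‖f t d x‖ ≤ a (β t * ‖x‖))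
    (hH2 : ∀ (T : ℕ) (S : Set X), Bornology.IsBounded S → ∀ ε > (0 : ℝ),
      Bornology.IsBounded {y : Y | ∃ t ≤ T, ∃ x ∈ S, y = H t x} ∧
      ∃ δ > (0 : ℝ), ∀ t ≤ T, ∀ x ∈ S, ∀ x₀ ∈ S, ‖x - x₀‖ < δ → ‖H t x - H t x₀‖ < ε)
    (V : ℕ → X → ℝ) (a₁ a₂ a₃ β q : ℝ → ℝ)
    (hVnonneg : ∀ (t : ℕ) (x : X), 0 ≤ V t x)
    (ha₁ : IsKInf a₁) (ha₂ : IsKInf a₂) (ha₃ : IsKInf a₃)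
    (ha₃le : ∀ s : ℝ, 0 ≤ s → a₃ s ≤ s)
    (hβ : IsKPlus β)
    (hqcont : ContinuousOn q (Set.Ici 0)) (hqnonneg : ∀ t : ℝ, 0 ≤ t → 0 ≤ q t)
    (hqlim : Filter.Tendsto q Filter.atTop (nhds 0))
    (hVbound : ∀ (t : ℕ) (x : X), a₁ ‖H t x‖ ≤ V t x ∧ V t x ≤ a₂ (β t * ‖x‖))
    (hVdec : ∀ (t : ℕ) (d : D) (x : X),
      V (t + 1) (f t d x) ≤ V t x - a₃ (V t x) + q t) :
    ∃ (σ : ℝ → ℝ → ℝ) (β' : ℝ → ℝ), IsKL σ ∧ IsKPlus β' ∧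
      ∀ (d : ℕ → D) (t₀ : ℕ) (x₀ : X) (x : ℕ → X),
        x t₀ = x₀ → (∀ t, t₀ ≤ t → x (t + 1) = f t (d t) (x t)) →
        ∀ t, t₀ ≤ t → ‖H t (x t)‖ ≤ σ (β' t₀ * ‖x₀‖) ((t : ℝ) - (t₀ : ℝ)) := by
  classical
  obtain ⟨a, βa, ha, hβa, hfa⟩ := hH1
  clear hH2 hqcont hqnonneg
  set β' : ℝ → ℝ := fun r => max 1 (β r) with hβ'def
  have hβ'1 : ∀ r : ℝ, (1:ℝ) ≤ β' r := fun r => le_max_left _ _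
  have hβ'β : ∀ r : ℝ, β r ≤ β' r := fun r => le_max_right _ _
  have hβ'pos : ∀ r : ℝ, 0 < β' r := fun r => lt_of_lt_of_le one_pos (hβ'1 r)
  have ha₁m := ha₁.2.1.monotoneOn
  have ha₂m := ha₂.2.1.monotoneOn
  have ha₃m := ha₃.2.1.monotoneOn
  have ham := ha.2.1.monotoneOn
  have hqnat : Tendsto (fun n : ℕ => q n) atTop (nhds 0) :=
    hqlim.comp tendsto_natCast_atTop_atTop
  -- a uniform bound on q over ℕ
  obtain ⟨N₁, hN₁⟩ : ∃ N₁ : ℕ, ∀ n ≥ N₁, q n < 1 := by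
    have := hqnat.eventually_lt_const one_pos
    rwa [eventually_atTop] at this
  set M : ℝ := max 1 ((Finset.range (N₁+1)).sup' (by simp) (fun n : ℕ => q n)) with hMdef
  have hM1 : (1:ℝ) ≤ M := le_max_left _ _
  have hM0 : (0:ℝ) ≤ M := by linarith
  have hqM : ∀ n : ℕ, q n ≤ M := by
    intro n
    rcases le_or_gt n N₁ with h | h
    · exact le_trans (Finset.le_sup' (fun n : ℕ => q (n:ℝ))
        (Finset.mem_range.2 (Nat.lt_succ_of_le h))) (le_max_right _ _)
    · exact le_trans (hN₁ n h.le).le hM1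
  -- level C beyond which a₃ dominates M
  obtain ⟨C₀, hC₀⟩ : ∃ C₀ : ℝ, ∀ z ≥ C₀, M ≤ a₃ z := by
    have := ha₃.2.2.2.eventually_ge_atTop M
    rwa [eventually_atTop] at this
  set C : ℝ := max C₀ 0 with hCdef
  have hC0 : (0:ℝ) ≤ C := le_max_right _ _
  have hCM : ∀ z : ℝ, C ≤ z → M ≤ a₃ z := fun z hz => hC₀ z (le_trans (le_max_left _ _) hz)
  -- global bound along trajectories
  have htrajB : ∀ (d : ℕ → D) (t₀ : ℕ) (x₀ : X) (x : ℕ → X), IsTraj f d t₀ x₀ x →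
      ∀ t, t₀ ≤ t → V t (x t) ≤ max (V t₀ (x t₀)) (C + M) := by
    intro d t₀ x₀ x htr t ht
    induction t, ht using Nat.le_induction with
    | base => exact le_max_left _ _
    | succ t ht ih =>
      have hrec : x (t+1) = f t (d t) (x t) := htr.2 t ht
      have hdec : V (t+1) (x (t+1)) ≤ V t (x t) - a₃ (V t (x t)) + q t := by
        rw [hrec]; exact hVdec t (d t) (x t)
      have hVnn := hVnonneg t (x t)
      have ha₃nn : 0 ≤ a₃ (V t (x t)) := knn ha₃ _ hVnn
      rcases le_or_gt (V t (x t)) C with h | h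
      · have hstep : V (t+1) (x (t+1)) ≤ C + M := by
          have := hqM t; linarith
        exact le_trans hstep (le_max_right _ _)
      · have hMa : M ≤ a₃ (V t (x t)) := hCM _ h.le
        have hstep : V (t+1) (x (t+1)) ≤ V t (x t) := by have := hqM t; linarith
        exact le_trans hstep ih
  -- decay estimate
  have hdecay : ∀ ε : ℝ, 0 < ε → ∃ (T₁ : ℕ) (δ' : ℝ), 0 < δ' ∧
      ∀ (d : ℕ → D) (t₀ : ℕ) (x₀ : X) (x : ℕ → X), IsTraj f d t₀ x₀ x →
      ∀ t₁ : ℕ, t₀ ≤ t₁ → T₁ ≤ t₁ → ∀ t : ℕ, t₁ ≤ t →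
      V t (x t) ≤ max (V t₁ (x t₁) - ((t:ℝ) - (t₁:ℝ)) * δ') ε := by
    intro ε hε
    set δ' : ℝ := a₃ (ε/2) / 2 with hδ'def
    have ha₃pos : 0 < a₃ (ε/2) := kpos ha₃ (by linarith)
    have hδ'pos : 0 < δ' := by rw [hδ'def]; linarith
    have hδ'ε : δ' ≤ ε/4 := by
      have := ha₃le (ε/2) (by linarith); rw [hδ'def]; linarith
    obtain ⟨T₁, hT₁⟩ : ∃ T₁ : ℕ, ∀ n ≥ T₁, q n < δ' := by
      have := hqnat.eventually_lt_const hδ'pos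
      rwa [eventually_atTop] at this
    refine ⟨T₁, δ', hδ'pos, ?_⟩
    intro d t₀ x₀ x htr t₁ ht₀₁ hT₁₁ t ht
    induction t, ht using Nat.le_induction with
    | base => simpa using le_max_left (V t₁ (x t₁)) ε
    | succ t ht ih =>
      have hrec : x (t+1) = f t (d t) (x t) := htr.2 t (le_trans ht₀₁ ht)
      have hdec : V (t+1) (x (t+1)) ≤ V t (x t) - a₃ (V t (x t)) + q t := by
        rw [hrec]; exact hVdec t (d t) (x t)
      have hq : q t ≤ δ' := (hT₁ t (le_trans hT₁₁ ht)).le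
      have hVnn := hVnonneg t (x t)
      have ha₃nn : 0 ≤ a₃ (V t (x t)) := knn ha₃ _ hVnn
      rcases lt_or_ge (V t (x t)) (ε/2) with h | h
      · have hstep : V (t+1) (x (t+1)) ≤ ε := by linarith
        exact le_trans hstep (le_max_right _ _)
      · have ha₃ge : a₃ (ε/2) ≤ a₃ (V t (x t)) :=
          ha₃m (mem_Ici.2 (by linarith)) (mem_Ici.2 hVnn) h
        have hstep : V (t+1) (x (t+1)) ≤ V t (x t) - δ' := by
          rw [hδ'def]; linarith
        rcases le_max_iff.1 ih with h2 | h2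
        · refine le_trans ?_ (le_max_left _ _)
          push_cast
          linarith
        · exact le_trans (by linarith) (le_max_right _ _)
  -- start bound
  have hstart : ∀ (t₀ : ℕ) (x₀ : X), V t₀ x₀ ≤ a₂ (β' (t₀:ℝ) * ‖x₀‖) := by
    intro t₀ x₀
    have h1 := (hVbound t₀ x₀).2
    have hb : β (t₀:ℝ) * ‖x₀‖ ≤ β' (t₀:ℝ) * ‖x₀‖ :=
      mul_le_mul_of_nonneg_right (hβ'β _) (norm_nonneg _)
    have hbn : 0 ≤ β (t₀:ℝ) * ‖x₀‖ :=
      mul_nonneg (hβ.2 _ (Nat.cast_nonneg _)).le (norm_nonneg _)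
    exact le_trans h1 (ha₂m (mem_Ici.2 hbn) (mem_Ici.2 (le_trans hbn hb)) hb)
  -- attractivity
  have hattract : ∀ s ε : ℝ, 0 ≤ s → 0 < ε → ∃ U : ℝ,
      ∀ (d : ℕ → D) (t₀ : ℕ) (x₀ : X) (x : ℕ → X), IsTraj f d t₀ x₀ x →
      β' (t₀:ℝ) * ‖x₀‖ ≤ s → ∀ t : ℕ, t₀ ≤ t → U ≤ (t:ℝ) - (t₀:ℝ) →
      V t (x t) ≤ ε := by
    intro s ε hs hε
    obtain ⟨T₁, δ', hδ'pos, hdec⟩ := hdecay ε hε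
    set R : ℝ := max (a₂ s) (C + M) with hRdef
    have hR0 : 0 ≤ R := le_trans (by linarith) (le_max_right _ _)
    refine ⟨(T₁:ℝ) + R/δ' + 1, ?_⟩
    intro d t₀ x₀ x htr hsm t ht hU
    have hRδ : 0 ≤ R / δ' := div_nonneg hR0 hδ'pos.le
    have htT : t₀ + T₁ ≤ t := by
      have : ((t₀ + T₁ : ℕ):ℝ) ≤ (t:ℝ) := by push_cast; linarith
      exact_mod_cast this
    set t₁ : ℕ := max t₀ T₁ with ht₁def
    have ht₁t : t₁ ≤ t := le_trans (max_le_iff.2 ⟨Nat.le_add_right _ _, Nat.le_add_left _ _⟩) htT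
    have hVt₁ : V t₁ (x t₁) ≤ R := by
      have h1 := htrajB d t₀ x₀ x htr t₁ (le_max_left _ _)
      have h2 : V t₀ (x t₀) ≤ a₂ s := by
        rw [htr.1]
        refine le_trans (hstart t₀ x₀) (ha₂m (mem_Ici.2 ?_) (mem_Ici.2 hs) hsm)
        exact mul_nonneg (hβ'pos _).le (norm_nonneg _)
      exact le_trans h1 (max_le_max h2 (le_refl _))
    have hkey := hdec d t₀ x₀ x htr t₁ (le_max_left _ _) (le_max_right _ _) t ht₁t
    have hdist : R / δ' ≤ (t:ℝ) - (t₁:ℝ) := by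
      have hc : (t₁:ℝ) ≤ (t₀:ℝ) + (T₁:ℝ) := by
        rw [ht₁def]
        push_cast
        exact max_le (by linarith [Nat.cast_nonneg (α := ℝ) T₁]) (by linarith [Nat.cast_nonneg (α := ℝ) t₀])
      linarith
    have hsub : V t₁ (x t₁) - ((t:ℝ) - (t₁:ℝ)) * δ' ≤ 0 := by
      have : R ≤ ((t:ℝ) - (t₁:ℝ)) * δ' := by
        rw [← div_le_iff₀ hδ'pos] at *
        linarith
      linarith
    rcases le_max_iff.1 hkey with h | h
    · linarith
    · exact h
  -- stability
  have hstab : ∀ ε : ℝ, 0 < ε → ∃ δ : ℝ, 0 < δ ∧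
      ∀ (d : ℕ → D) (t₀ : ℕ) (x₀ : X) (x : ℕ → X), IsTraj f d t₀ x₀ x →
      β' (t₀:ℝ) * ‖x₀‖ ≤ δ → ∀ t : ℕ, t₀ ≤ t → ‖H t (x t)‖ ≤ ε := by
    intro ε hε
    set ℓ : ℝ := a₁ ε with hℓdef
    have hℓpos : 0 < ℓ := kpos ha₁ hε
    obtain ⟨T₁, δ', hδ'pos, hdec⟩ := hdecay ℓ hℓpos
    obtain ⟨Bm, hBm1, hBmle⟩ := finmax β βa T₁
    have hBm0 : (0:ℝ) < Bm := by linarith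
    set Ψ : ℝ → ℝ := fun r => a (Bm * r) with hΨdef
    have hΨnn : ∀ (k : ℕ) (r : ℝ), 0 ≤ r → 0 ≤ Ψ^[k] r := by
      intro k
      induction k with
      | zero => intro r hr; simpa using hr
      | succ k ih =>
        intro r hr
        rw [Function.iterate_succ_apply']
        exact knn ha _ (mul_nonneg hBm0.le (ih r hr))
    have hΨmono : ∀ (k : ℕ), ∀ r₁ r₂ : ℝ, 0 ≤ r₁ → r₁ ≤ r₂ → Ψ^[k] r₁ ≤ Ψ^[k] r₂ := by
      intro k
      induction k with
      | zero => intro r₁ r₂ h1 h2; simpa using h2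
      | succ k ih =>
        intro r₁ r₂ h1 h2
        rw [Function.iterate_succ_apply', Function.iterate_succ_apply']
        have hm1 := hΨnn k r₁ h1
        have := ih r₁ r₂ h1 h2
        exact ham (mem_Ici.2 (mul_nonneg hBm0.le hm1))
          (mem_Ici.2 (mul_nonneg hBm0.le (le_trans hm1 this)))
          (mul_le_mul_of_nonneg_left this hBm0.le)
    -- iterates small near zero
    have hIter : ∀ (K : ℕ) (η : ℝ), 0 < η → ∃ δ, 0 < δ ∧
        ∀ k, k ≤ K → ∀ r, 0 ≤ r → r ≤ δ → Ψ^[k] r ≤ η := by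
      intro K
      induction K with
      | zero =>
        intro η hη
        exact ⟨η, hη, fun k hk r hr hrle => by
          rw [Nat.le_zero.1 hk]; simpa using hrle⟩
      | succ K ih =>
        intro η hη
        obtain ⟨δa, hδa, hδaP⟩ := kcont0 ha Bm η hBm1 hη
        obtain ⟨δK, hδK, hδKP⟩ := ih (min δa η) (lt_min hδa hη)
        refine ⟨δK, hδK, ?_⟩
        intro k hk r hr hrle
        rcases Nat.lt_succ_iff_lt_or_eq.1 (Nat.lt_succ_of_le hk) with h | h
        · exact le_trans (hδKP k (Nat.lt_succ_iff.1 h) r hr hrle) (min_le_right _ _)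
        · subst h
          rw [Function.iterate_succ_apply']
          exact hδaP _ (hΨnn K r hr) (le_trans (hδKP K (le_refl _) r hr hrle) (min_le_left _ _))
    obtain ⟨δ₂, hδ₂pos, hδ₂P⟩ := kcont0 ha₂ Bm ℓ hBm1 hℓpos
    obtain ⟨δ₃, hδ₃pos, hδ₃P⟩ := hIter T₁ δ₂ hδ₂pos
    refine ⟨min δ₂ δ₃, lt_min hδ₂pos hδ₃pos, ?_⟩
    intro d t₀ x₀ x htr hsm t ht
    have hx₀nn : (0:ℝ) ≤ ‖x₀‖ := norm_nonneg _
    have hx₀δ : ‖x₀‖ ≤ min δ₂ δ₃ := by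
      have : ‖x₀‖ ≤ β' (t₀:ℝ) * ‖x₀‖ := le_mul_of_one_le_left hx₀nn (hβ'1 _)
      linarith
    -- the sub-level claim
    have hVle : ∀ u : ℕ, t₀ ≤ u → V u (x u) ≤ ℓ := by
      rcases le_or_gt t₀ T₁ with hcase | hcase
      · -- transient phase + invariance
        have htrans : ∀ k : ℕ, t₀ + k ≤ T₁ → ‖x (t₀+k)‖ ≤ Ψ^[k] ‖x₀‖ := by
          intro k
          induction k with
          | zero => intro _; simp [htr.1]
          | succ k ih =>
            intro hk
            have hk' : t₀ + k ≤ T₁ := by omega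
            have hrec : x (t₀+k+1) = f (t₀+k) (d (t₀+k)) (x (t₀+k)) :=
              htr.2 _ (Nat.le_add_right _ _)
            have h1 : ‖x (t₀+k+1)‖ ≤ a (βa ((t₀+k : ℕ):ℝ) * ‖x (t₀+k)‖) := by
              rw [hrec]; exact hfa _ _ _
            have h2 : βa ((t₀+k : ℕ):ℝ) * ‖x (t₀+k)‖ ≤ Bm * Ψ^[k] ‖x₀‖ := by
              have hβa1 := (hBmle (t₀+k) hk').2
              have hβapos := (hβa.2 ((t₀+k : ℕ):ℝ) (Nat.cast_nonneg _))
              exact mul_le_mul hβa1 (ih hk') (norm_nonneg _) (by linarith)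
            have h3 : a (βa ((t₀+k : ℕ):ℝ) * ‖x (t₀+k)‖) ≤ a (Bm * Ψ^[k] ‖x₀‖) := by
              apply ham (mem_Ici.2 ?_) (mem_Ici.2 ?_) h2
              · exact mul_nonneg (hβa.2 _ (Nat.cast_nonneg _)).le (norm_nonneg _)
              · exact mul_nonneg hBm0.le (hΨnn k _ hx₀nn)
            have h4 : x (t₀ + (k+1)) = x (t₀ + k + 1) := by ring_nf
            rw [h4, Function.iterate_succ_apply']
            exact le_trans h1 h3
        have hVtrans : ∀ u : ℕ, t₀ ≤ u → u ≤ T₁ → V u (x u) ≤ ℓ := by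
          intro u hu1 hu2
          obtain ⟨k, hkdef⟩ := Nat.exists_eq_add_of_le hu1
          subst hkdef
          have hxk : ‖x (t₀+k)‖ ≤ Ψ^[k] ‖x₀‖ := htrans k hu2
          have hΨsmall : Ψ^[k] ‖x₀‖ ≤ δ₂ := by
            apply hδ₃P k ?_ _ hx₀nn (le_trans hx₀δ (min_le_right _ _))
            omega
          have hv1 := (hVbound (t₀+k) (x (t₀+k))).2
          have hβle := (hBmle (t₀+k) hu2).1
          have hβpos := hβ.2 ((t₀+k : ℕ):ℝ) (Nat.cast_nonneg _)
          have harg : β ((t₀+k : ℕ):ℝ) * ‖x (t₀+k)‖ ≤ Bm * Ψ^[k] ‖x₀‖ :=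
            mul_le_mul hβle hxk (norm_nonneg _) (by linarith)
          have hargnn : 0 ≤ β ((t₀+k : ℕ):ℝ) * ‖x (t₀+k)‖ :=
            mul_nonneg hβpos.le (norm_nonneg _)
          calc V (t₀+k) (x (t₀+k)) ≤ a₂ (β ((t₀+k : ℕ):ℝ) * ‖x (t₀+k)‖) := hv1
            _ ≤ a₂ (Bm * Ψ^[k] ‖x₀‖) :=
                ha₂m (mem_Ici.2 hargnn) (mem_Ici.2 (le_trans hargnn harg)) harg
            _ ≤ ℓ := hδ₂P _ (hΨnn k _ hx₀nn) hΨsmall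
        intro u hu
        rcases le_or_gt u T₁ with h | h
        · exact hVtrans u hu h
        · have hkey := hdec d t₀ x₀ x htr T₁ hcase (le_refl _) u h.le
          have hVT₁ : V T₁ (x T₁) ≤ ℓ := hVtrans T₁ hcase (le_refl _)
          have hnn : 0 ≤ ((u:ℝ) - (T₁:ℝ)) * δ' := by
            apply mul_nonneg _ hδ'pos.le
            have : (T₁:ℝ) ≤ (u:ℝ) := Nat.cast_le.2 h.le
            linarith
          rcases le_max_iff.1 hkey with h2 | h2
          · linarith
          · linarith
      · -- start already past T₁
        have hV0 : V t₀ (x t₀) ≤ ℓ := by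
          rw [htr.1]
          have h1 := hstart t₀ x₀
          have harg : β' (t₀:ℝ) * ‖x₀‖ ≤ Bm * (β' (t₀:ℝ) * ‖x₀‖) :=
            le_mul_of_one_le_left (mul_nonneg (hβ'pos _).le hx₀nn) hBm1
          have hargnn : 0 ≤ β' (t₀:ℝ) * ‖x₀‖ := mul_nonneg (hβ'pos _).le hx₀nn
          calc V t₀ x₀ ≤ a₂ (β' (t₀:ℝ) * ‖x₀‖) := h1
            _ ≤ a₂ (Bm * (β' (t₀:ℝ) * ‖x₀‖)) :=
                ha₂m (mem_Ici.2 hargnn) (mem_Ici.2 (le_trans hargnn harg)) harg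
            _ ≤ ℓ := hδ₂P _ hargnn (le_trans hsm (min_le_left _ _))
        intro u hu
        have hkey := hdec d t₀ x₀ x htr t₀ (le_refl _) hcase.le u hu
        have hnn : 0 ≤ ((u:ℝ) - (t₀:ℝ)) * δ' := by
          apply mul_nonneg _ hδ'pos.le
          have : (t₀:ℝ) ≤ (u:ℝ) := Nat.cast_le.2 hu
          linarith
        rcases le_max_iff.1 hkey with h2 | h2
        · linarith
        · linarith
    have hfin := hVle t ht
    have h1 := (hVbound t (x t)).1
    exact klev ha₁ (norm_nonneg _) hε.le (le_trans h1 hfin)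
  -- the envelope function
  set g : ℝ → ℝ → ℝ := gsup f H β' with hgdef
  have hg0mem : ∀ s u : ℝ, (0:ℝ) ∈ trajSet f H β' s u := fun s u => Set.mem_insert _ _
  have hBdd : ∀ s u : ℝ, BddAbove (trajSet f H β' s u) := by
    intro s u
    set s' : ℝ := max s 0 with hs'def
    have hs'0 : (0:ℝ) ≤ s' := le_max_right _ _
    set Rs : ℝ := max (a₂ s') (C + M) with hRsdef
    obtain ⟨B₀, hB₀⟩ : ∃ B₀ : ℝ, ∀ z ≥ B₀, Rs ≤ a₁ z := by
      have := ha₁.2.2.2.eventually_ge_atTop Rs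
      rwa [eventually_atTop] at this
    refine ⟨max B₀ 0, ?_⟩
    rintro y hy
    rcases Set.mem_insert_iff.1 hy with rfl | ⟨d, t₀, x₀, x, htr, hsm, t, ht, hu, rfl⟩
    · exact le_max_right _ _
    · by_contra hc
      push_neg at hc
      have hypos : (0:ℝ) ≤ ‖H t (x t)‖ := norm_nonneg _
      have h1 : a₁ (max B₀ 0) < a₁ ‖H t (x t)‖ :=
        ha₁.2.1 (mem_Ici.2 (le_max_right _ _)) (mem_Ici.2 hypos) hc
      have h2 : Rs ≤ a₁ (max B₀ 0) := hB₀ _ (le_max_left _ _)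
      have h3 : a₁ ‖H t (x t)‖ ≤ V t (x t) := (hVbound t (x t)).1
      have h5 := htrajB d t₀ x₀ x htr t ht
      have h6 : V t₀ (x t₀) ≤ a₂ s' := by
        rw [htr.1]
        have hbn : (0:ℝ) ≤ β' (t₀:ℝ) * ‖x₀‖ := mul_nonneg (hβ'pos _).le (norm_nonneg _)
        exact le_trans (hstart t₀ x₀)
          (ha₂m (mem_Ici.2 hbn) (mem_Ici.2 hs'0) (le_trans hsm (le_max_left _ _)))
      have h4 : V t (x t) ≤ Rs := le_trans h5 (max_le_max h6 (le_refl _))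
      linarith
  have hg1 : ∀ s u, 0 ≤ g s u := fun s u => le_csSup (hBdd s u) (hg0mem s u)
  have hg2 : ∀ u, Monotone fun s => g s u := by
    intro u s₁ s₂ h
    apply csSup_le_csSup (hBdd s₂ u) ⟨0, hg0mem s₁ u⟩
    rintro y hy
    rcases Set.mem_insert_iff.1 hy with rfl | ⟨d, t₀, x₀, x, htr, hsm, t, ht, hu, rfl⟩
    · exact hg0mem s₂ u
    · exact Set.mem_insert_of_mem _ ⟨d, t₀, x₀, x, htr, le_trans hsm h, t, ht, hu, rfl⟩
  have hg3 : ∀ s, Antitone fun u => g s u := by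
    intro s u₁ u₂ h
    apply csSup_le_csSup (hBdd s u₁) ⟨0, hg0mem s u₂⟩
    rintro y hy
    rcases Set.mem_insert_iff.1 hy with rfl | ⟨d, t₀, x₀, x, htr, hsm, t, ht, hu, rfl⟩
    · exact hg0mem s u₁
    · exact Set.mem_insert_of_mem _ ⟨d, t₀, x₀, x, htr, hsm, t, ht, le_trans h hu, rfl⟩
  have hmem : ∀ d t₀ x₀ (x : ℕ → X), IsTraj f d t₀ x₀ x → ∀ t, t₀ ≤ t →
      ‖H t (x t)‖ ≤ g (β' (t₀:ℝ) * ‖x₀‖) ((t:ℝ) - (t₀:ℝ)) := fun d t₀ x₀ x htr t ht =>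
    le_csSup (hBdd _ _)
      (Set.mem_insert_of_mem _ ⟨d, t₀, x₀, x, htr, le_refl _, t, ht, le_refl _, rfl⟩)
  have hg4 : ∀ s, 0 ≤ s → Tendsto (fun u => g s u) atTop (nhds 0) := by
    intro s hs
    rw [Metric.tendsto_atTop]
    intro ε hε
    have hl2 : 0 < a₁ (ε/2) := kpos ha₁ (by linarith)
    obtain ⟨U, hU⟩ := hattract s (a₁ (ε/2)) hs hl2
    refine ⟨U, ?_⟩
    intro u hu
    have hle : g s u ≤ ε/2 := by
      apply csSup_le ⟨0, hg0mem s u⟩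
      rintro y hy
      rcases Set.mem_insert_iff.1 hy with rfl | ⟨d, t₀, x₀, x, htr, hsm, t, ht, hτ, rfl⟩
      · linarith
      · have hV := hU d t₀ x₀ x htr hsm t ht (le_trans hu hτ)
        have h1 := (hVbound t (x t)).1
        exact klev ha₁ (norm_nonneg _) (by linarith) (le_trans h1 hV)
    rw [Real.dist_eq, sub_zero, abs_of_nonneg (hg1 s u)]
    linarith
  have hg5 : ∀ ε, 0 < ε → ∃ δ, 0 < δ ∧ ∀ s, 0 ≤ s → s ≤ δ → ∀ u, g s u ≤ ε := by
    intro ε hε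
    obtain ⟨δ, hδpos, hδP⟩ := hstab ε hε
    refine ⟨δ, hδpos, ?_⟩
    intro s hs hsδ u
    apply csSup_le ⟨0, hg0mem s u⟩
    rintro y hy
    rcases Set.mem_insert_iff.1 hy with rfl | ⟨d, t₀, x₀, x, htr, hsm, t, ht, hτ, rfl⟩
    · exact hε.le
    · exact hδP d t₀ x₀ x htr (le_trans hsm hsδ) t ht
  obtain ⟨σ, hσKL, hσ0, hσbound⟩ := KLC.kl_construction hg1 hg2 hg3 hg4 hg5
  refine ⟨σ, β', hσKL, ⟨?_, fun t _ => lt_of_lt_of_le one_pos (hβ'1 t)⟩, ?_⟩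
  · rw [hβ'def]
    exact continuous_max.comp_continuousOn (continuousOn_const.prodMk hβ.1)
  intro d t₀ x₀ x hx0 hrec t ht
  have htr : IsTraj f d t₀ x₀ x := ⟨hx0, hrec⟩
  by_cases hz : x₀ = 0
  · have hxz : ∀ u : ℕ, t₀ ≤ u → x u = 0 := by
      intro u hu
      induction u, hu using Nat.le_induction with
      | base => rw [hx0, hz]
      | succ u hu ih => rw [hrec u hu, ih, hf0]
    have harg : β' ((t₀:ℕ):ℝ) * ‖x₀‖ = 0 := by rw [hz]; simp
    rw [harg, hσ0, hxz t ht, hH0, norm_zero]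
  · have hspos : 0 < β' ((t₀:ℕ):ℝ) * ‖x₀‖ := mul_pos (hβ'pos _) (norm_pos_iff.2 hz)
    exact le_trans (hmem d t₀ x₀ x htr t ht) (hσbound _ _ hspos)
end
end

section
/- Fact IV (Robust Forward Completeness from the input). Suppose system (1.2) satisfies hypothesis (A1). Then there exist functions μ ∈ K⁺ and a ∈ K∞ and a constant R ≥ 0 such that for every t₀ ∈ ℕ, x₀ ∈ X, d : ℕ → D, u : ℕ → U, the corresponding solution x(·) of (1.2) with x(t₀) = x₀ satisfies ‖x(t)‖_X ≤ μ(t) · a(R + ‖x₀‖_X + sup_{t₀ ≤ τ ≤ t} ‖u(τ)‖_U) for all t ≥ t₀. -/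
open Filter Topology Bornology Set

noncomputable section

section
set_option linter.unusedSectionVars false
namespace FactIV

variable (a β : ℝ → ℝ)

/-- `a` extended to all of `ℝ` by precomposing with `max · 0`. -/
def A0 (s : ℝ) : ℝ := a (max s 0)

/-- Iterated growth bound. -/
def G : ℕ → ℝ → ℝ
  | 0, s => max s 0
  | (t+1), s => A0 a (β t * (G t s + max s 0)) + A0 a (β t * max s 0) + max s 0 + G t s

lemma G_succ (t : ℕ) (s : ℝ) : G a β (t+1) s
    = A0 a (β t * (G a β t s + max s 0)) + A0 a (β t * max s 0) + max s 0 + G a β t s := rfl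

def clamp (t : ℕ) (s : ℝ) : ℝ := max 0 (min (s - t) 1)

def FN (N : ℕ) (s : ℝ) : ℝ :=
  max s 0 + ∑ t ∈ Finset.range N, clamp t s * (G a β (t+1) (max s 0) - G a β t (max s 0))

def F (s : ℝ) : ℝ := FN a β (⌊max s 0⌋₊ + 1) s

def A (s : ℝ) : ℝ := max s 0 + F a β s

def mu (s : ℝ) : ℝ := 1 + A a β (max s 0) / A a β 1

variable {a β}

section basic

variable (ha : IsKInf a) (hβ : IsKPlus β)
include ha

lemma A0_nonneg (s : ℝ) : 0 ≤ A0 a s := by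
  have h0 : a 0 ≤ a (max s 0) := by
    rcases eq_or_lt_of_le (le_max_right s 0) with h | h
    · rw [← h]
    · exact (ha.2.1 (Set.mem_Ici.2 le_rfl) (le_max_right s 0) h).le
  simpa [A0, ha.2.2.1] using h0

lemma A0_mono : Monotone (A0 a) := by
  intro s r h
  rcases eq_or_lt_of_le (max_le_max h (le_refl (0:ℝ))) with h' | h'
  · rw [A0, A0, h']
  · exact (ha.2.1 (le_max_right s 0) (le_max_right r 0) h').le

lemma A0_cont : Continuous (A0 a) :=
  ha.1.comp_continuous (continuous_id.max continuous_const) (fun x => le_max_right x 0)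

lemma A0_eq (s : ℝ) (hs : 0 ≤ s) : A0 a s = a s := by rw [A0, max_eq_left hs]

lemma A0_zero : A0 a 0 = 0 := by simp [A0, ha.2.2.1]

include hβ

lemma G_mono (t : ℕ) : Monotone (G a β t) := by
  induction t with
  | zero => exact fun s r h => max_le_max h le_rfl
  | succ t ih =>
    intro s r h
    have hb : (0:ℝ) ≤ β t := (hβ.2 _ (Nat.cast_nonneg t)).le
    have h1 : max s 0 ≤ max r 0 := max_le_max h le_rfl
    have h2 : G a β t s ≤ G a β t r := ih h
    refine add_le_add (add_le_add (add_le_add ?_ ?_) h1) h2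
    · exact A0_mono ha (mul_le_mul_of_nonneg_left (add_le_add h2 h1) hb)
    · exact A0_mono ha (mul_le_mul_of_nonneg_left h1 hb)

lemma G_ge (t : ℕ) (s : ℝ) : max s 0 ≤ G a β t s := by
  induction t with
  | zero => exact le_rfl
  | succ t ih =>
    have h1 := A0_nonneg ha (β t * (G a β t s + max s 0))
    have h2 := A0_nonneg ha (β t * max s 0)
    have h3 : (0:ℝ) ≤ max s 0 := le_max_right s 0
    show max s 0 ≤ _ + _ + _ + _
    linarith

lemma G_nonneg (t : ℕ) (s : ℝ) : 0 ≤ G a β t s :=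
  le_trans (le_max_right s 0) (G_ge ha hβ t s)

lemma G_step_le (t : ℕ) (s : ℝ) : G a β t s ≤ G a β (t+1) s := by
  have h1 := A0_nonneg ha (β t * (G a β t s + max s 0))
  have h2 := A0_nonneg ha (β t * max s 0)
  have h3 : (0:ℝ) ≤ max s 0 := le_max_right s 0
  show _ ≤ _ + _ + _ + _
  linarith

lemma G_index_mono (s : ℝ) : Monotone (fun t => G a β t s) :=
  monotone_nat_of_le_succ (fun t => G_step_le ha hβ t s)

lemma G_cont (t : ℕ) : Continuous (G a β t) := by
  induction t with
  | zero => exact continuous_id.max continuous_const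
  | succ t ih =>
    have hm : Continuous fun s : ℝ => max s 0 := continuous_id.max continuous_const
    exact ((((A0_cont ha).comp (continuous_const.mul (ih.add hm))).add
      ((A0_cont ha).comp (continuous_const.mul hm))).add hm).add ih

lemma G_zero_eq (t : ℕ) : G a β t 0 = 0 := by
  induction t with
  | zero => simp [G]
  | succ t ih => simp [G, ih, A0_zero ha]

end basic

lemma clamp_nonneg (t : ℕ) (s : ℝ) : 0 ≤ clamp t s := le_max_left _ _

lemma clamp_mono (t : ℕ) : Monotone (clamp t) := by
  intro s r h
  exact max_le_max le_rfl (min_le_min (by linarith) le_rfl)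

lemma clamp_cont (t : ℕ) : Continuous (clamp t) :=
  continuous_const.max ((continuous_id.sub continuous_const).min continuous_const)

lemma clamp_eq_zero {t : ℕ} {s : ℝ} (h : s ≤ t) : clamp t s = 0 := by
  rw [clamp, max_eq_left]
  exact min_le_of_left_le (by linarith)

lemma clamp_eq_one {t : ℕ} {s : ℝ} (h : (t:ℝ) + 1 ≤ s) : clamp t s = 1 := by
  rw [clamp, min_eq_right (by linarith), max_eq_right (by linarith)]

section FNsec

variable (ha : IsKInf a) (hβ : IsKPlus β)
include ha hβ

lemma FN_mono (N : ℕ) : Monotone (FN a β N) := by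
  intro s r h
  have h1 : max s 0 ≤ max r 0 := max_le_max h le_rfl
  refine add_le_add h1 (Finset.sum_le_sum fun t _ => ?_)
  have hd : ∀ u v : ℝ, u ≤ v →
      G a β (t+1) u - G a β t u ≤ G a β (t+1) v - G a β t v := by
    intro u v huv
    have := G_mono ha hβ t huv
    have h2 := G_mono ha hβ t huv
    -- expand the step
    show G a β (t+1) u - G a β t u ≤ G a β (t+1) v - G a β t v
    have e1 : ∀ w, G a β (t+1) w - G a β t w
        = A0 a (β t * (G a β t w + max w 0)) + A0 a (β t * max w 0) + max w 0 := by
      intro w; show (_ + _ + _ + _) - _ = _; ring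
    rw [e1, e1]
    have hb : (0:ℝ) ≤ β t := (hβ.2 _ (Nat.cast_nonneg t)).le
    have hm : max u 0 ≤ max v 0 := max_le_max huv le_rfl
    refine add_le_add (add_le_add ?_ ?_) hm
    · exact A0_mono ha (mul_le_mul_of_nonneg_left (add_le_add h2 hm) hb)
    · exact A0_mono ha (mul_le_mul_of_nonneg_left hm hb)
  have hDnn : 0 ≤ G a β (t+1) (max s 0) - G a β t (max s 0) :=
    sub_nonneg.2 (G_step_le ha hβ t _)
  exact mul_le_mul (clamp_mono t h) (hd _ _ (max_le_max h le_rfl)) hDnn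
    (le_trans (clamp_nonneg t s) (clamp_mono t h))

lemma FN_nonneg (N : ℕ) (s : ℝ) : 0 ≤ FN a β N s := by
  refine add_nonneg (le_max_right s 0) (Finset.sum_nonneg fun t _ => ?_)
  exact mul_nonneg (clamp_nonneg t s) (sub_nonneg.2 (G_step_le ha hβ t _))

omit ha hβ in
lemma FN_agree {N M : ℕ} {s : ℝ} (hs : s ≤ N) (h : N ≤ M) : FN a β M s = FN a β N s := by
  rw [FN, FN]
  congr 1
  refine (Finset.sum_subset (Finset.range_subset_range.2 h) fun t ht hnt => ?_).symm
  have : N ≤ t := by simpa using hnt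
  rw [clamp_eq_zero (le_trans hs (by exact_mod_cast this)), zero_mul]

omit ha hβ in
lemma F_eq_FN {s : ℝ} {N : ℕ} (h : max s 0 < N) : F a β s = FN a β N s := by
  have hs : s ≤ (⌊max s 0⌋₊ + 1 : ℕ) := by
    have := Nat.lt_floor_add_one (max s 0)
    have h2 : s ≤ max s 0 := le_max_left s 0
    push_cast; linarith
  have hsN : s ≤ (N:ℝ) := le_trans (le_max_left s 0) h.le
  rw [F, FN_agree (M := max N (⌊max s 0⌋₊ + 1)) hs (le_max_right _ _) |>.symm,
    FN_agree (M := max N (⌊max s 0⌋₊ + 1)) hsN (le_max_left _ _)]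

lemma F_mono : Monotone (F a β) := by
  intro s r h
  set N := max (⌊max s 0⌋₊ + 1) (⌊max r 0⌋₊ + 1) with hN
  have h1 : max s 0 < N := lt_of_lt_of_le (Nat.lt_floor_add_one _)
    (by exact_mod_cast le_max_left _ _)
  have h2 : max r 0 < N := lt_of_lt_of_le (Nat.lt_floor_add_one _)
    (by exact_mod_cast le_max_right _ _)
  rw [F_eq_FN h1, F_eq_FN h2]
  exact FN_mono ha hβ N h

lemma F_nonneg (s : ℝ) : 0 ≤ F a β s := FN_nonneg ha hβ _ s

lemma F_cont : Continuous (F a β) := by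
  rw [continuous_iff_continuousAt]
  intro x
  set N := ⌊max x 0⌋₊ + 1 with hN
  have hx : max x 0 < (N:ℝ) := by
    have := Nat.lt_floor_add_one (max x 0)
    rw [hN]; push_cast; push_cast at this; linarith
  have hev : ∀ᶠ s in nhds x, F a β s = FN a β N s := by
    have hopen : IsOpen {s : ℝ | max s 0 < (N:ℝ)} :=
      isOpen_lt (continuous_id.max continuous_const) continuous_const
    filter_upwards [hopen.mem_nhds hx] with s hs
    exact F_eq_FN (by push_cast at hs ⊢; linarith)
  have hc : Continuous (FN a β N) := by
    have hm : Continuous fun s : ℝ => max s 0 := continuous_id.max continuous_const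
    refine hm.add (continuous_finset_sum _ fun t _ => (clamp_cont t).mul ?_)
    exact ((G_cont ha hβ (t+1)).comp hm).sub ((G_cont ha hβ t).comp hm)
  exact (hc.continuousAt).congr (hev.mono fun s h => h.symm)

lemma F_ge_G {t : ℕ} {c : ℝ} (hc : 0 ≤ c) (h : (t:ℝ) ≤ c) : G a β t c ≤ F a β c := by
  have hmc : max c 0 = c := max_eq_left hc
  have hlt : max c 0 < ((⌊max c 0⌋₊ + 1 : ℕ) : ℝ) := by
    have := Nat.lt_floor_add_one (max c 0)
    push_cast; linarith
  set N := ⌊max c 0⌋₊ + 1 with hN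
  have htN : t < N := by
    have h1 : t ≤ ⌊max c 0⌋₊ := Nat.le_floor (by rw [hmc]; exact_mod_cast h)
    omega
  rw [F_eq_FN hlt, FN, hmc]
  have hsum : ∑ t' ∈ Finset.range t, (G a β (t'+1) c - G a β t' c)
      ≤ ∑ t' ∈ Finset.range N, clamp t' c * (G a β (t'+1) c - G a β t' c) := by
    have h1 : ∑ t' ∈ Finset.range t, (G a β (t'+1) c - G a β t' c)
        = ∑ t' ∈ Finset.range t, clamp t' c * (G a β (t'+1) c - G a β t' c) := by
      refine Finset.sum_congr rfl fun t' ht' => ?_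
      have ht' : t' < t := Finset.mem_range.1 ht'
      have h2 : (t':ℝ) + 1 ≤ (t:ℝ) := by exact_mod_cast ht'
      rw [clamp_eq_one (by push_cast; linarith), one_mul]
    rw [h1]
    refine Finset.sum_le_sum_of_subset_of_nonneg
      (Finset.range_subset_range.2 htN.le) fun t' _ _ => ?_
    exact mul_nonneg (clamp_nonneg t' c) (sub_nonneg.2 (G_step_le ha hβ t' c))
  have htel : ∑ t' ∈ Finset.range t, (G a β (t'+1) c - G a β t' c)
      = G a β t c - G a β 0 c := Finset.sum_range_sub (fun i => G a β i c) t
  have h0 : G a β 0 c = c := hmc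
  rw [htel, h0] at hsum
  linarith

lemma A_mono : Monotone (A a β) := fun s r h =>
  add_le_add (max_le_max h le_rfl) (F_mono ha hβ h)

lemma A_nonneg (s : ℝ) : 0 ≤ A a β s :=
  add_nonneg (le_max_right s 0) (F_nonneg ha hβ s)

lemma A_zero : A a β 0 = 0 := by
  have : F a β 0 = 0 := by
    rw [F]
    have : (⌊max (0:ℝ) 0⌋₊ + 1) = 1 := by norm_num
    rw [this, FN]
    simp [clamp_eq_zero (t := 0) (s := (0:ℝ)) (by norm_num)]
  simp [A, this]

lemma A_strictMono : StrictMonoOn (A a β) (Set.Ici 0) := by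
  intro s hs r hr h
  have h1 : max s 0 < max r 0 := by
    rw [max_eq_left (mem_Ici.1 hs), max_eq_left (mem_Ici.1 hr)]; exact h
  exact add_lt_add_of_lt_of_le h1 (F_mono ha hβ h.le)

lemma A_cont : Continuous (A a β) :=
  (continuous_id.max continuous_const).add (F_cont ha hβ)

lemma A_ge_self (s : ℝ) : s ≤ A a β s :=
  le_trans (le_max_left s 0) (le_add_of_nonneg_right (F_nonneg ha hβ s))

lemma A_isKInf : IsKInf (A a β) :=
  ⟨(A_cont ha hβ).continuousOn, A_strictMono ha hβ, A_zero ha hβ,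
    tendsto_atTop_mono (A_ge_self ha hβ) tendsto_id⟩

lemma A_one_pos : 0 < A a β 1 := by
  have := A_strictMono ha hβ (self_mem_Ici) (by norm_num : (1:ℝ) ∈ Set.Ici 0) one_pos
  rw [A_zero ha hβ] at this
  exact this

lemma mu_isKPlus : IsKPlus (mu a β) := by
  constructor
  · exact (continuous_const.add (((A_cont ha hβ).comp
      (continuous_id.max continuous_const)).div_const _)).continuousOn
  · intro t _
    have : 0 ≤ A a β (max t 0) / A a β 1 :=
      div_nonneg (A_nonneg ha hβ _) (A_one_pos ha hβ).le
    rw [mu]; linarith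

lemma G_le_mu_A (t : ℕ) {c : ℝ} (hc : 0 ≤ c) :
    G a β t c ≤ mu a β t * A a β (1 + c) := by
  have hA1c : A a β 1 ≤ A a β (1 + c) := A_mono ha hβ (by linarith)
  have hAnn : 0 ≤ A a β (1 + c) := A_nonneg ha hβ _
  have hq : 0 ≤ A a β (max (t:ℝ) 0) / A a β 1 :=
    div_nonneg (A_nonneg ha hβ _) (A_one_pos ha hβ).le
  rcases le_or_gt ((t:ℝ)) c with h | h
  · have h1 : G a β t c ≤ F a β c := F_ge_G ha hβ hc h
    have h2 : F a β c ≤ A a β c := le_add_of_nonneg_left (le_max_right c 0)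
    have h3 : A a β c ≤ A a β (1 + c) := A_mono ha hβ (by linarith)
    have hmu : (1:ℝ) ≤ mu a β t := by rw [mu]; linarith
    calc G a β t c ≤ A a β (1 + c) := by linarith
    _ = 1 * A a β (1 + c) := (one_mul _).symm
    _ ≤ mu a β t * A a β (1 + c) := mul_le_mul_of_nonneg_right hmu hAnn
  · have h1 : G a β t c ≤ G a β t t := G_mono ha hβ t h.le
    have h2 : G a β t (t:ℝ) ≤ F a β t := F_ge_G ha hβ (Nat.cast_nonneg t) le_rfl
    have h3 : F a β (t:ℝ) ≤ A a β (t:ℝ) := le_add_of_nonneg_left (le_max_right _ 0)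
    have hmt : max (t:ℝ) 0 = (t:ℝ) := max_eq_left (Nat.cast_nonneg t)
    have hA1 : (0:ℝ) < A a β 1 := A_one_pos ha hβ
    have key : A a β (t:ℝ) = (A a β (max (t:ℝ) 0) / A a β 1) * A a β 1 := by
      rw [hmt]; field_simp
    have h4 : A a β (t:ℝ) ≤ (A a β (max (t:ℝ) 0) / A a β 1) * A a β (1 + c) := by
      rw [key]; exact mul_le_mul_of_nonneg_left hA1c hq
    have h5 : (A a β (max (t:ℝ) 0) / A a β 1) * A a β (1 + c) ≤ mu a β t * A a β (1 + c) := by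
      refine mul_le_mul_of_nonneg_right ?_ hAnn
      rw [mu]; linarith
    linarith

end FNsec

end FactIV
end

open FactIV in
/-- Fact IV: robust forward completeness from the input, for system (1.2) under (A1). -/
theorem fact_IV {X U D : Type*}
    [NormedAddCommGroup X] [NormedSpace ℝ X] [NormedAddCommGroup U] [NormedSpace ℝ U]
    [Nonempty D]
    (f : ℕ → D → X → U → X)
    (hf0 : ∀ (t : ℕ) (d : D), f t d 0 0 = 0)
    (hA1 : ∃ a β : ℝ → ℝ, IsKInf a ∧ IsKPlus β ∧
      ∀ (t : ℕ) (d : D) (x : X) (u : U),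
        ‖f t d x u‖ ≤ a (β t * ‖x‖) + a (β t * ‖u‖)) :
    ∃ (μ a : ℝ → ℝ) (R : ℝ), IsKPlus μ ∧ IsKInf a ∧ 0 ≤ R ∧
      ∀ (d : ℕ → D) (u : ℕ → U) (t₀ : ℕ) (x₀ : X) (x : ℕ → X),
        x t₀ = x₀ → (∀ t, t₀ ≤ t → x (t + 1) = f t (d t) (x t) (u t)) →
        ∀ t, t₀ ≤ t →
          ‖x t‖ ≤ μ t * a (R + ‖x₀‖ + ⨆ τ ∈ Set.Icc t₀ t, ‖u τ‖) := by
  obtain ⟨a, β, ha, hβ, hbound⟩ := hA1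
  refine ⟨mu a β, A a β, 1, mu_isKPlus ha hβ, A_isKInf ha hβ, zero_le_one, ?_⟩
  intro d u t₀ x₀ x hx0 hstep t ht
  set g : ℕ → ℝ := fun τ => ⨆ _ : τ ∈ Set.Icc t₀ t, ‖u τ‖ with hg
  set S : ℝ := ⨆ τ ∈ Set.Icc t₀ t, ‖u τ‖ with hS
  have hne : (Finset.Icc t₀ t).Nonempty := ⟨t₀, by simp [ht]⟩
  have hgbd : ∀ τ, g τ ≤ max ((Finset.Icc t₀ t).sup' hne fun τ => ‖u τ‖) 0 := by
    intro τ
    by_cases hτ : τ ∈ Set.Icc t₀ t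
    · rw [hg]
      simp only
      rw [ciSup_pos hτ]
      exact le_max_of_le_left (Finset.le_sup' (fun τ => ‖u τ‖) (Finset.mem_Icc.2 ⟨hτ.1, hτ.2⟩))
    · rw [hg]
      simp only
      have : IsEmpty (τ ∈ Set.Icc t₀ t) := ⟨hτ⟩
      rw [Real.iSup_of_isEmpty]
      exact le_max_right _ _
  have hbdd : BddAbove (Set.range g) := ⟨_, Set.forall_mem_range.2 hgbd⟩
  have hgnn : ∀ τ, 0 ≤ g τ := by
    intro τ
    by_cases hτ : τ ∈ Set.Icc t₀ t
    · rw [hg]; simp only; rw [ciSup_pos hτ]; exact norm_nonneg _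
    · rw [hg]; simp only
      have : IsEmpty (τ ∈ Set.Icc t₀ t) := ⟨hτ⟩
      rw [Real.iSup_of_isEmpty]
  have hSnn : 0 ≤ S := Real.iSup_nonneg hgnn
  have hle : ∀ τ, τ ∈ Set.Icc t₀ t → ‖u τ‖ ≤ S := by
    intro τ hτ
    have h1 : g τ ≤ S := le_ciSup hbdd τ
    rwa [hg, show (fun τ => ⨆ _ : τ ∈ Set.Icc t₀ t, ‖u τ‖) τ
      = ⨆ _ : τ ∈ Set.Icc t₀ t, ‖u τ‖ from rfl, ciSup_pos hτ] at h1
  set c : ℝ := ‖x₀‖ + S with hc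
  have hcnn : 0 ≤ c := add_nonneg (norm_nonneg _) hSnn
  have hmc : max c 0 = c := max_eq_left hcnn
  have hind : ∀ τ, t₀ ≤ τ → τ ≤ t → ‖x τ‖ ≤ G a β τ c := by
    intro τ hτ
    induction τ, hτ using Nat.le_induction with
    | base =>
      intro _
      have h1 : ‖x t₀‖ ≤ c := by rw [hx0, hc]; linarith [norm_nonneg x₀]
      have h2 : G a β 0 c ≤ G a β t₀ c := G_index_mono ha hβ c (Nat.zero_le t₀)
      have h3 : G a β 0 c = c := hmc
      linarith
    | succ τ hτ ih =>
      intro h1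
      have hτt : τ ≤ t := by omega
      have hxτ : ‖x τ‖ ≤ G a β τ c := ih (by omega)
      rw [hstep τ hτ]
      have hb := hbound τ (d τ) (x τ) (u τ)
      have hβτ : (0:ℝ) ≤ β τ := (hβ.2 _ (Nat.cast_nonneg τ)).le
      have huτ : ‖u τ‖ ≤ S := hle τ ⟨hτ, hτt⟩
      have e1 : a (β τ * ‖x τ‖) = A0 a (β τ * ‖x τ‖) :=
        (A0_eq ha _ (mul_nonneg hβτ (norm_nonneg _))).symm
      have e2 : a (β τ * ‖u τ‖) = A0 a (β τ * ‖u τ‖) :=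
        (A0_eq ha _ (mul_nonneg hβτ (norm_nonneg _))).symm
      have b1 : A0 a (β τ * ‖x τ‖) ≤ A0 a (β τ * (G a β τ c + max c 0)) := by
        refine A0_mono ha (mul_le_mul_of_nonneg_left ?_ hβτ)
        rw [hmc]; linarith
      have b2 : A0 a (β τ * ‖u τ‖) ≤ A0 a (β τ * max c 0) := by
        refine A0_mono ha (mul_le_mul_of_nonneg_left ?_ hβτ)
        rw [hmc, hc]; linarith [norm_nonneg x₀]
      have hGnn : 0 ≤ G a β τ c := G_nonneg ha hβ τ c
      rw [G_succ]
      have hmnn : (0:ℝ) ≤ max c 0 := le_max_right c 0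
      calc ‖f τ (d τ) (x τ) (u τ)‖ ≤ a (β τ * ‖x τ‖) + a (β τ * ‖u τ‖) := hb
        _ = A0 a (β τ * ‖x τ‖) + A0 a (β τ * ‖u τ‖) := by rw [e1, e2]
        _ ≤ A0 a (β τ * (G a β τ c + max c 0)) + A0 a (β τ * max c 0) + max c 0
            + G a β τ c := by linarith
  have hfin : ‖x t‖ ≤ G a β t c := hind t ht le_rfl
  have hkey : G a β t c ≤ mu a β t * A a β (1 + c) := G_le_mu_A ha hβ t hcnn
  have : (1 : ℝ) + c = 1 + ‖x₀‖ + S := by rw [hc]; ring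
  rw [← this]
  linarith
end
end
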